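/- arXiv:1108.0172 — 8 statements merged into one kernel-verified Lean document; each statement's English description precedes it below -/
import Mathlib

section
/- Let P be a Laurent polynomial in ℂ[z,z⁻¹] that does not lie in ℂ[z] and does not lie in ℂ[z⁻¹]. Suppose P = g ∘ h, where g, h ∈ ℂ(z) are nonconstant rational functions and the composition is taken as rational maps. Then there exists a degree-one rational function (Möbius transformation) μ ∈ ℂ(z) such that, setting G := g ∘ μ and H := μ⁻¹ ∘ h, one of the following holds: (1) G ∈ ℂ[z] is a polynomial and H ∈ ℂ[z,z⁻¹] is a Laurent polynomial, or (2) G ∈ ℂ[z,z⁻¹] is a Laurent polynomial and H = z^k for some positive integer k. -/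
/-- `f` agrees with `g` at all but finitely many points of `ℂ`. -/
def EqCofinite (f g : ℂ → ℂ) : Prop := {z : ℂ | f z ≠ g z}.Finite

/-- `f` is (the evaluation map of) a Laurent polynomial, away from finitely many points. -/
def IsLaurentCof (f : ℂ → ℂ) : Prop :=
  ∃ (s : Finset ℤ) (a : ℤ → ℂ), EqCofinite f (fun z => ∑ k ∈ s, a k * z ^ k)

/-- `f` is (the evaluation map of) a polynomial, away from finitely many points. -/
def IsPolyCof (f : ℂ → ℂ) : Prop :=
  ∃ p : Polynomial ℂ, EqCofinite f (fun z => p.eval z)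

/-- `f` is a rational function: a quotient of polynomials, wherever the denominator
does not vanish. -/
def IsRatFun (f : ℂ → ℂ) : Prop :=
  ∃ p q : Polynomial ℂ, q ≠ 0 ∧ ∀ z : ℂ, q.eval z ≠ 0 → f z = p.eval z / q.eval z

/-- `μ` is a Möbius transformation (degree-one rational function). -/
def IsMobius (μ : ℂ → ℂ) : Prop :=
  ∃ a b c d : ℂ, a * d - b * c ≠ 0 ∧ ∀ z : ℂ, c * z + d ≠ 0 → μ z = (a * z + b) / (c * z + d)

open Polynomial Finset

namespace LD


/-- polynomials agreeing off a finite set are equal -/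
lemma poly_eq_of_cof {f g : ℂ[X]} (h : {z : ℂ | f.eval z ≠ g.eval z}.Finite) : f = g := by
  apply Polynomial.eq_of_infinite_eval_eq
  have : {z : ℂ | f.eval z = g.eval z} = {z : ℂ | f.eval z ≠ g.eval z}ᶜ := by
    ext z; simp [Set.mem_compl_iff]
  rw [this]
  exact h.infinite_compl

lemma roots_finite {f : ℂ[X]} (hf : f ≠ 0) : {z : ℂ | f.eval z = 0}.Finite :=
  Polynomial.finite_setOf_isRoot hf

/-- a nonzero polynomial over ℂ whose roots are all 0 is c·Xⁿ -/
lemma monomial_of_roots_zero {f : ℂ[X]} (hf : f ≠ 0) (h : ∀ z : ℂ, f.eval z = 0 → z = 0) :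
    ∃ c : ℂ, c ≠ 0 ∧ ∃ n : ℕ, f = C c * X ^ n := by
  refine ⟨f.leadingCoeff, leadingCoeff_ne_zero.mpr hf, f.natDegree, ?_⟩
  have hsp : f.roots.card = f.natDegree :=
    (Polynomial.splits_iff_card_roots.mp (IsAlgClosed.splits f))
  have hfac := Polynomial.C_leadingCoeff_mul_prod_multiset_X_sub_C (p := f) hsp
  have hall : ∀ a ∈ f.roots, a = (0 : ℂ) := by
    intro a ha
    exact h a ((Polynomial.mem_roots hf).mp ha)
  have : (f.roots.map fun a => X - C a).prod = X ^ f.natDegree := by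
    have : f.roots.map (fun a => X - C a) = Multiset.replicate f.natDegree X := by
      rw [Multiset.eq_replicate]
      constructor
      · rw [Multiset.card_map, hsp]
      · intro b hb
        obtain ⟨a, ha, rfl⟩ := Multiset.mem_map.mp hb
        rw [hall a ha]; simp
    rw [this, Multiset.prod_replicate]
  conv_lhs => rw [← hfac]
  rw [this]




/-- coprime iff no common root, given one nonzero -/
lemma coprime_of_no_common_root {u v : ℂ[X]} (hv : v ≠ 0)
    (h : ∀ z : ℂ, u.eval z = 0 → v.eval z = 0 → False) : IsCoprime u v := by
  classical
  rw [← EuclideanDomain.gcd_isUnit_iff]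
  by_contra hu
  have hg0 : EuclideanDomain.gcd u v ≠ 0 := by
    rw [Ne, EuclideanDomain.gcd_eq_zero_iff, not_and_or]; exact Or.inr hv
  have hdeg : (EuclideanDomain.gcd u v).degree ≠ 0 := by
    intro hd; exact hu (isUnit_iff_degree_eq_zero.mpr hd)
  obtain ⟨z, hz⟩ := IsAlgClosed.exists_root _ hdeg
  obtain ⟨a, ha⟩ := EuclideanDomain.gcd_dvd_left u v
  obtain ⟨b, hb⟩ := EuclideanDomain.gcd_dvd_right u v
  exact h z (by rw [ha, eval_mul, hz.eq_zero, zero_mul])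
    (by rw [hb, eval_mul, hz.eq_zero, zero_mul])

/-- reduce a rational function to a coprime representation -/
lemma ratfun_reduce {g : ℂ → ℂ} (hg : IsRatFun g) :
    ∃ p q : ℂ[X], IsCoprime p q ∧ q ≠ 0 ∧
      EqCofinite g (fun z => p.eval z / q.eval z) := by
  classical
  obtain ⟨p₀, q₀, hq₀, hgeq⟩ := hg
  set E := EuclideanDomain.gcd p₀ q₀ with hE
  have hEq : E ∣ q₀ := EuclideanDomain.gcd_dvd_right _ _
  have hEp : E ∣ p₀ := EuclideanDomain.gcd_dvd_left _ _
  have hE0 : E ≠ 0 := by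
    intro h
    exact hq₀ (EuclideanDomain.gcd_eq_zero_iff.mp (hE ▸ h)).2
  have hpE : E * (p₀ / E) = p₀ := EuclideanDomain.mul_div_cancel' hE0 hEp
  have hqE : E * (q₀ / E) = q₀ := EuclideanDomain.mul_div_cancel' hE0 hEq
  have hq' : q₀ / E ≠ 0 := by
    intro h; apply hq₀; rw [← hqE, h, mul_zero]
  refine ⟨p₀ / E, q₀ / E, ?_, hq', ?_⟩
  · apply coprime_of_no_common_root hq'
    intro y hyp hyq
    have h1 : E * (X - C y) ∣ p₀ := by
      rw [← hpE]
      exact mul_dvd_mul_left E (Polynomial.dvd_iff_isRoot.mpr hyp)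
    have h2 : E * (X - C y) ∣ q₀ := by
      rw [← hqE]
      exact mul_dvd_mul_left E (Polynomial.dvd_iff_isRoot.mpr hyq)
    have h3 : E * (X - C y) ∣ E := hE ▸ EuclideanDomain.dvd_gcd h1 h2
    obtain ⟨c, hc⟩ := h3
    have : (1 : ℂ[X]) = (X - C y) * c := by
      apply mul_left_cancel₀ hE0
      rw [mul_one, ← mul_assoc]; exact hc
    exact Polynomial.not_isUnit_X_sub_C y (IsUnit.of_mul_eq_one c this.symm)
  · have hsub : {z : ℂ | g z ≠ (p₀ / E).eval z / (q₀ / E).eval z} ⊆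
        {z : ℂ | q₀.eval z = 0} ∪ {z : ℂ | E.eval z = 0} := by
      intro z hz
      by_contra hmem
      simp only [Set.mem_union, Set.mem_setOf_eq, not_or] at hmem
      obtain ⟨h1, h2⟩ := hmem
      apply hz
      have e1 : eval z p₀ = eval z E * eval z (p₀ / E) := by rw [← eval_mul, hpE]
      have e2 : eval z q₀ = eval z E * eval z (q₀ / E) := by rw [← eval_mul, hqE]
      rw [hgeq z h1, e1, e2, mul_div_mul_left _ _ h2]
    exact ((roots_finite hq₀).union (roots_finite hE0)).subset hsub

lemma bezout_eval {p q : ℂ[X]} (h : IsCoprime p q) {y : ℂ}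
    (hp : p.eval y = 0) (hq : q.eval y = 0) : False := by
  obtain ⟨a, b, hab⟩ := h
  have := congrArg (Polynomial.eval y) hab
  simp [hp, hq] at this

/-- preimage of a finite set under a Möbius map is finite -/
lemma mobius_preimage_finite (μ0 : ℂ → ℂ) (a b c d : ℂ) (hdet : a * d - b * c ≠ 0)
    (hform : ∀ z : ℂ, c * z + d ≠ 0 → μ0 z = (a * z + b) / (c * z + d))
    {B : Set ℂ} (hB : B.Finite) :
    {z : ℂ | c * z + d ≠ 0 ∧ μ0 z ∈ B}.Finite := by
  have hinj : Set.InjOn μ0 {z : ℂ | c * z + d ≠ 0} := by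
    intro z₁ h₁ z₂ h₂ heq
    simp only [Set.mem_setOf_eq] at h₁ h₂
    rw [hform z₁ h₁, hform z₂ h₂, div_eq_div_iff h₁ h₂] at heq
    have : (a * d - b * c) * (z₁ - z₂) = 0 := by linear_combination heq
    rcases mul_eq_zero.mp this with h | h
    · exact absurd h hdet
    · exact sub_eq_zero.mp h
  have hss : {z : ℂ | c * z + d ≠ 0 ∧ μ0 z ∈ B} ⊆ {z : ℂ | c * z + d ≠ 0} := fun z hz => hz.1
  apply Set.Finite.of_finite_image (f := μ0)
  · apply hB.subset
    rintro y ⟨z, hz, rfl⟩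
    exact hz.2
  · exact hinj.mono hss



lemma eqcof_trans {f g h : ℂ → ℂ} (h1 : EqCofinite f g) (h2 : EqCofinite g h) :
    EqCofinite f h := by
  apply (h1.union h2).subset
  intro z hz
  by_contra hmem
  simp only [Set.mem_union, Set.mem_setOf_eq, not_or, not_not] at hmem
  exact hz (hmem.1.trans hmem.2)

lemma eqcof_symm {f g : ℂ → ℂ} (h1 : EqCofinite f g) : EqCofinite g f := by
  apply h1.subset; intro z hz; exact fun h => hz h.symm

lemma isLaurentCof_congr {f f' : ℂ → ℂ} (h : EqCofinite f f') (hf : IsLaurentCof f') :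
    IsLaurentCof f := by
  obtain ⟨s, a, ha⟩ := hf
  exact ⟨s, a, eqcof_trans h ha⟩

lemma isPolyCof_congr {f f' : ℂ → ℂ} (h : EqCofinite f f') (hf : IsPolyCof f') :
    IsPolyCof f := by
  obtain ⟨p, hp⟩ := hf
  exact ⟨p, eqcof_trans h hp⟩

/-- "homogenization" of f with respect to the fraction M/N at degree D -/
noncomputable def hom2 (f M N : ℂ[X]) (D : ℕ) : ℂ[X] :=
  ∑ i ∈ range (D+1), C (f.coeff i) * M ^ i * N ^ (D - i)

lemma hom2_eval {f M N : ℂ[X]} {D : ℕ} (hD : f.natDegree ≤ D) {z : ℂ}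
    (hN : N.eval z ≠ 0) :
    (hom2 f M N D).eval z = f.eval (M.eval z / N.eval z) * N.eval z ^ D := by
  rw [Polynomial.eval_eq_sum_range' (lt_of_le_of_lt hD (Nat.lt_succ_self D)),
    Finset.sum_mul, hom2, eval_finset_sum]
  apply Finset.sum_congr rfl
  intro i hi
  rw [Finset.mem_range, Nat.lt_succ_iff] at hi
  rw [eval_mul, eval_mul, eval_C, eval_pow, eval_pow, div_pow]
  have hNi : eval z N ^ i ≠ 0 := pow_ne_zero _ hN
  have hsplit : eval z N ^ D = eval z N ^ i * eval z N ^ (D - i) := by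
    rw [← pow_add]; congr 1; omega
  rw [hsplit]
  field_simp

lemma hom2_eval_Nroot {f M N : ℂ[X]} {D : ℕ} {z : ℂ} (hN : N.eval z = 0) :
    (hom2 f M N D).eval z = f.coeff D * M.eval z ^ D := by
  rw [hom2, eval_finset_sum]
  rw [Finset.sum_eq_single D]
  · simp
  · intro i hi hne
    rw [Finset.mem_range, Nat.lt_succ_iff] at hi
    have : D - i ≠ 0 := fun h => hne (le_antisymm hi (Nat.le_of_sub_eq_zero h))
    rw [eval_mul, eval_pow, hN, zero_pow this, mul_zero]
  · intro h
    exact absurd (Finset.self_mem_range_succ D) h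

lemma hom2_eval_zero_of_lt {f M N : ℂ[X]} {D : ℕ} {z : ℂ} (hN : N.eval z = 0)
    (h : f.natDegree < D) : (hom2 f M N D).eval z = 0 := by
  rw [hom2_eval_Nroot hN, coeff_eq_zero_of_natDegree_lt h, zero_mul]

/-- r(z)/(c z^e) is a Laurent polynomial function -/
lemma isLaurent_poly_div (r : ℂ[X]) {c : ℂ} (hc : c ≠ 0) (e : ℕ) :
    IsLaurentCof (fun z => r.eval z / (c * z ^ e)) := by
  refine ⟨Finset.image (fun i : ℕ => (i : ℤ) - (e : ℤ)) (range (r.natDegree + 1)),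
    fun k => r.coeff (k + e).toNat / c, ?_⟩
  apply Set.Finite.subset (Set.finite_singleton (0 : ℂ))
  intro z hz
  simp only [Set.mem_setOf_eq] at hz
  by_contra h0
  simp only [Set.mem_singleton_iff] at h0
  exfalso
  apply hz
  rw [Finset.sum_image (by intro a _ b _ h; have h' : (a:ℤ) - e = b - e := h; omega)]
  rw [Polynomial.eval_eq_sum_range]
  rw [Finset.sum_div]
  apply Finset.sum_congr rfl
  intro i _
  have hto : ((i : ℤ) - (e : ℤ) + (e : ℤ)).toNat = i := by omega
  rw [hto]
  rw [zpow_sub₀ h0, zpow_natCast, zpow_natCast]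
  field_simp
  try ring

lemma coeff_CXpow (a : ℂ) (n k : ℕ) :
    (Polynomial.C a * Polynomial.X ^ n).coeff k = if n = k then a else 0 := by
  rw [Polynomial.coeff_C_mul, Polynomial.coeff_X_pow]
  by_cases h : n = k
  · simp [h]
  · simp [h, Ne.symm h]

lemma div_div_same {x y c : ℂ} (hc : c ≠ 0) : (x / c) / (y / c) = x / y := by
  rw [div_div_eq_mul_div, div_mul_cancel₀ _ hc]

end LD

/-- Lemma on decompositions of Laurent polynomials.
If a Laurent polynomial `P`, lying neither in `ℂ[z]` nor in `ℂ[z⁻¹]`, factors as `P = g ∘ h`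
with `g, h` nonconstant rational functions, then there is a Möbius transformation `μ`
(with inverse `ν`) such that either `G := g ∘ μ` is a polynomial and `H := ν ∘ h` is a
Laurent polynomial, or `G` is a Laurent polynomial and `H = z^k` for some `k ≥ 1`. -/
theorem laurent_decomposition
    (P g h : ℂ → ℂ)
    (hP : ∃ (s : Finset ℤ) (a : ℤ → ℂ), ∀ z : ℂ, z ≠ 0 → P z = ∑ k ∈ s, a k * z ^ k)
    (hPnotPoly : ¬ ∃ p : Polynomial ℂ, ∀ z : ℂ, z ≠ 0 → P z = p.eval z)
    (hPnotPolyInv : ¬ ∃ p : Polynomial ℂ, ∀ z : ℂ, z ≠ 0 → P z = p.eval z⁻¹)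
    (hg : IsRatFun g) (hh : IsRatFun h)
    (hgnc : ¬ ∃ c : ℂ, EqCofinite g (fun _ => c))
    (hhnc : ¬ ∃ c : ℂ, EqCofinite h (fun _ => c))
    (hcomp : EqCofinite P (g ∘ h)) :
    ∃ μ ν : ℂ → ℂ, IsMobius μ ∧ IsMobius ν ∧
      EqCofinite (ν ∘ μ) id ∧ EqCofinite (μ ∘ ν) id ∧
      ((IsPolyCof (g ∘ μ) ∧ IsLaurentCof (ν ∘ h)) ∨
       (IsLaurentCof (g ∘ μ) ∧ ∃ k : ℕ, 1 ≤ k ∧ EqCofinite (ν ∘ h) (fun z => z ^ k))) := by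
  classical
  obtain ⟨p, q, hpq, hq0, hgq⟩ := LD.ratfun_reduce hg
  obtain ⟨r, s, hrs, hs0, hhq⟩ := LD.ratfun_reduce hh
  -- nonconstancy consequences
  have hp0 : p ≠ 0 := by
    intro hp
    apply hgnc
    refine ⟨0, hgq.subset ?_⟩
    intro z hz
    simp only [Set.mem_setOf_eq] at hz ⊢
    intro hgz
    exact hz (by rw [hgz, hp]; simp)
  have hpdq : ¬(p.natDegree = 0 ∧ q.natDegree = 0) := by
    rintro ⟨h1, h2⟩
    apply hgnc
    refine ⟨p.coeff 0 / q.coeff 0, hgq.subset ?_⟩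
    intro z hz
    simp only [Set.mem_setOf_eq] at hz ⊢
    intro hgz
    apply hz
    rw [hgz]
    conv_lhs => rw [Polynomial.eq_C_of_natDegree_eq_zero h1, Polynomial.eq_C_of_natDegree_eq_zero h2]
    simp
  have Hnc : ∀ c : ℂ, r - Polynomial.C c * s ≠ 0 := by
    intro c hc
    apply hhnc
    refine ⟨c, ((hhq.union (LD.roots_finite hs0)).subset ?_)⟩
    intro z hz
    simp only [Set.mem_setOf_eq] at hz
    by_contra hmem
    simp only [Set.mem_union, Set.mem_setOf_eq, not_or] at hmem
    obtain ⟨h1, h2⟩ := hmem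
    apply hz
    have hr : r = Polynomial.C c * s := by linear_combination hc
    rw [not_not] at h1
    rw [h1, hr, eval_mul, eval_C, mul_div_assoc, div_self h2, mul_one]
  -- Laurent representation of P
  obtain ⟨t0, a0, hPt⟩ := hP
  set m : ℕ := t0.sup (fun k => k.natAbs) with hm
  set A : Polynomial ℂ := ∑ k ∈ t0, Polynomial.C (a0 k) * Polynomial.X ^ (k + m).toNat with hA
  have hPA : ∀ z : ℂ, z ≠ 0 → P z = A.eval z / z ^ m := by
    intro z hz
    rw [hPt z hz, hA, eval_finset_sum, Finset.sum_div]
    apply Finset.sum_congr rfl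
    intro k hk
    have hkm : (0 : ℤ) ≤ k + m := by
      have h' : k.natAbs ≤ m := by simpa using Finset.le_sup (f := fun k : ℤ => k.natAbs) hk
      omega
    rw [eval_mul, eval_C, eval_pow, eval_X]
    have h1 : (z : ℂ) ^ ((k + (m : ℤ)).toNat) = z ^ (k + (m : ℤ)) := by
      rw [← zpow_natCast, Int.toNat_of_nonneg hkm]
    have h2 : (z : ℂ) ^ (m : ℕ) = z ^ ((m : ℕ) : ℤ) := by rw [zpow_natCast]
    rw [h1, h2, zpow_add₀ hz, ← mul_assoc, mul_div_cancel_right₀ _ (zpow_ne_zero _ hz)]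
  -- the composition as a single fraction
  set d : ℕ := max p.natDegree q.natDegree with hd
  set u : Polynomial ℂ := LD.hom2 p r s d with hu
  set v : Polynomial ℂ := LD.hom2 q r s d with hv
  have hpd : p.natDegree ≤ d := le_max_left _ _
  have hqd : q.natDegree ≤ d := le_max_right _ _
  have hv0 : v ≠ 0 := by
    intro hveq
    have hsub : {z : ℂ | s.eval z = 0}ᶜ ⊆
        ⋃ y ∈ {y : ℂ | q.eval y = 0}, {z : ℂ | (r - Polynomial.C y * s).eval z = 0} := by
      intro z hz
      simp only [Set.mem_compl_iff, Set.mem_setOf_eq] at hz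
      have hvz : (0:ℂ) = q.eval (r.eval z / s.eval z) * s.eval z ^ d := by
        rw [← LD.hom2_eval hqd hz, ← hv, hveq, eval_zero]
      have hq' : q.eval (r.eval z / s.eval z) = 0 := by
        rcases mul_eq_zero.mp hvz.symm with h | h
        · exact h
        · exact absurd h (pow_ne_zero _ hz)
      refine Set.mem_biUnion (show (r.eval z / s.eval z) ∈ {y : ℂ | q.eval y = 0} from hq') ?_
      simp only [Set.mem_setOf_eq, eval_sub, eval_mul, eval_C]
      rw [div_mul_cancel₀ _ hz, sub_self]
    have hfin : (⋃ y ∈ {y : ℂ | q.eval y = 0}, {z : ℂ | (r - Polynomial.C y * s).eval z = 0}).Finite :=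
      (LD.roots_finite hq0).biUnion (fun y _ => LD.roots_finite (Hnc y))
    exact ((LD.roots_finite hs0).infinite_compl.mono hsub) hfin
  have hcopuv : IsCoprime u v := by
    apply LD.coprime_of_no_common_root hv0
    intro z huz hvz
    by_cases hsz : s.eval z = 0
    · have hrz : r.eval z ≠ 0 := fun h => LD.bezout_eval hrs h hsz
      have h1 : p.coeff d * r.eval z ^ d = 0 := by rw [← LD.hom2_eval_Nroot hsz]; exact huz
      have h2 : q.coeff d * r.eval z ^ d = 0 := by rw [← LD.hom2_eval_Nroot hsz]; exact hvz
      have hpc : p.coeff d = 0 := by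
        rcases mul_eq_zero.mp h1 with h | h
        · exact h
        · exact absurd h (pow_ne_zero _ hrz)
      have hqc : q.coeff d = 0 := by
        rcases mul_eq_zero.mp h2 with h | h
        · exact h
        · exact absurd h (pow_ne_zero _ hrz)
      rcases max_choice p.natDegree q.natDegree with hmx | hmx
      · rw [hd, hmx] at hpc
        exact hp0 (Polynomial.leadingCoeff_eq_zero.mp hpc)
      · rw [hd, hmx] at hqc
        exact hq0 (Polynomial.leadingCoeff_eq_zero.mp hqc)
    · have h1 : p.eval (r.eval z / s.eval z) * s.eval z ^ d = 0 := by
        rw [← LD.hom2_eval hpd hsz]; exact huz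
      have h2 : q.eval (r.eval z / s.eval z) * s.eval z ^ d = 0 := by
        rw [← LD.hom2_eval hqd hsz]; exact hvz
      have hsd := pow_ne_zero d hsz
      exact LD.bezout_eval hpq ((mul_eq_zero.mp h1).resolve_right hsd)
        ((mul_eq_zero.mp h2).resolve_right hsd)
  have hAv : A * v = u * Polynomial.X ^ m := by
    apply LD.poly_eq_of_cof
    have hBgfin : {z : ℂ | s.eval z ≠ 0 ∧ r.eval z / s.eval z ∈
        {y : ℂ | g y ≠ p.eval y / q.eval y}}.Finite := by
      apply ((hgq.biUnion (fun y _ => LD.roots_finite (Hnc y)))).subset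
      rintro z ⟨hsz, hmem⟩
      refine Set.mem_biUnion (show (r.eval z / s.eval z) ∈ {y : ℂ | g y ≠ p.eval y / q.eval y} from hmem) ?_
      simp only [Set.mem_setOf_eq, eval_sub, eval_mul, eval_C]
      rw [div_mul_cancel₀ _ hsz, sub_self]
    apply Set.Finite.subset (((((Set.finite_singleton (0:ℂ)).union
      (LD.roots_finite hv0)).union (LD.roots_finite hs0)).union
      (hcomp.union hhq)).union hBgfin)
    intro z hz
    simp only [Set.mem_setOf_eq] at hz
    by_contra hmem
    simp only [Set.mem_union, Set.mem_setOf_eq, Set.mem_singleton_iff, not_or, not_and, not_not] at hmem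
    obtain ⟨⟨⟨⟨hz0, hvz⟩, hsz⟩, hPz, hhz⟩, hBz⟩ := hmem
    apply hz
    have hgood : g (r.eval z / s.eval z) = p.eval (r.eval z / s.eval z) / q.eval (r.eval z / s.eval z) := by
      have := hBz hsz
      simpa only [Set.mem_setOf_eq, not_not] using this
    have hueval : u.eval z = p.eval (r.eval z / s.eval z) * s.eval z ^ d := LD.hom2_eval hpd hsz
    have hveval : v.eval z = q.eval (r.eval z / s.eval z) * s.eval z ^ d := LD.hom2_eval hqd hsz
    have hratio : p.eval (r.eval z / s.eval z) / q.eval (r.eval z / s.eval z) = u.eval z / v.eval z := by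
      rw [hueval, hveval, mul_div_mul_right _ _ (pow_ne_zero d hsz)]
    have hchain : A.eval z / z ^ m = u.eval z / v.eval z := by
      rw [← hPA z hz0, hPz, Function.comp_apply, hhz, hgood, hratio]
    rw [div_eq_div_iff (pow_ne_zero m hz0) hvz] at hchain
    rw [eval_mul, eval_mul, eval_pow, eval_X, hchain]
  have hvroots : ∀ z : ℂ, v.eval z = 0 → z = 0 := by
    intro z hvz
    by_contra hz0
    have huz : u.eval z ≠ 0 := fun h => LD.bezout_eval hcopuv h hvz
    have : (A * v).eval z = 0 := by rw [eval_mul, hvz, mul_zero]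
    rw [hAv, eval_mul, eval_pow, eval_X] at this
    exact (mul_ne_zero huz (pow_ne_zero _ hz0)) this
  -- every root of q gives a monomial r - w s
  have RF : ∀ w : ℂ, q.eval w = 0 →
      ∃ c : ℂ, c ≠ 0 ∧ ∃ e : ℕ, r - Polynomial.C w * s = Polynomial.C c * Polynomial.X ^ e := by
    intro w hw
    apply LD.monomial_of_roots_zero (Hnc w)
    intro z hz
    simp only [eval_sub, eval_mul, eval_C] at hz
    by_cases hsz : s.eval z = 0
    · exfalso
      apply LD.bezout_eval hrs _ hsz
      rw [sub_eq_zero] at hz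
      rw [hz, hsz, mul_zero]
    · apply hvroots
      have hq' : r.eval z / s.eval z = w := by
        rw [sub_eq_zero] at hz
        rw [hz, mul_div_assoc, div_self hsz, mul_one]
      rw [LD.hom2_eval hqd hsz, hq', hw, zero_mul]
  -- s is a monomial when deg q < d
  have SF : q.natDegree < d → ∃ σ : ℂ, σ ≠ 0 ∧ ∃ es : ℕ, s = Polynomial.C σ * Polynomial.X ^ es := by
    intro hlt
    apply LD.monomial_of_roots_zero hs0
    intro z hsz
    exact hvroots z (LD.hom2_eval_zero_of_lt hsz hlt)
  by_cases hdq0 : q.natDegree = 0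
  · -- Case I : q is a nonzero constant, g is (essentially) a polynomial
    have hq0' : q.coeff 0 ≠ 0 := by
      intro hc
      apply hq0
      rw [Polynomial.eq_C_of_natDegree_eq_zero hdq0, hc, map_zero]
    have hdp1 : 1 ≤ p.natDegree := by
      rcases Nat.eq_zero_or_pos p.natDegree with h1 | h1
      · exact absurd ⟨h1, hdq0⟩ hpdq
      · exact h1
    have hlt : q.natDegree < d := lt_of_lt_of_le (by omega) hpd
    obtain ⟨σ, hσ, es, hsform⟩ := SF hlt
    refine ⟨(fun z => z), (fun z => z), ⟨1, 0, 0, 1, by norm_num, fun z _ => by simp⟩,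
      ⟨1, 0, 0, 1, by norm_num, fun z _ => by simp⟩,
      Set.finite_empty.subset (fun z hz => absurd rfl hz),
      Set.finite_empty.subset (fun z hz => absurd rfl hz), Or.inl ⟨?_, ?_⟩⟩
    · -- g ∘ id is a polynomial
      refine ⟨Polynomial.C (q.coeff 0)⁻¹ * p, hgq.subset ?_⟩
      intro z hz
      simp only [Set.mem_setOf_eq] at hz ⊢
      intro hEq
      apply hz
      show g z = _
      rw [hEq]
      conv_lhs => rw [Polynomial.eq_C_of_natDegree_eq_zero hdq0]
      rw [eval_mul, eval_C, eval_C]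
      field_simp
    · -- id ∘ h is a Laurent polynomial
      apply LD.isLaurentCof_congr (f' := fun z => r.eval z / (σ * z ^ es))
      · apply hhq.subset
        intro z hz
        simp only [Set.mem_setOf_eq] at hz ⊢
        intro hEq
        apply hz
        show h z = _
        rw [hEq, hsform, eval_mul, eval_C, eval_pow, eval_X]
      · exact LD.isLaurent_poly_div r hσ es
  · -- q has positive degree; pick a root w
    have hqdeg : q.degree ≠ 0 := by
      intro hdeg
      exact hdq0 (Polynomial.natDegree_eq_zero_iff_degree_le_zero.mpr (le_of_eq hdeg))
    obtain ⟨w, hwr⟩ := IsAlgClosed.exists_root q hqdeg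
    have hw0 : q.eval w = 0 := hwr
    obtain ⟨c₁, hc₁, e₁, hre₁⟩ := RF w hw0
    have hlc : q.coeff q.natDegree ≠ 0 := by
      exact fun hcc => hq0 (Polynomial.leadingCoeff_eq_zero.mp hcc)
    by_cases hsingle : ∀ z : ℂ, q.eval z = 0 → z = w
    · by_cases hdple : p.natDegree ≤ q.natDegree
      · -- Case II.a : single pole w of g, no pole at infinity : polynomial branch
        set M : Polynomial ℂ := Polynomial.C w * Polynomial.X + 1 with hM
        set vμ : Polynomial ℂ := LD.hom2 q M Polynomial.X q.natDegree with hvμ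
        set uμ : Polynomial ℂ := LD.hom2 p M Polynomial.X q.natDegree with huμ
        have hMev : ∀ z : ℂ, M.eval z = w * z + 1 := by intro z; simp [hM]
        have hnoroot : ∀ z : ℂ, vμ.eval z ≠ 0 := by
          intro z
          by_cases hz0 : z = 0
          · subst hz0
            rw [hvμ, LD.hom2_eval_Nroot (by simp), hMev]
            simpa using hlc
          · rw [hvμ, LD.hom2_eval (le_refl _) (by simpa using hz0)]
            intro hcon
            rcases mul_eq_zero.mp hcon with hcon | hcon
            · have := hsingle _ hcon
              rw [eval_X, hMev, div_eq_iff hz0] at this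
              rw [mul_comm w z] at this
              have : (1 : ℂ) = 0 := by linear_combination this
              simp at this
            · rw [eval_X] at hcon
              exact (pow_ne_zero _ hz0) hcon
        have hvμ0 : vμ ≠ 0 := fun hh => hnoroot 0 (by rw [hh, eval_zero])
        obtain ⟨γ, hγ, n, hγform⟩ := LD.monomial_of_roots_zero hvμ0
          (fun z hz => absurd hz (hnoroot z))
        have hn0 : n = 0 := by
          by_contra hn
          apply hnoroot 0
          rw [hγform]
          simp [zero_pow hn]
        rw [hn0, pow_zero, mul_one] at hγform
        -- the Möbius pair
        refine ⟨(fun z => (w * z + 1) / z), (fun z => 1 / (z - w)),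
          ⟨w, 1, 1, 0, by norm_num, fun z hz => by rw [one_mul, add_zero]⟩,
          ⟨0, 1, 1, -w, by norm_num, fun z hz => by simp [sub_eq_add_neg]⟩,
          ?_, ?_, Or.inl ⟨?_, ?_⟩⟩
        · -- ν ∘ μ = id
          apply Set.Finite.subset (Set.finite_singleton (0 : ℂ))
          intro z hz
          simp only [Set.mem_setOf_eq] at hz
          by_contra hz0
          simp only [Set.mem_singleton_iff] at hz0
          apply hz
          show 1 / ((w * z + 1) / z - w) = z
          have h1 : (w * z + 1) / z - w = 1 / z := by field_simp; ring
          rw [h1, one_div_one_div]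
        · -- μ ∘ ν = id
          apply Set.Finite.subset (Set.finite_singleton w)
          intro z hz
          simp only [Set.mem_setOf_eq] at hz
          by_contra hzw
          simp only [Set.mem_singleton_iff] at hzw
          apply hz
          have hsub : z - w ≠ 0 := sub_ne_zero.mpr hzw
          show (w * (1 / (z - w)) + 1) / (1 / (z - w)) = z
          field_simp
          try ring
        · -- G = g ∘ μ is a polynomial
          refine ⟨Polynomial.C γ⁻¹ * uμ, ?_⟩
          have hSμ := LD.mobius_preimage_finite (fun z => (w * z + 1) / z) w 1 1 0
            (by norm_num) (fun z hz => by rw [one_mul, add_zero]) hgq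
          apply Set.Finite.subset ((Set.finite_singleton (0:ℂ)).union hSμ)
          intro z hz
          simp only [Set.mem_setOf_eq] at hz
          by_contra hmem
          simp only [Set.mem_union, Set.mem_singleton_iff, Set.mem_setOf_eq, not_or, not_and,
            not_not] at hmem
          obtain ⟨hz0, hBz⟩ := hmem
          apply hz
          have hz0' : (1 : ℂ) * z + 0 ≠ 0 := by simpa using hz0
          have hgood : g ((w * z + 1) / z) = p.eval ((w * z + 1) / z) / q.eval ((w * z + 1) / z) := by
            have := hBz hz0'
            simpa only [Set.mem_setOf_eq, not_not] using this
          have hXz : Polynomial.X.eval z ≠ (0 : ℂ) := by simpa using hz0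
          have hqv : q.eval ((w * z + 1) / z) * z ^ q.natDegree = γ := by
            have := LD.hom2_eval (f := q) (M := M) (N := Polynomial.X) (le_refl _) hXz
            rw [← hvμ, hγform, eval_C, hMev, eval_X] at this
            rw [← this]
          have hpv : p.eval ((w * z + 1) / z) * z ^ q.natDegree = uμ.eval z := by
            have := LD.hom2_eval (f := p) (M := M) (N := Polynomial.X) hdple hXz
            rw [← huμ, hMev, eval_X] at this
            rw [this]
          show g ((w * z + 1) / z) = _
          rw [hgood, ← mul_div_mul_right _ _ (pow_ne_zero q.natDegree hz0), hpv, hqv,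
            eval_mul, eval_C]
          field_simp
        · -- H = ν ∘ h is a Laurent polynomial
          apply LD.isLaurentCof_congr (f' := fun z => s.eval z / (c₁ * z ^ e₁))
          · apply Set.Finite.subset ((hhq.union (LD.roots_finite hs0)).union
              (Set.finite_singleton (0:ℂ)))
            intro z hz
            simp only [Set.mem_setOf_eq] at hz
            by_contra hmem
            simp only [Set.mem_union, Set.mem_singleton_iff, Set.mem_setOf_eq, not_or,
              not_not] at hmem
            obtain ⟨⟨hhz, hsz⟩, hz0⟩ := hmem
            apply hz
            have hkey : r.eval z - w * s.eval z = c₁ * z ^ e₁ := by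
              have := congrArg (Polynomial.eval z) hre₁
              simpa using this
            show 1 / (h z - w) = _
            rw [hhz]
            have h2 : r.eval z / s.eval z - w = c₁ * z ^ e₁ / s.eval z := by
              rw [div_sub' hsz]
              rw [show r.eval z - s.eval z * w = c₁ * z ^ e₁ by linear_combination hkey]
            rw [h2, one_div_div]
          · exact LD.isLaurent_poly_div s hc₁ e₁
      · -- Case II.b : single pole w, pole at infinity too
        have hlt' : q.natDegree < p.natDegree := not_le.mp hdple
        have hqlt : q.natDegree < d := lt_of_lt_of_le hlt' hpd
        obtain ⟨σ, hσ, es, hsform⟩ := SF hqlt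
        have hrform : r = Polynomial.C c₁ * Polynomial.X ^ e₁ + Polynomial.C w * s := by
          linear_combination hre₁
        have he1es : e₁ ≠ es := by
          intro he
          apply Hnc ((c₁ + w * σ) / σ)
          have hCC : Polynomial.C ((c₁ + w * σ) / σ) * (Polynomial.C σ * Polynomial.X ^ es)
              = Polynomial.C (c₁ + w * σ) * Polynomial.X ^ es := by
            rw [← mul_assoc, ← Polynomial.C_mul, div_mul_cancel₀ _ hσ]
          rw [hrform, hsform, he, hCC, Polynomial.C_add, Polynomial.C_mul]
          ring
        obtain ⟨t, ht0, htσ⟩ : ∃ t : ℂ, t ≠ 0 ∧ t * σ = c₁ :=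
          ⟨c₁ / σ, div_ne_zero hc₁ hσ, div_mul_cancel₀ _ hσ⟩
        have hkeyev : ∀ z : ℂ, r.eval z - w * s.eval z = c₁ * z ^ e₁ := by
          intro z
          have := congrArg (Polynomial.eval z) hre₁
          simpa using this
        have hsev : ∀ z : ℂ, s.eval z = σ * z ^ es := by
          intro z; rw [hsform]; simp
        rcases lt_or_gt_of_ne he1es with hlt12 | hlt12
        · -- e₁ < es : h = w + t z^{-k}, use μ z = (w z + t)/z
          set k : ℕ := es - e₁ with hk
          have hk1 : 1 ≤ k := by omega
          set vν : Polynomial ℂ := LD.hom2 q (Polynomial.C w * Polynomial.X + Polynomial.C t)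
            Polynomial.X p.natDegree with hvν
          set uν : Polynomial ℂ := LD.hom2 p (Polynomial.C w * Polynomial.X + Polynomial.C t)
            Polynomial.X p.natDegree with huν
          have hMev : ∀ z : ℂ, (Polynomial.C w * Polynomial.X + Polynomial.C t).eval z
              = w * z + t := by intro z; simp
          have hvνev : ∀ z : ℂ, z ≠ 0 → vν.eval z = q.eval ((w * z + t) / z) * z ^ p.natDegree := by
            intro z hz
            rw [hvν, LD.hom2_eval (le_of_lt hlt') (by simpa using hz), hMev, eval_X]
          have huνev : ∀ z : ℂ, z ≠ 0 → uν.eval z = p.eval ((w * z + t) / z) * z ^ p.natDegree := by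
            intro z hz
            rw [huν, LD.hom2_eval (le_refl _) (by simpa using hz), hMev, eval_X]
          have hvν0 : vν ≠ 0 := by
            obtain ⟨y, hy⟩ := ((LD.roots_finite hq0).union (Set.finite_singleton w)).infinite_compl.nonempty
            simp only [Set.mem_compl_iff, Set.mem_union, Set.mem_setOf_eq,
              Set.mem_singleton_iff, not_or] at hy
            obtain ⟨hy1, hy2⟩ := hy
            intro hcc
            apply hy1
            have hz1 : t / (y - w) ≠ 0 := div_ne_zero ht0 (sub_ne_zero.mpr hy2)
            have := hvνev _ hz1
            rw [hcc, eval_zero] at this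
            have hyw : y - w ≠ 0 := sub_ne_zero.mpr hy2
            have harg : (w * (t / (y - w)) + t) / (t / (y - w)) = y := by
              rw [div_eq_iff hz1]
              field_simp
              ring
            rw [harg] at this
            rcases mul_eq_zero.mp this.symm with hcon | hcon
            · exact hcon
            · exact absurd hcon (pow_ne_zero _ hz1)
          have hvνroots : ∀ z : ℂ, vν.eval z = 0 → z = 0 := by
            intro z hz
            by_contra hz0
            have := hvνev z hz0
            rw [hz] at this
            rcases mul_eq_zero.mp this.symm with hcon | hcon
            · have harg := hsingle _ hcon
              rw [div_eq_iff hz0] at harg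
              apply ht0
              linear_combination harg
            · exact (pow_ne_zero _ hz0) hcon
          obtain ⟨γ, hγ, mm, hγform⟩ := LD.monomial_of_roots_zero hvν0 hvνroots
          refine ⟨(fun z => (w * z + t) / z), (fun z => t / (z - w)),
            ⟨w, t, 1, 0, by intro hcon; exact ht0 (by linear_combination -hcon),
              fun z hz => by rw [one_mul, add_zero]⟩,
            ⟨0, t, 1, -w, by intro hcon; exact ht0 (by linear_combination -hcon),
              fun z hz => by simp [sub_eq_add_neg]⟩,
            ?_, ?_, Or.inr ⟨?_, k, hk1, ?_⟩⟩
          · -- ν ∘ μ = id away from 0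
            apply Set.Finite.subset (Set.finite_singleton (0 : ℂ))
            intro z hz
            simp only [Set.mem_setOf_eq] at hz
            by_contra hz0
            simp only [Set.mem_singleton_iff] at hz0
            apply hz
            show t / ((w * z + t) / z - w) = z
            have h1 : (w * z + t) / z - w = t / z := by
              rw [div_sub' hz0, div_eq_div_iff hz0 hz0]
              ring
            rw [h1, div_div_eq_mul_div, mul_comm, mul_div_assoc, div_self ht0, mul_one]
          · -- μ ∘ ν = id away from w
            apply Set.Finite.subset (Set.finite_singleton w)
            intro z hz
            simp only [Set.mem_setOf_eq] at hz
            by_contra hzw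
            simp only [Set.mem_singleton_iff] at hzw
            apply hz
            have hsub : z - w ≠ 0 := sub_ne_zero.mpr hzw
            show (w * (t / (z - w)) + t) / (t / (z - w)) = z
            field_simp
            ring
          · -- G is Laurent
            apply LD.isLaurentCof_congr (f' := fun z => uν.eval z / (γ * z ^ mm))
            · have hSμ := LD.mobius_preimage_finite (fun z => (w * z + t) / z) w t 1 0
                (by intro hcon; exact ht0 (by linear_combination -hcon))
                (fun z hz => by rw [one_mul, add_zero]) hgq
              apply Set.Finite.subset ((Set.finite_singleton (0:ℂ)).union hSμ)
              intro z hz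
              simp only [Set.mem_setOf_eq] at hz
              by_contra hmem
              simp only [Set.mem_union, Set.mem_singleton_iff, Set.mem_setOf_eq, not_or,
                not_and, not_not] at hmem
              obtain ⟨hz0, hBz⟩ := hmem
              apply hz
              have hgood : g ((w * z + t) / z)
                  = p.eval ((w * z + t) / z) / q.eval ((w * z + t) / z) := by
                have := hBz (by simpa using hz0)
                simpa only [Set.mem_setOf_eq, not_not] using this
              show g ((w * z + t) / z) = _
              rw [hgood, ← mul_div_mul_right _ _ (pow_ne_zero p.natDegree hz0),
                ← huνev z hz0, ← hvνev z hz0, hγform, eval_mul, eval_C, eval_pow, eval_X]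
            · exact LD.isLaurent_poly_div uν hγ mm
          · -- H = z^k
            apply Set.Finite.subset (hhq.union (Set.finite_singleton (0:ℂ)))
            intro z hz
            simp only [Set.mem_setOf_eq] at hz
            by_contra hmem
            simp only [Set.mem_union, Set.mem_singleton_iff, Set.mem_setOf_eq, not_or,
              not_not] at hmem
            obtain ⟨hhz, hz0⟩ := hmem
            apply hz
            have hszz : s.eval z ≠ 0 := by
              rw [hsev]
              exact mul_ne_zero hσ (pow_ne_zero _ hz0)
            have hkey : h z - w = t / z ^ k := by
              rw [hhz, div_sub' hszz]
              rw [show r.eval z - s.eval z * w = c₁ * z ^ e₁ by linear_combination hkeyev z]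
              rw [hsev, div_eq_div_iff (mul_ne_zero hσ (pow_ne_zero _ hz0)) (pow_ne_zero _ hz0)]
              rw [show σ * z ^ es = σ * (z ^ e₁ * z ^ k) by rw [← pow_add]; congr 2; omega]
              linear_combination (-(z ^ e₁ * z ^ k)) * htσ
            show t / (h z - w) = z ^ k
            rw [hkey, div_div_eq_mul_div, mul_comm, mul_div_assoc, div_self ht0, mul_one]
        · -- es < e₁ : h = w + t z^k, use the affine map μ z = t z + w
          set k : ℕ := e₁ - es with hk
          have hk1 : 1 ≤ k := by omega
          set qc : Polynomial ℂ := q.comp (Polynomial.C t * Polynomial.X + Polynomial.C w) with hqc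
          set pc : Polynomial ℂ := p.comp (Polynomial.C t * Polynomial.X + Polynomial.C w) with hpc
          have hqcev : ∀ z : ℂ, qc.eval z = q.eval (t * z + w) := by
            intro z; rw [hqc, Polynomial.eval_comp]; simp
          have hpcev : ∀ z : ℂ, pc.eval z = p.eval (t * z + w) := by
            intro z; rw [hpc, Polynomial.eval_comp]; simp
          have hqc0 : qc ≠ 0 := by
            obtain ⟨y, hy⟩ := (LD.roots_finite hq0).infinite_compl.nonempty
            simp only [Set.mem_compl_iff, Set.mem_setOf_eq] at hy
            intro hcc
            apply hy
            have hev := hqcev ((y - w) / t)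
            rw [hcc, eval_zero] at hev
            rw [show t * ((y - w) / t) + w = y by field_simp; ring] at hev
            exact hev.symm
          have hqcroots : ∀ z : ℂ, qc.eval z = 0 → z = 0 := by
            intro z hzz
            rw [hqcev] at hzz
            have h2 := hsingle _ hzz
            have h3 : t * z = 0 := by linear_combination h2
            rcases mul_eq_zero.mp h3 with h4 | h4
            · exact absurd h4 ht0
            · exact h4
          obtain ⟨γ, hγ, mm, hγform⟩ := LD.monomial_of_roots_zero hqc0 hqcroots
          refine ⟨(fun z => t * z + w), (fun z => (z - w) / t),
            ⟨t, w, 0, 1, by intro hcon; exact ht0 (by linear_combination hcon),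
              fun z hz => by rw [zero_mul, zero_add, div_one]⟩,
            ⟨1, -w, 0, t, by intro hcon; exact ht0 (by linear_combination hcon),
              fun z hz => by simp [sub_eq_add_neg]⟩,
            ?_, ?_, Or.inr ⟨?_, k, hk1, ?_⟩⟩
          · apply Set.Finite.subset Set.finite_empty
            intro z hz
            exfalso
            apply hz
            show (t * z + w - w) / t = z
            field_simp
            ring
          · apply Set.Finite.subset Set.finite_empty
            intro z hz
            exfalso
            apply hz
            show t * ((z - w) / t) + w = z
            field_simp
            ring
          · -- G is Laurent
            apply LD.isLaurentCof_congr (f' := fun z => pc.eval z / (γ * z ^ mm))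
            · have hSμ := LD.mobius_preimage_finite (fun z => t * z + w) t w 0 1
                (by intro hcon; exact ht0 (by linear_combination hcon))
                (fun z hz => by rw [zero_mul, zero_add, div_one]) hgq
              apply Set.Finite.subset ((Set.finite_singleton (0:ℂ)).union hSμ)
              intro z hz
              simp only [Set.mem_setOf_eq] at hz
              by_contra hmem
              simp only [Set.mem_union, Set.mem_singleton_iff, Set.mem_setOf_eq, not_or,
                not_and, not_not] at hmem
              obtain ⟨hz0, hBz⟩ := hmem
              apply hz
              have hgood : g (t * z + w) = p.eval (t * z + w) / q.eval (t * z + w) := by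
                have := hBz (by norm_num)
                simpa only [Set.mem_setOf_eq, not_not] using this
              show g (t * z + w) = _
              rw [hgood, ← hpcev, ← hqcev, hγform, eval_mul, eval_C, eval_pow, eval_X]
            · exact LD.isLaurent_poly_div pc hγ mm
          · -- H = z^k
            apply Set.Finite.subset (hhq.union (Set.finite_singleton (0:ℂ)))
            intro z hz
            simp only [Set.mem_setOf_eq] at hz
            by_contra hmem
            simp only [Set.mem_union, Set.mem_singleton_iff, Set.mem_setOf_eq, not_or,
              not_not] at hmem
            obtain ⟨hhz, hz0⟩ := hmem
            apply hz
            have hszz : s.eval z ≠ 0 := by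
              rw [hsev]
              exact mul_ne_zero hσ (pow_ne_zero _ hz0)
            have hkey : h z - w = t * z ^ k := by
              rw [hhz, div_sub' hszz]
              rw [show r.eval z - s.eval z * w = c₁ * z ^ e₁ by linear_combination hkeyev z]
              rw [hsev, div_eq_iff (mul_ne_zero hσ (pow_ne_zero _ hz0))]
              rw [show (z:ℂ) ^ e₁ = z ^ es * z ^ k by rw [← pow_add]; congr 1; omega]
              linear_combination (-(z ^ es * z ^ k)) * htσ
            show (h z - w) / t = z ^ k
            rw [hkey, mul_comm, mul_div_assoc, div_self ht0, mul_one]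
    · -- Case III : two distinct poles
      push_neg at hsingle
      obtain ⟨w₂', hw₂'root, hw₂'ne⟩ := hsingle
      obtain ⟨c₂', hc₂', e₂', hre₂⟩ := RF w₂' hw₂'root
      -- distinct roots give distinct exponents
      have key_ne : ∀ (wa wb ca cb : ℂ) (ea eb : ℕ), wa ≠ wb → ca ≠ 0 → cb ≠ 0 →
          r - Polynomial.C wa * s = Polynomial.C ca * Polynomial.X ^ ea →
          r - Polynomial.C wb * s = Polynomial.C cb * Polynomial.X ^ eb → ea ≠ eb := by
        intro wa wb ca cb ea eb hab hca hcb hra hrb he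
        subst he
        have hwba : wb - wa ≠ 0 := sub_ne_zero.mpr (Ne.symm hab)
        have hs' : Polynomial.C (wb - wa) * s = Polynomial.C (ca - cb) * Polynomial.X ^ ea := by
          rw [map_sub, map_sub]
          linear_combination hra - hrb
        by_cases hcc : ca = cb
        · rw [hcc, sub_self, map_zero, zero_mul] at hs'
          rcases mul_eq_zero.mp hs' with hcase | hcase
          · exact (Polynomial.C_ne_zero.mpr hwba) hcase
          · exact hs0 hcase
        · have hσ'0 : (ca - cb) / (wb - wa) ≠ 0 :=
            div_ne_zero (sub_ne_zero.mpr hcc) hwba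
          have hsf : s = Polynomial.C ((ca - cb) / (wb - wa)) * Polynomial.X ^ ea := by
            apply mul_left_cancel₀ (Polynomial.C_ne_zero.mpr hwba)
            rw [hs', ← mul_assoc, ← Polynomial.C_mul, mul_div_cancel₀ _ hwba]
          apply Hnc ((ca + wa * ((ca - cb) / (wb - wa))) / ((ca - cb) / (wb - wa)))
          have hCC : Polynomial.C ((ca + wa * ((ca - cb) / (wb - wa))) / ((ca - cb) / (wb - wa)))
              * (Polynomial.C ((ca - cb) / (wb - wa)) * Polynomial.X ^ ea)
              = Polynomial.C (ca + wa * ((ca - cb) / (wb - wa))) * Polynomial.X ^ ea := by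
            rw [← mul_assoc, ← Polynomial.C_mul, div_mul_cancel₀ _ hσ'0]
          rw [show r = Polynomial.C ca * Polynomial.X ^ ea + Polynomial.C wa * s by
            linear_combination hra]
          rw [hsf, hCC, Polynomial.C_add, Polynomial.C_mul]
          ring
      have he12 : e₁ ≠ e₂' := key_ne w w₂' c₁ c₂' e₁ e₂' (Ne.symm hw₂'ne) hc₁ hc₂' hre₁ hre₂
      have hs2' : Polynomial.C (w₂' - w) * s
          = Polynomial.C c₁ * Polynomial.X ^ e₁ - Polynomial.C c₂' * Polynomial.X ^ e₂' := by
        rw [map_sub]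
        linear_combination hre₁ - hre₂
      -- no pole at infinity : deg p ≤ deg q
      have hdple : p.natDegree ≤ q.natDegree := by
        by_contra hgt
        have hqlt : q.natDegree < d := lt_of_lt_of_le (not_le.mp hgt) hpd
        obtain ⟨σ, hσ, es, hsform⟩ := SF hqlt
        have hEq : Polynomial.C ((w₂' - w) * σ) * Polynomial.X ^ es
            = Polynomial.C c₁ * Polynomial.X ^ e₁ - Polynomial.C c₂' * Polynomial.X ^ e₂' := by
          rw [Polynomial.C_mul, mul_assoc, ← hsform]
          exact hs2'
        have h1 := congrArg (fun f : Polynomial ℂ => f.coeff e₁) hEq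
        have h2 := congrArg (fun f : Polynomial ℂ => f.coeff e₂') hEq
        simp only [Polynomial.coeff_sub, LD.coeff_CXpow] at h1 h2
        rw [if_pos trivial, if_neg (Ne.symm he12)] at h1
        rw [if_pos trivial, if_neg he12] at h2
        have hes1 : es = e₁ := by
          by_contra hne
          rw [if_neg hne] at h1
          simp only [sub_zero] at h1
          exact hc₁ h1.symm
        have hes2 : es = e₂' := by
          by_contra hne
          rw [if_neg hne] at h2
          simp only [zero_sub] at h2
          exact hc₂' (neg_eq_zero.mp h2.symm)
        exact he12 (hes1 ▸ hes2)
      -- no third root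
      have hw3 : ∀ z : ℂ, q.eval z = 0 → z = w ∨ z = w₂' := by
        intro z hz
        by_contra hcon
        push_neg at hcon
        obtain ⟨hzw, hzw2⟩ := hcon
        obtain ⟨c₃, hc₃, e₃, hre₃⟩ := RF z hz
        have he13 : e₁ ≠ e₃ := key_ne w z c₁ c₃ e₁ e₃ (Ne.symm hzw) hc₁ hc₃ hre₁ hre₃
        have hs3' : Polynomial.C (z - w) * s
            = Polynomial.C c₁ * Polynomial.X ^ e₁ - Polynomial.C c₃ * Polynomial.X ^ e₃ := by
          rw [map_sub]
          linear_combination hre₁ - hre₃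
        have hmul : Polynomial.C (z - w)
              * (Polynomial.C c₁ * Polynomial.X ^ e₁ - Polynomial.C c₂' * Polynomial.X ^ e₂')
            = Polynomial.C (w₂' - w)
              * (Polynomial.C c₁ * Polynomial.X ^ e₁ - Polynomial.C c₃ * Polynomial.X ^ e₃) := by
          rw [← hs2', ← hs3']
          ring
        have hcoL : (Polynomial.C (z - w)
            * (Polynomial.C c₁ * Polynomial.X ^ e₁ - Polynomial.C c₂' * Polynomial.X ^ e₂')).coeff e₁
            = (z - w) * c₁ := by
          rw [Polynomial.coeff_C_mul, Polynomial.coeff_sub, LD.coeff_CXpow, LD.coeff_CXpow,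
            if_pos rfl, if_neg (Ne.symm he12), sub_zero]
        have hcoR : (Polynomial.C (w₂' - w)
            * (Polynomial.C c₁ * Polynomial.X ^ e₁ - Polynomial.C c₃ * Polynomial.X ^ e₃)).coeff e₁
            = (w₂' - w) * c₁ := by
          rw [Polynomial.coeff_C_mul, Polynomial.coeff_sub, LD.coeff_CXpow, LD.coeff_CXpow,
            if_pos rfl, if_neg (Ne.symm he13), sub_zero]
        have : (z - w) * c₁ = (w₂' - w) * c₁ := by
          rw [← hcoL, ← hcoR]
          exact congrArg (fun f : Polynomial ℂ => f.coeff e₁) hmul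
        apply hzw2
        have := mul_right_cancel₀ hc₁ this
        linear_combination this
      -- order the two roots so that the exponents decrease
      obtain ⟨w₁, cc₁, ee₁, w₂, cc₂, ee₂, hne12, hcc₁, hcc₂, hr1, hr2, hee, hroots2⟩ :
          ∃ (w₁ cc₁ : ℂ) (ee₁ : ℕ) (w₂ cc₂ : ℂ) (ee₂ : ℕ), w₁ ≠ w₂ ∧ cc₁ ≠ 0 ∧ cc₂ ≠ 0 ∧
            r - Polynomial.C w₁ * s = Polynomial.C cc₁ * Polynomial.X ^ ee₁ ∧
            r - Polynomial.C w₂ * s = Polynomial.C cc₂ * Polynomial.X ^ ee₂ ∧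
            ee₂ < ee₁ ∧ (∀ z : ℂ, q.eval z = 0 → z = w₁ ∨ z = w₂) := by
        rcases lt_or_gt_of_ne he12 with hlt | hlt
        · exact ⟨w₂', c₂', e₂', w, c₁, e₁, hw₂'ne, hc₂', hc₁, hre₂, hre₁, hlt,
            fun z hz => (hw3 z hz).symm⟩
        · exact ⟨w, c₁, e₁, w₂', c₂', e₂', Ne.symm hw₂'ne, hc₁, hc₂', hre₁, hre₂, hlt,
            fun z hz => hw3 z hz⟩
      obtain ⟨t, ht0, htc⟩ : ∃ t : ℂ, t ≠ 0 ∧ t * cc₁ = cc₂ :=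
        ⟨cc₂ / cc₁, div_ne_zero hcc₂ hcc₁, div_mul_cancel₀ _ hcc₁⟩
      have hw21 : w₂ - w₁ ≠ 0 := sub_ne_zero.mpr (Ne.symm hne12)
      set k : ℕ := ee₁ - ee₂ with hk
      have hk1 : 1 ≤ k := by omega
      -- the numerator/denominator polynomials of g ∘ μ
      set Mp : Polynomial ℂ := Polynomial.C w₂ * Polynomial.X - Polynomial.C (t * w₁) with hMp
      set Np : Polynomial ℂ := Polynomial.X - Polynomial.C t with hNp
      set vμ : Polynomial ℂ := LD.hom2 q Mp Np q.natDegree with hvμ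
      set uμ : Polynomial ℂ := LD.hom2 p Mp Np q.natDegree with huμ
      have hMev : ∀ z : ℂ, Mp.eval z = w₂ * z - t * w₁ := by intro z; simp [hMp]
      have hNev : ∀ z : ℂ, Np.eval z = z - t := by intro z; simp [hNp]
      have hvev : ∀ z : ℂ, z ≠ t →
          vμ.eval z = q.eval ((w₂ * z - t * w₁) / (z - t)) * (z - t) ^ q.natDegree := by
        intro z hzt
        rw [hvμ, LD.hom2_eval (le_refl _) (by rw [hNev]; exact sub_ne_zero.mpr hzt), hMev, hNev]
      have huev : ∀ z : ℂ, z ≠ t →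
          uμ.eval z = p.eval ((w₂ * z - t * w₁) / (z - t)) * (z - t) ^ q.natDegree := by
        intro z hzt
        rw [huμ, LD.hom2_eval hdple (by rw [hNev]; exact sub_ne_zero.mpr hzt), hMev, hNev]
      have hvt : vμ.eval t ≠ 0 := by
        rw [hvμ, LD.hom2_eval_Nroot (by rw [hNev]; ring), hMev]
        apply mul_ne_zero hlc
        apply pow_ne_zero
        rw [show w₂ * t - t * w₁ = t * (w₂ - w₁) by ring]
        exact mul_ne_zero ht0 hw21
      have hvμ0 : vμ ≠ 0 := fun hcc => hvt (by rw [hcc, eval_zero])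
      have hvμroots : ∀ z : ℂ, vμ.eval z = 0 → z = 0 := by
        intro z hzz
        by_cases hzt : z = t
        · exact absurd (hzt ▸ hzz) hvt
        · rw [hvev z hzt] at hzz
          have hq' : q.eval ((w₂ * z - t * w₁) / (z - t)) = 0 :=
            (mul_eq_zero.mp hzz).resolve_right (pow_ne_zero _ (sub_ne_zero.mpr hzt))
          have hzt' : z - t ≠ 0 := sub_ne_zero.mpr hzt
          rcases hroots2 _ hq' with hcase | hcase
          · rw [div_eq_iff hzt'] at hcase
            have h5 : (w₂ - w₁) * z = 0 := by linear_combination hcase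
            rcases mul_eq_zero.mp h5 with h6 | h6
            · exact absurd h6 hw21
            · exact h6
          · exfalso
            rw [div_eq_iff hzt'] at hcase
            have h5 : t * (w₂ - w₁) = 0 := by linear_combination hcase
            rcases mul_eq_zero.mp h5 with h6 | h6
            · exact ht0 h6
            · exact hw21 h6
      obtain ⟨γ, hγ, mm, hγform⟩ := LD.monomial_of_roots_zero hvμ0 hvμroots
      -- determinant fact for both Möbius maps
      have hdetν : t * -w₂ - -(t * w₁) * 1 ≠ 0 := by
        intro hcon
        rcases mul_eq_zero.mp (show t * (w₁ - w₂) = 0 by linear_combination hcon) with h6 | h6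
        · exact ht0 h6
        · exact hw21 (by linear_combination -h6)
      have hdetμ : w₂ * -t - -(t * w₁) * 1 ≠ 0 := by
        intro hcon
        rcases mul_eq_zero.mp (show t * (w₁ - w₂) = 0 by linear_combination hcon) with h6 | h6
        · exact ht0 h6
        · exact hw21 (by linear_combination -h6)
      refine ⟨(fun z => (w₂ * z - t * w₁) / (z - t)), (fun z => (t * z - t * w₁) / (z - w₂)),
        ⟨w₂, -(t * w₁), 1, -t, hdetμ, fun z hz => by rw [one_mul, ← sub_eq_add_neg, ← sub_eq_add_neg]⟩,
        ⟨t, -(t * w₁), 1, -w₂, hdetν, fun z hz => by rw [one_mul, ← sub_eq_add_neg, ← sub_eq_add_neg]⟩,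
        ?_, ?_, Or.inr ⟨?_, k, hk1, ?_⟩⟩
      · -- ν ∘ μ = id away from t
        apply Set.Finite.subset (Set.finite_singleton t)
        intro z hz
        simp only [Set.mem_setOf_eq] at hz
        by_contra hzt
        simp only [Set.mem_singleton_iff] at hzt
        apply hz
        have hzt' : z - t ≠ 0 := sub_ne_zero.mpr hzt
        show (t * ((w₂ * z - t * w₁) / (z - t)) - t * w₁) / ((w₂ * z - t * w₁) / (z - t) - w₂) = z
        have hden : (w₂ * z - t * w₁) / (z - t) - w₂ = t * (w₂ - w₁) / (z - t) := by
          rw [div_sub' hzt']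
          rw [show w₂ * z - t * w₁ - (z - t) * w₂ = t * (w₂ - w₁) by ring]
        have hnum : t * ((w₂ * z - t * w₁) / (z - t)) - t * w₁ = t * (w₂ - w₁) * z / (z - t) := by
          rw [mul_div_assoc']
          rw [div_sub' hzt']
          rw [show t * (w₂ * z - t * w₁) - (z - t) * (t * w₁) = t * (w₂ - w₁) * z by ring]
        rw [hnum, hden, LD.div_div_same hzt']
        rw [show t * (w₂ - w₁) * z = z * (t * (w₂ - w₁)) by ring]
        rw [mul_div_assoc, div_self (mul_ne_zero ht0 hw21), mul_one]
      · -- μ ∘ ν = id away from w₂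
        apply Set.Finite.subset (Set.finite_singleton w₂)
        intro z hz
        simp only [Set.mem_setOf_eq] at hz
        by_contra hzw
        simp only [Set.mem_singleton_iff] at hzw
        apply hz
        have hzw' : z - w₂ ≠ 0 := sub_ne_zero.mpr hzw
        show (w₂ * ((t * z - t * w₁) / (z - w₂)) - t * w₁) / ((t * z - t * w₁) / (z - w₂) - t) = z
        have hden : (t * z - t * w₁) / (z - w₂) - t = t * (w₂ - w₁) / (z - w₂) := by
          rw [div_sub' hzw']
          rw [show t * z - t * w₁ - (z - w₂) * t = t * (w₂ - w₁) by ring]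
        have hnum : w₂ * ((t * z - t * w₁) / (z - w₂)) - t * w₁ = t * (w₂ - w₁) * z / (z - w₂) := by
          rw [mul_div_assoc']
          rw [div_sub' hzw']
          rw [show w₂ * (t * z - t * w₁) - (z - w₂) * (t * w₁) = t * (w₂ - w₁) * z by ring]
        rw [hnum, hden, LD.div_div_same hzw']
        rw [show t * (w₂ - w₁) * z = z * (t * (w₂ - w₁)) by ring]
        rw [mul_div_assoc, div_self (mul_ne_zero ht0 hw21), mul_one]
      · -- G is Laurent
        apply LD.isLaurentCof_congr (f' := fun z => uμ.eval z / (γ * z ^ mm))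
        · have hSμ := LD.mobius_preimage_finite (fun z => (w₂ * z - t * w₁) / (z - t))
            w₂ (-(t * w₁)) 1 (-t) hdetμ
            (fun z hz => by rw [one_mul, ← sub_eq_add_neg, ← sub_eq_add_neg]) hgq
          apply Set.Finite.subset (((Set.finite_singleton (0:ℂ)).union
            (Set.finite_singleton t)).union hSμ)
          intro z hz
          simp only [Set.mem_setOf_eq] at hz
          by_contra hmem
          simp only [Set.mem_union, Set.mem_singleton_iff, Set.mem_setOf_eq, not_or,
            not_and, not_not] at hmem
          obtain ⟨⟨hz0, hzt⟩, hBz⟩ := hmem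
          apply hz
          have hzt' : z - t ≠ 0 := sub_ne_zero.mpr hzt
          have hz1 : (1 : ℂ) * z + -t ≠ 0 := by
            rw [one_mul, ← sub_eq_add_neg]
            exact hzt'
          have hgood : g ((w₂ * z - t * w₁) / (z - t))
              = p.eval ((w₂ * z - t * w₁) / (z - t)) / q.eval ((w₂ * z - t * w₁) / (z - t)) := by
            have := hBz hz1
            simpa only [Set.mem_setOf_eq, not_not] using this
          show g ((w₂ * z - t * w₁) / (z - t)) = _
          rw [hgood, ← mul_div_mul_right _ _ (pow_ne_zero q.natDegree hzt'),
            ← huev z hzt, ← hvev z hzt, hγform, eval_mul, eval_C, eval_pow, eval_X]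
        · exact LD.isLaurent_poly_div uμ hγ mm
      · -- H = z^k
        apply Set.Finite.subset ((hhq.union (LD.roots_finite hs0)).union
          (Set.finite_singleton (0:ℂ)))
        intro z hz
        simp only [Set.mem_setOf_eq] at hz
        by_contra hmem
        simp only [Set.mem_union, Set.mem_singleton_iff, Set.mem_setOf_eq, not_or,
          not_not] at hmem
        obtain ⟨⟨hhz, hsz⟩, hz0⟩ := hmem
        apply hz
        have hk1ev : r.eval z - w₁ * s.eval z = cc₁ * z ^ ee₁ := by
          have := congrArg (Polynomial.eval z) hr1
          simpa using this
        have hk2ev : r.eval z - w₂ * s.eval z = cc₂ * z ^ ee₂ := by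
          have := congrArg (Polynomial.eval z) hr2
          simpa using this
        show (t * h z - t * w₁) / (h z - w₂) = z ^ k
        rw [hhz]
        have hnum : t * (r.eval z / s.eval z) - t * w₁ = t * (cc₁ * z ^ ee₁) / s.eval z := by
          rw [mul_div_assoc']
          rw [div_sub' hsz]
          rw [show t * r.eval z - s.eval z * (t * w₁) = t * (cc₁ * z ^ ee₁) by
            linear_combination t * hk1ev]
        have hden : r.eval z / s.eval z - w₂ = cc₂ * z ^ ee₂ / s.eval z := by
          rw [div_sub' hsz]
          rw [show r.eval z - s.eval z * w₂ = cc₂ * z ^ ee₂ by linear_combination hk2ev]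
        rw [hnum, hden, LD.div_div_same hsz]
        rw [show t * (cc₁ * z ^ ee₁) = cc₂ * z ^ ee₂ * z ^ k by
          rw [show (z:ℂ) ^ ee₁ = z ^ ee₂ * z ^ k by rw [← pow_add]; congr 1; omega]
          linear_combination (z ^ ee₂ * z ^ k) * htc]
        rw [show cc₂ * z ^ ee₂ * z ^ k / (cc₂ * z ^ ee₂) = z ^ k * (cc₂ * z ^ ee₂) / (cc₂ * z ^ ee₂) by ring]
        rw [mul_div_assoc, div_self (mul_ne_zero hcc₂ (pow_ne_zero _ hz0)), mul_one]
end

section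
/- Let n, m ≥ 1 and let G be a transitive subgroup of the symmetric group on {1,…,n+m} containing the permutation σ_∞ = (1,2,…,n)(n+1,n+2,…,n+m). Let ℬ be a non-trivial imprimitivity system of G, and suppose that no block of ℬ meets both {1,…,n} and {n+1,…,n+m} (equivalently, every block is included in or disjoint from {1,…,n}). Then, letting d denote the common cardinality of the blocks of ℬ, d divides gcd(n,m); the blocks contained in {1,…,n} are exactly the congruence classes modulo n/d in {1,…,n} (the sets {i ∈ {1,…,n} : i ≡ j (mod n/d)} for j = 1,…,n/d); and the blocks contained in {n+1,…,n+m} are exactly the congruence classes modulo m/d in {n+1,…,n+m} (the sets {i ∈ {n+1,…,n+m} : i ≡ j (mod m/d)}). -/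
lemma cyclic_block_lemma (n : ℕ) (hn : 0 < n) (S : Finset ℕ) (hS : ∀ i ∈ S, i < n)
    (hne : S.Nonempty)
    (hblk : ∀ k, S.image (fun i => (i + k) % n) = S ∨
      Disjoint (S.image (fun i => (i + k) % n)) S) :
    S.card ∣ n ∧ ∃ j < n / S.card,
      S = (Finset.range n).filter (fun i => i % (n / S.card) = j) := by
  classical
  set H : Finset ℕ := (Finset.range n).filter
    (fun k => S.image (fun i => (i + k) % n) = S) with hHdef
  have hHmem : ∀ k, k ∈ H ↔ k < n ∧ S.image (fun i => (i + k) % n) = S := by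
    intro k; simp [hHdef]
  have h0 : 0 ∈ H := by
    rw [hHmem]
    refine ⟨hn, ?_⟩
    have : S.image (fun i => (i + 0) % n) = S.image id := by
      apply Finset.image_congr
      intro i hi
      simp [Nat.mod_eq_of_lt (hS i hi)]
    simpa using this
  have hmem : ∀ k ∈ H, ∀ b ∈ S, (b + k) % n ∈ S := by
    intro k hk b hb
    rw [hHmem] at hk
    rw [← hk.2]
    exact Finset.mem_image_of_mem _ hb
  -- shift by (b' + n - b) % n sends b to b'
  have hshiftval : ∀ b < n, ∀ b' < n, (b + (b' + n - b) % n) % n = b' := by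
    intro b hb b' hb'
    have h1 : b ≤ b' + n := by omega
    calc (b + (b' + n - b) % n) % n = (b + (b' + n - b)) % n := Nat.add_mod_mod _ _ _
      _ = (b' + n) % n := by rw [Nat.add_sub_cancel' h1]
      _ = b' := by rw [Nat.add_mod_right]; exact Nat.mod_eq_of_lt hb'
  have hdiff : ∀ b ∈ S, ∀ b' ∈ S, (b' + n - b) % n ∈ H := by
    intro b hb b' hb'
    rw [hHmem]
    refine ⟨Nat.mod_lt _ hn, ?_⟩
    rcases hblk ((b' + n - b) % n) with h | h
    · exact h
    · exfalso
      have hb'mem : b' ∈ S.image (fun i => (i + (b' + n - b) % n) % n) := by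
        refine Finset.mem_image.mpr ⟨b, hb, ?_⟩
        exact hshiftval b (hS b hb) b' (hS b' hb')
      exact (Finset.disjoint_left.mp h hb'mem) hb'
  have hcomp : ∀ k l : ℕ, ∀ i : ℕ, ((i + k) % n + l) % n = (i + (k + l) % n) % n := by
    intro k l i
    rw [Nat.mod_add_mod, Nat.add_mod_mod, add_assoc]
  have hadd : ∀ k ∈ H, ∀ l ∈ H, (k + l) % n ∈ H := by
    intro k hk l hl
    rw [hHmem] at hk hl ⊢
    refine ⟨Nat.mod_lt _ hn, ?_⟩
    have h1 : S.image (fun i => (i + (k + l) % n) % n)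
        = (S.image (fun i => (i + k) % n)).image (fun i => (i + l) % n) := by
      rw [Finset.image_image]
      apply Finset.image_congr
      intro i _
      exact (hcomp k l i).symm
    rw [h1, hk.2, hl.2]
  obtain ⟨b₀, hb₀⟩ := hne
  have hb₀n := hS b₀ hb₀
  -- |H| = |S|
  have hcard : H.card = S.card := by
    apply Finset.card_bij (fun k _ => (b₀ + k) % n)
    · intro k hk; exact hmem k hk b₀ hb₀
    · intro k hk l hl hkl
      have hk' := (hHmem k).mp hk |>.1
      have hl' := (hHmem l).mp hl |>.1
      have : (b₀ + k) % n = (b₀ + l) % n := hkl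
      have := Nat.ModEq.add_left_cancel' b₀ this
      rwa [Nat.ModEq, Nat.mod_eq_of_lt hk', Nat.mod_eq_of_lt hl'] at this
    · intro b hb
      exact ⟨(b + n - b₀) % n, hdiff b₀ hb₀ b hb, hshiftval b₀ hb₀n b (hS b hb)⟩
  by_cases hH1 : ∀ k ∈ H, k = 0
  · -- trivial case: S is a singleton
    have hHsing : H = {0} := by
      apply Finset.eq_singleton_iff_unique_mem.mpr ⟨h0, hH1⟩
    have hd1 : S.card = 1 := by rw [← hcard, hHsing]; simp
    have hSsing : S = {b₀} := by
      rw [Finset.card_eq_one] at hd1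
      obtain ⟨a, ha⟩ := hd1
      rw [ha] at hb₀ ⊢
      rw [Finset.mem_singleton] at hb₀
      rw [hb₀]
    have hnd : n / S.card = n := by rw [hd1, Nat.div_one]
    refine ⟨by rw [hd1]; exact one_dvd n, b₀, by rw [hnd]; exact hb₀n, ?_⟩
    rw [hnd, hSsing]
    ext i
    simp only [Finset.mem_singleton, Finset.mem_filter, Finset.mem_range]
    constructor
    · rintro rfl
      exact ⟨hb₀n, Nat.mod_eq_of_lt hb₀n⟩
    · rintro ⟨hin, hie⟩
      rw [Nat.mod_eq_of_lt hin] at hie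
      exact hie
  · push_neg at hH1
    obtain ⟨k₁, hk₁H, hk₁0⟩ := hH1
    have hEne : {k | k ∈ H ∧ 0 < k}.Nonempty := ⟨k₁, hk₁H, Nat.pos_of_ne_zero hk₁0⟩
    set e := sInf {k | k ∈ H ∧ 0 < k} with he_def
    obtain ⟨heH, hepos⟩ : e ∈ H ∧ 0 < e := Nat.sInf_mem hEne
    have hemin : ∀ k ∈ H, 0 < k → e ≤ k := fun k hk h0k => Nat.sInf_le ⟨hk, h0k⟩
    have hen : e < n := Finset.mem_range.mp (Finset.mem_filter.mp heH).1
    have hinv : ∀ k ∈ H, (n - k) % n ∈ H := by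
      intro k hk
      rw [hHmem] at hk ⊢
      refine ⟨Nat.mod_lt _ hn, ?_⟩
      have h1 : S.image (fun i => (i + (n - k) % n) % n)
          = (S.image (fun i => (i + k) % n)).image (fun i => (i + (n - k) % n) % n) := by
        rw [hk.2]
      rw [h1, Finset.image_image]
      have h2 : ∀ i ∈ S, ((i + k) % n + (n - k) % n) % n = i := by
        intro i hi
        rw [hcomp k ((n-k) % n) i]
        have h9 : (k + (n - k) % n) % n = 0 := by
          rcases Nat.eq_zero_or_pos k with rfl | hk0
          · simp
          · rw [Nat.mod_eq_of_lt (by omega : n - k < n),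
              Nat.add_sub_cancel' (le_of_lt hk.1), Nat.mod_self]
        rw [h9]
        simp [Nat.mod_eq_of_lt (hS i hi)]
      calc S.image (fun i => ((i + k) % n + (n - k) % n) % n) = S.image id :=
            Finset.image_congr h2
        _ = S := Finset.image_id
    have hsub : ∀ k ∈ H, e ≤ k → k - e ∈ H := by
      intro k hk hek
      have hkn : k < n := Finset.mem_range.mp (Finset.mem_filter.mp hk).1
      have h1 : (k + (n - e) % n) % n = k - e := by
        rw [Nat.add_mod_mod]
        have : k + (n - e) = (k - e) + n := by omega
        rw [this, Nat.add_mod_right]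
        exact Nat.mod_eq_of_lt (by omega)
      have := hadd k hk _ (hinv e heH)
      rwa [h1] at this
    have hmul : ∀ k ∈ H, e ∣ k := by
      intro k
      induction k using Nat.strong_induction_on with
      | _ k ih =>
        intro hk
        by_cases hke : k < e
        · have : k = 0 := by
            by_contra h
            exact absurd (hemin k hk (Nat.pos_of_ne_zero h)) (by omega)
          simp [this]
        · push_neg at hke
          have h1 := hsub k hk hke
          have h2 : k - e < k := by omega
          have := ih _ h2 h1
          have : e ∣ (k - e) + e := Dvd.dvd.add this dvd_rfl
          rwa [Nat.sub_add_cancel hke] at this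
    have hHmul : ∀ t : ℕ, t * e < n → t * e ∈ H := by
      intro t
      induction t with
      | zero => intro _; simpa using h0
      | succ t ih =>
        intro ht
        have h1 : t * e < n := by
          have : t * e ≤ (t+1) * e := by nlinarith
          omega
        have h2 := hadd _ (ih h1) e heH
        have h3 : (t * e + e) % n = (t+1) * e := by
          rw [Nat.mod_eq_of_lt]
          · ring
          · calc t * e + e = (t+1) * e := by ring
              _ < n := ht
        rwa [h3] at h2
    have hdvdn : e ∣ n := by
      by_contra hne'
      have hr : 0 < n % e := Nat.pos_of_ne_zero (fun h => hne' (Nat.dvd_of_mod_eq_zero h))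
      have hre : n % e < e := Nat.mod_lt _ hepos
      have hq2 : (n / e) * e + n % e = n := by
        rw [mul_comm]; exact Nat.div_add_mod n e
      have hq : (n / e) * e < n := by omega
      have h1 := hHmul (n / e) hq
      have h2 := hinv _ h1
      have h3 : (n - (n / e) * e) % n = n % e := by
        have h4 : n - (n / e) * e = n % e := by omega
        rw [h4]
        exact Nat.mod_eq_of_lt (by omega)
      rw [h3] at h2
      exact absurd (hemin _ h2 hr) (by omega)
    have hHeq : H = (Finset.range n).filter (fun k => e ∣ k) := by
      ext k
      simp only [Finset.mem_filter, Finset.mem_range]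
      constructor
      · intro hk
        exact ⟨Finset.mem_range.mp (Finset.mem_filter.mp hk).1, hmul k hk⟩
      · rintro ⟨hkn, t, rfl⟩
        rw [mul_comm] at hkn ⊢
        exact hHmul t hkn
    have hHcard : H.card = n / e := by
      rw [hHeq]
      have himg : (Finset.range n).filter (fun k => e ∣ k)
          = (Finset.range (n / e)).image (fun t => t * e) := by
        ext k
        simp only [Finset.mem_filter, Finset.mem_range, Finset.mem_image]
        constructor
        · rintro ⟨hkn, t, rfl⟩
          refine ⟨t, ?_, (mul_comm e t).symm⟩
          rw [mul_comm] at hkn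
          calc t = t * e / e := by rw [Nat.mul_div_cancel _ hepos]
            _ < n / e := Nat.div_lt_div_of_lt_of_dvd hdvdn hkn
        · rintro ⟨t, ht, rfl⟩
          constructor
          · calc t * e < (n / e) * e := by
                  exact (Nat.mul_lt_mul_right hepos).mpr ht
              _ = n := Nat.div_mul_cancel hdvdn
          · exact ⟨t, mul_comm t e⟩
      rw [himg, Finset.card_image_of_injective _ (fun a b hab => by
        exact Nat.eq_of_mul_eq_mul_right hepos hab), Finset.card_range]
    have hdn : S.card = n / e := by rw [← hcard, hHcard]
    have hSdvd : S.card ∣ n := hdn ▸ Nat.div_dvd_of_dvd hdvdn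
    have hend : n / S.card = e := by
      rw [hdn]
      exact Nat.div_div_self hdvdn (by omega)
    refine ⟨hSdvd, b₀ % e, ?_, ?_⟩
    · rw [hend]; exact Nat.mod_lt _ hepos
    · rw [hend]
      ext i
      simp only [Finset.mem_filter, Finset.mem_range]
      constructor
      · intro hi
        refine ⟨hS i hi, ?_⟩
        have h1 := hdiff b₀ hb₀ i hi   -- (i + n - b₀) % n ∈ H
        have h2 : e ∣ (i + n - b₀) % n := hmul _ h1
        have h3 : e ∣ (i + n - b₀) := (Nat.dvd_mod_iff hdvdn).mp h2
        have h4 : b₀ ≡ i + n [MOD e] := (Nat.modEq_iff_dvd' (by omega)).mpr h3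
        have h5 : (i + n) % e = i % e := by
          obtain ⟨q, hq⟩ := hdvdn
          rw [hq, Nat.add_mul_mod_self_left]
        rw [Nat.ModEq, h5] at h4
        omega
      · rintro ⟨hin, hie⟩
        have h3 : e ∣ (i + n - b₀) := by
          have h4 : b₀ ≡ i + n [MOD e] := by
            rw [Nat.ModEq]
            obtain ⟨q, hq⟩ := hdvdn
            rw [hq, Nat.add_mul_mod_self_left i e q]
            omega
          exact (Nat.modEq_iff_dvd' (by omega)).mp h4
        have h5 : e ∣ (i + n - b₀) % n := (Nat.dvd_mod_iff hdvdn).mpr h3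
        have h6 : (i + n - b₀) % n ∈ H := by
          rw [hHeq]
          exact Finset.mem_filter.mpr ⟨Finset.mem_range.mpr (Nat.mod_lt _ hn), h5⟩
        have h7 := hmem _ h6 b₀ hb₀
        rwa [hshiftval b₀ hb₀n i hin] at h7

/-- Lemma 2(a).
Let `G` be a transitive subgroup of the symmetric group on `{0,…,n+m-1}` (0-indexed version of
`{1,…,n+m}`) containing `σ_∞ = (0,1,…,n-1)(n,n+1,…,n+m-1)`.  Let `ℬ` be a non-trivial
imprimitivity system (the translates of a block `B₀`), and suppose no block meets both
`{0,…,n-1}` and `{n,…,n+m-1}`.  Then, with `d` the common cardinality of the blocks,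
`d ∣ gcd(n,m)`, the blocks contained in the first part are exactly the congruence classes
modulo `n/d` there, and the blocks contained in the second part are exactly the congruence
classes modulo `m/d` there. -/
theorem blocks_disjoint_case
    (n m : ℕ) (hn : 1 ≤ n) (hm : 1 ≤ m)
    (G : Subgroup (Equiv.Perm (Fin (n + m))))
    (σ : Equiv.Perm (Fin (n + m))) (hσG : σ ∈ G)
    (hσ : ∀ i : Fin (n + m),
      ((σ i : ℕ) = if (i : ℕ) < n then ((i : ℕ) + 1) % n else n + (((i : ℕ) - n + 1) % m)))
    (htrans : ∀ i j : Fin (n + m), ∃ g ∈ G, g i = j)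
    (B₀ : Set (Fin (n + m)))
    (hblock : ∀ g ∈ G, ⇑g '' B₀ = B₀ ∨ Disjoint (⇑g '' B₀) B₀)
    (hB₀big : 1 < B₀.ncard) (hB₀ne : B₀ ≠ Set.univ)
    (hsplit : ∀ g ∈ G, ⇑g '' B₀ ⊆ {i : Fin (n + m) | (i : ℕ) < n} ∨
      Disjoint (⇑g '' B₀) {i : Fin (n + m) | (i : ℕ) < n}) :
    B₀.ncard ∣ Nat.gcd n m ∧
    (∀ g ∈ G, ⇑g '' B₀ ⊆ {i : Fin (n + m) | (i : ℕ) < n} →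
      ∃ j < n / B₀.ncard,
        ⇑g '' B₀ = {i : Fin (n + m) | (i : ℕ) < n ∧ (i : ℕ) % (n / B₀.ncard) = j}) ∧
    (∀ j < n / B₀.ncard, ∃ g ∈ G,
        ⇑g '' B₀ = {i : Fin (n + m) | (i : ℕ) < n ∧ (i : ℕ) % (n / B₀.ncard) = j}) ∧
    (∀ g ∈ G, ⇑g '' B₀ ⊆ {i : Fin (n + m) | n ≤ (i : ℕ)} →
      ∃ j < m / B₀.ncard,
        ⇑g '' B₀ = {i : Fin (n + m) | n ≤ (i : ℕ) ∧ ((i : ℕ) - n) % (m / B₀.ncard) = j}) ∧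
    (∀ j < m / B₀.ncard, ∃ g ∈ G,
        ⇑g '' B₀ = {i : Fin (n + m) | n ≤ (i : ℕ) ∧ ((i : ℕ) - n) % (m / B₀.ncard) = j}) := by
  classical
  have hB₀nonempty : B₀.Nonempty := by
    rcases Set.eq_empty_or_nonempty B₀ with h | h
    · rw [h, Set.ncard_empty] at hB₀big; omega
    · exact h
  have hdpos : 0 < B₀.ncard := by omega
  -- powers of σ on each part
  have sig1 : ∀ (k : ℕ) (i : Fin (n + m)), (i : ℕ) < n →
      (((σ ^ k) i : ℕ) = ((i : ℕ) + k) % n ∧ ((σ ^ k) i : ℕ) < n) := by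
    intro k
    induction k with
    | zero =>
      intro i hi
      simp only [pow_zero, Equiv.Perm.coe_one, id_eq]
      exact ⟨by rw [Nat.add_zero, Nat.mod_eq_of_lt hi], hi⟩
    | succ k ih =>
      intro i hi
      obtain ⟨h1, h2⟩ := ih i hi
      have hstep : (σ ^ (k + 1)) i = σ ((σ ^ k) i) := by
        rw [pow_succ' σ k]; rfl
      have h3 := hσ ((σ ^ k) i)
      rw [if_pos h2] at h3
      constructor
      · rw [hstep, h3, h1, Nat.mod_add_mod, Nat.add_assoc]
      · rw [hstep, h3]
        exact Nat.mod_lt _ (by omega)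
  have sig2 : ∀ (k : ℕ) (i : Fin (n + m)), n ≤ (i : ℕ) →
      ((σ ^ k) i : ℕ) = n + (((i : ℕ) - n + k) % m) := by
    intro k
    induction k with
    | zero =>
      intro i hi
      have him : (i : ℕ) - n < m := by omega
      simp only [pow_zero, Equiv.Perm.coe_one, id_eq]
      rw [Nat.add_zero, Nat.mod_eq_of_lt him]
      omega
    | succ k ih =>
      intro i hi
      have h1 := ih i hi
      have hstep : (σ ^ (k + 1)) i = σ ((σ ^ k) i) := by
        rw [pow_succ' σ k]; rfl
      have h2 : ¬ (((σ ^ k) i : ℕ) < n) := by omega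
      have h3 := hσ ((σ ^ k) i)
      rw [if_neg h2] at h3
      rw [hstep, h3, h1]
      have h4 : n + ((i : ℕ) - n + k) % m - n = ((i : ℕ) - n + k) % m := by omega
      rw [h4, Nat.mod_add_mod, Nat.add_assoc]
  -- translates of B₀ are blocks
  have himgmul : ∀ (a b : Equiv.Perm (Fin (n + m))) (s : Set (Fin (n + m))),
      ⇑(a * b) '' s = ⇑a '' (⇑b '' s) := by
    intro a b s
    rw [← Set.image_comp]
    rfl
  have hblock' : ∀ g ∈ G, ∀ h ∈ G, ⇑h '' (⇑g '' B₀) = ⇑g '' B₀ ∨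
      Disjoint (⇑h '' (⇑g '' B₀)) (⇑g '' B₀) := by
    intro g hg h hh
    have hmemG : g⁻¹ * h * g ∈ G := mul_mem (mul_mem (inv_mem hg) hh) hg
    have hcomm : ⇑h '' (⇑g '' B₀) = ⇑g '' (⇑(g⁻¹ * h * g) '' B₀) := by
      rw [← himgmul, ← himgmul]
      congr 1
      group
    rcases hblock _ hmemG with h1 | h1
    · left; rw [hcomm, h1]
    · right
      rw [hcomm]
      exact ((Set.disjoint_image_iff (Equiv.injective g)).mpr h1)
  -- generic membership for val-images of finite sets
  have hval : ∀ (C : Set (Fin (n + m))) (a : ℕ),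
      a ∈ C.toFinite.toFinset.image Fin.val ↔ ∃ x ∈ C, (x : ℕ) = a := by
    intro C a
    simp only [Finset.mem_image, Set.Finite.mem_toFinset]
  -- key lemma for blocks in the first part
  have key1 : ∀ g ∈ G, ⇑g '' B₀ ⊆ {i : Fin (n + m) | (i : ℕ) < n} →
      B₀.ncard ∣ n ∧ ∃ j < n / B₀.ncard,
        ⇑g '' B₀ = {i : Fin (n + m) | (i : ℕ) < n ∧ (i : ℕ) % (n / B₀.ncard) = j} := by
    intro g hgG hgsub
    set B : Set (Fin (n + m)) := ⇑g '' B₀ with hBdef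
    set S : Finset ℕ := B.toFinite.toFinset.image Fin.val with hSdef
    have hSmem : ∀ a : ℕ, a ∈ S ↔ ∃ x ∈ B, (x : ℕ) = a := fun a => hval B a
    have hcardS : S.card = B₀.ncard := by
      rw [hSdef, Finset.card_image_of_injective _ Fin.val_injective,
        ← Set.ncard_eq_toFinset_card B B.toFinite, hBdef,
        Set.ncard_image_of_injective _ (Equiv.injective g)]
    have hSlt : ∀ a ∈ S, a < n := by
      intro a ha
      obtain ⟨x, hx, rfl⟩ := (hSmem a).mp ha
      exact hgsub hx
    have hSne : S.Nonempty := by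
      obtain ⟨b, hb⟩ := hB₀nonempty
      exact ⟨(g b : ℕ), (hSmem _).mpr ⟨g b, ⟨b, hb, rfl⟩, rfl⟩⟩
    have hblkS : ∀ k, S.image (fun i => (i + k) % n) = S ∨
        Disjoint (S.image (fun i => (i + k) % n)) S := by
      intro k
      have hpow : σ ^ k ∈ G := pow_mem hσG k
      have himg : S.image (fun i => (i + k) % n)
          = ((⇑(σ ^ k) '' B).toFinite.toFinset).image Fin.val := by
        ext a
        rw [hval]
        simp only [Finset.mem_image]
        constructor
        · rintro ⟨i, hi, rfl⟩
          obtain ⟨x, hx, rfl⟩ := (hSmem i).mp hi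
          exact ⟨(σ ^ k) x, ⟨x, hx, rfl⟩, (sig1 k x (hgsub hx)).1⟩
        · rintro ⟨y, ⟨x, hx, rfl⟩, rfl⟩
          exact ⟨(x : ℕ), (hSmem _).mpr ⟨x, hx, rfl⟩, (sig1 k x (hgsub hx)).1.symm⟩
      rcases hblock' g hgG (σ ^ k) hpow with h1 | h1
      all_goals rw [← hBdef] at h1
      · left
        rw [himg]
        ext a
        rw [hval, hSmem]
        constructor
        · rintro ⟨x, hx, rfl⟩
          rw [h1] at hx
          exact ⟨x, hx, rfl⟩
        · rintro ⟨x, hx, rfl⟩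
          rw [← h1] at hx
          exact ⟨x, hx, rfl⟩
      · right
        rw [Finset.disjoint_left]
        intro a ha haS
        rw [himg, hval] at ha
        obtain ⟨x, hx, rfl⟩ := ha
        obtain ⟨y, hy, hyx⟩ := (hSmem _).mp haS
        have : y = x := Fin.val_injective hyx
        subst this
        exact (Set.disjoint_left.mp h1 hx) hy
    obtain ⟨hdvd, j, hj, hSeq⟩ := cyclic_block_lemma n (by omega) S hSlt hSne hblkS
    rw [hcardS] at hdvd hj hSeq
    refine ⟨hdvd, j, hj, ?_⟩
    ext i
    simp only [Set.mem_setOf_eq]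
    constructor
    · intro hi
      have h1 : (i : ℕ) ∈ S := (hSmem _).mpr ⟨i, hi, rfl⟩
      rw [hSeq, Finset.mem_filter, Finset.mem_range] at h1
      exact h1
    · intro hi
      have h1 : (i : ℕ) ∈ S := by
        rw [hSeq, Finset.mem_filter, Finset.mem_range]
        exact hi
      obtain ⟨x, hx, hxv⟩ := (hSmem _).mp h1
      rwa [Fin.val_injective hxv] at hx
  -- key lemma for blocks in the second part
  have key2 : ∀ g ∈ G, ⇑g '' B₀ ⊆ {i : Fin (n + m) | n ≤ (i : ℕ)} →
      B₀.ncard ∣ m ∧ ∃ j < m / B₀.ncard,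
        ⇑g '' B₀ = {i : Fin (n + m) | n ≤ (i : ℕ) ∧
          ((i : ℕ) - n) % (m / B₀.ncard) = j} := by
    intro g hgG hgsub
    set B : Set (Fin (n + m)) := ⇑g '' B₀ with hBdef
    set S : Finset ℕ := B.toFinite.toFinset.image (fun x : Fin (n + m) => (x : ℕ) - n) with hSdef
    have hSmem : ∀ a : ℕ, a ∈ S ↔ ∃ x ∈ B, (x : ℕ) - n = a := by
      intro a
      simp only [hSdef, Finset.mem_image, Set.Finite.mem_toFinset]
    have hcardS : S.card = B₀.ncard := by
      rw [hSdef, Finset.card_image_of_injOn, ← Set.ncard_eq_toFinset_card B B.toFinite,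
        hBdef, Set.ncard_image_of_injective _ (Equiv.injective g)]
      intro x hx y hy hxy
      simp only [Finset.coe_sort_coe, Finset.mem_coe, Set.Finite.mem_toFinset] at hx hy
      have hx' : n ≤ (x : ℕ) := hgsub hx
      have hy' : n ≤ (y : ℕ) := hgsub hy
      simp only at hxy
      have : (x : ℕ) = (y : ℕ) := by omega
      exact Fin.val_injective this
    have hSlt : ∀ a ∈ S, a < m := by
      intro a ha
      obtain ⟨x, hx, rfl⟩ := (hSmem a).mp ha
      have := x.isLt
      omega
    have hSne : S.Nonempty := by
      obtain ⟨b, hb⟩ := hB₀nonempty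
      exact ⟨(g b : ℕ) - n, (hSmem _).mpr ⟨g b, ⟨b, hb, rfl⟩, rfl⟩⟩
    have hblkS : ∀ k, S.image (fun i => (i + k) % m) = S ∨
        Disjoint (S.image (fun i => (i + k) % m)) S := by
      intro k
      have hpow : σ ^ k ∈ G := pow_mem hσG k
      have hSmem' : ∀ a : ℕ, a ∈ (⇑(σ ^ k) '' B).toFinite.toFinset.image
          (fun x : Fin (n + m) => (x : ℕ) - n) ↔ ∃ x ∈ ⇑(σ ^ k) '' B, (x : ℕ) - n = a := by
        intro a
        simp only [Finset.mem_image, Set.Finite.mem_toFinset]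
      have himg : S.image (fun i => (i + k) % m)
          = ((⇑(σ ^ k) '' B).toFinite.toFinset).image (fun x : Fin (n + m) => (x : ℕ) - n) := by
        ext a
        rw [hSmem']
        simp only [Finset.mem_image]
        constructor
        · rintro ⟨i, hi, rfl⟩
          obtain ⟨x, hx, rfl⟩ := (hSmem i).mp hi
          refine ⟨(σ ^ k) x, ⟨x, hx, rfl⟩, ?_⟩
          rw [sig2 k x (hgsub hx)]
          omega
        · rintro ⟨y, ⟨x, hx, rfl⟩, rfl⟩
          refine ⟨(x : ℕ) - n, (hSmem _).mpr ⟨x, hx, rfl⟩, ?_⟩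
          rw [sig2 k x (hgsub hx)]
          omega
      rcases hblock' g hgG (σ ^ k) hpow with h1 | h1
      all_goals rw [← hBdef] at h1
      · left
        rw [himg]
        ext a
        rw [hSmem', hSmem]
        rw [h1]
      · right
        rw [Finset.disjoint_left]
        intro a ha haS
        rw [himg, hSmem'] at ha
        obtain ⟨x, hx, rfl⟩ := ha
        obtain ⟨y, hy, hyx⟩ := (hSmem _).mp haS
        have hx' : n ≤ (x : ℕ) := by
          obtain ⟨z, hz, rfl⟩ := hx
          rw [sig2 k z (hgsub hz)]
          omega
        have hy' : n ≤ (y : ℕ) := hgsub hy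
        have : y = x := Fin.val_injective (by omega)
        subst this
        exact (Set.disjoint_left.mp h1 hx) hy
    obtain ⟨hdvd, j, hj, hSeq⟩ := cyclic_block_lemma m (by omega) S hSlt hSne hblkS
    rw [hcardS] at hdvd hj hSeq
    refine ⟨hdvd, j, hj, ?_⟩
    ext i
    simp only [Set.mem_setOf_eq]
    constructor
    · intro hi
      have hi' : n ≤ (i : ℕ) := hgsub hi
      have h1 : (i : ℕ) - n ∈ S := (hSmem _).mpr ⟨i, hi, rfl⟩
      rw [hSeq, Finset.mem_filter, Finset.mem_range] at h1
      exact ⟨hi', h1.2⟩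
    · rintro ⟨hin, hie⟩
      have h1 : (i : ℕ) - n ∈ S := by
        rw [hSeq, Finset.mem_filter, Finset.mem_range]
        have := i.isLt
        exact ⟨by omega, hie⟩
      obtain ⟨x, hx, hxv⟩ := (hSmem _).mp h1
      have hx' : n ≤ (x : ℕ) := hgsub hx
      have : x = i := Fin.val_injective (by omega)
      rwa [this] at hx
  -- find a translate in each part
  obtain ⟨b, hb⟩ := hB₀nonempty
  obtain ⟨g₁, hg₁G, hg₁b⟩ := htrans b ⟨0, by omega⟩
  have hg₁sub : ⇑g₁ '' B₀ ⊆ {i : Fin (n + m) | (i : ℕ) < n} := by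
    rcases hsplit g₁ hg₁G with h | h
    · exact h
    · exfalso
      have h0 : (⟨0, by omega⟩ : Fin (n + m)) ∈ ⇑g₁ '' B₀ := ⟨b, hb, hg₁b⟩
      exact (Set.disjoint_left.mp h h0) (by simp [Set.mem_setOf_eq]; omega)
  obtain ⟨g₂, hg₂G, hg₂b⟩ := htrans b ⟨n, by omega⟩
  have hg₂sub : ⇑g₂ '' B₀ ⊆ {i : Fin (n + m) | n ≤ (i : ℕ)} := by
    have hnmem : (⟨n, by omega⟩ : Fin (n + m)) ∈ ⇑g₂ '' B₀ := ⟨b, hb, hg₂b⟩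
    rcases hsplit g₂ hg₂G with h | h
    · exfalso
      have := h hnmem
      simp only [Set.mem_setOf_eq] at this
      omega
    · intro x hx
      have := Set.disjoint_left.mp h hx
      simp only [Set.mem_setOf_eq] at this ⊢
      omega
  obtain ⟨hdvdn, j₁, hj₁, hclass₁⟩ := key1 g₁ hg₁G hg₁sub
  obtain ⟨hdvdm, j₂, hj₂, hclass₂⟩ := key2 g₂ hg₂G hg₂sub
  have hepos : 0 < n / B₀.ncard := Nat.div_pos (Nat.le_of_dvd (by omega) hdvdn) hdpos
  have he'pos : 0 < m / B₀.ncard := Nat.div_pos (Nat.le_of_dvd (by omega) hdvdm) hdpos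
  have hedvd : (n / B₀.ncard) ∣ n := Nat.div_dvd_of_dvd hdvdn
  have he'dvd : (m / B₀.ncard) ∣ m := Nat.div_dvd_of_dvd hdvdm
  refine ⟨Nat.dvd_gcd hdvdn hdvdm, fun g hg hsub' => (key1 g hg hsub').2, ?_,
    fun g hg hsub' => (key2 g hg hsub').2, ?_⟩
  · -- existence of each class in the first part
    intro j hj
    set e := n / B₀.ncard with he_def
    set k := j + e - j₁ with hk_def
    have hgG : σ ^ k * g₁ ∈ G := mul_mem (pow_mem hσG k) hg₁G
    refine ⟨σ ^ k * g₁, hgG, ?_⟩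
    have himage : ⇑(σ ^ k * g₁) '' B₀ = ⇑(σ ^ k) '' (⇑g₁ '' B₀) := himgmul _ _ _
    have hsubcl : ⇑(σ ^ k * g₁) '' B₀ ⊆
        {i : Fin (n + m) | (i : ℕ) < n ∧ (i : ℕ) % e = j} := by
      rw [himage, hclass₁]
      rintro x ⟨y, hy, rfl⟩
      simp only [Set.mem_setOf_eq] at hy ⊢
      obtain ⟨h1, h2⟩ := sig1 k y hy.1
      refine ⟨h2, ?_⟩
      rw [h1, Nat.mod_mod_of_dvd _ hedvd, Nat.add_mod, hy.2, Nat.add_mod_mod]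
      have : j₁ + k = j + e := by omega
      rw [this, Nat.add_mod_right]
      exact Nat.mod_eq_of_lt hj
    have hsubfirst : ⇑(σ ^ k * g₁) '' B₀ ⊆ {i : Fin (n + m) | (i : ℕ) < n} :=
      fun x hx => (hsubcl hx).1
    obtain ⟨-, j', hj', hcls⟩ := key1 _ hgG hsubfirst
    have hnem : (⇑(σ ^ k * g₁) '' B₀).Nonempty := ⟨_, ⟨b, hb, rfl⟩⟩
    obtain ⟨x, hx⟩ := hnem
    have hx1 := hsubcl hx
    have hx2 := hcls ▸ hx
    simp only [Set.mem_setOf_eq] at hx1 hx2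
    have : j' = j := by rw [← hx2.2, hx1.2]
    rw [hcls, this]
  · -- existence of each class in the second part
    intro j hj
    set e := m / B₀.ncard with he_def
    set k := j + e - j₂ with hk_def
    have hgG : σ ^ k * g₂ ∈ G := mul_mem (pow_mem hσG k) hg₂G
    refine ⟨σ ^ k * g₂, hgG, ?_⟩
    have himage : ⇑(σ ^ k * g₂) '' B₀ = ⇑(σ ^ k) '' (⇑g₂ '' B₀) := himgmul _ _ _
    have hsubcl : ⇑(σ ^ k * g₂) '' B₀ ⊆
        {i : Fin (n + m) | n ≤ (i : ℕ) ∧ ((i : ℕ) - n) % e = j} := by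
      rw [himage, hclass₂]
      rintro x ⟨y, hy, rfl⟩
      simp only [Set.mem_setOf_eq] at hy ⊢
      have h1 := sig2 k y hy.1
      constructor
      · omega
      · have h4 : ((σ ^ k) y : ℕ) - n = ((y : ℕ) - n + k) % m := by omega
        rw [h4, Nat.mod_mod_of_dvd _ he'dvd, Nat.add_mod, hy.2, Nat.add_mod_mod]
        have : j₂ + k = j + e := by omega
        rw [this, Nat.add_mod_right]
        exact Nat.mod_eq_of_lt hj
    have hsubsec : ⇑(σ ^ k * g₂) '' B₀ ⊆ {i : Fin (n + m) | n ≤ (i : ℕ)} :=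
      fun x hx => (hsubcl hx).1
    obtain ⟨-, j', hj', hcls⟩ := key2 _ hgG hsubsec
    have hnem : (⇑(σ ^ k * g₂) '' B₀).Nonempty := ⟨_, ⟨b, hb, rfl⟩⟩
    obtain ⟨x, hx⟩ := hnem
    have hx1 := hsubcl hx
    have hx2 := hcls ▸ hx
    simp only [Set.mem_setOf_eq] at hx1 hx2
    have : j' = j := by rw [← hx2.2, hx1.2]
    rw [hcls, this]
end

section
/- Let n, m ≥ 1 and let G be a transitive subgroup of the symmetric group on {1,…,n+m} containing the permutation σ_∞ = (1,2,…,n)(n+1,n+2,…,n+m). Let ℬ be a non-trivial imprimitivity system of G, and suppose some block of ℬ meets both {1,…,n} and {n+1,…,n+m}. Then every block of ℬ meets both {1,…,n} and {n+1,…,n+m}, and there exist a divisor d of gcd(n,m) and an integer r with 0 ≤ r < d such that every block B ∈ ℬ has the form B = {i ∈ {1,…,n} : i ≡ k_B (mod d)} ∪ {i ∈ {n+1,…,n+m} : i ≡ k_B + r (mod d)} for some integer k_B; that is, B ∩ {1,…,n} is a congruence class modulo d in {1,…,n} and B ∩ {n+1,…,n+m} is a congruence class modulo d in {n+1,…,n+m}.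 -/
private lemma helper_mod_eq {d x y s t : ℕ} (hs : d ∣ s) (ht : d ∣ t) (h : x + s = y + t) :
    x % d = y % d := by
  obtain ⟨s', rfl⟩ := hs
  obtain ⟨t', rfl⟩ := ht
  calc x % d = (x + d * s') % d := (Nat.add_mul_mod_self_left x d s').symm
    _ = (y + d * t') % d := by rw [h]
    _ = y % d := Nat.add_mul_mod_self_left y d t'

private lemma helper_dvd {d a t x s : ℕ} (hs : d ∣ s) (h : a + t = x + s) (hax : x % d = a % d) :
    d ∣ t := by
  obtain ⟨s', rfl⟩ := hs
  have h1 : (a + t) % d = a % d := by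
    rw [h, Nat.add_mul_mod_self_left, hax]
  have h2 : a + t ≡ a + 0 [MOD d] := by
    show (a + t) % d = (a + 0) % d
    rw [Nat.add_zero, h1]
  exact Nat.modEq_zero_iff_dvd.mp (Nat.ModEq.add_left_cancel' a h2)

/-- Lemma 2(b).
Let `G` be a transitive subgroup of the symmetric group on `{0,…,n+m-1}` (0-indexed version of
`{1,…,n+m}`) containing `σ_∞ = (0,1,…,n-1)(n,n+1,…,n+m-1)`.  Let `ℬ` be a non-trivial
imprimitivity system (the translates of a block `B₀`), and suppose some block meets both
`{0,…,n-1}` and `{n,…,n+m-1}`.  Then every block meets both parts, and there exist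
`d ∣ gcd(n,m)` and `0 ≤ r < d` such that every block is of the form
`{i < n : i ≡ k_B (mod d)} ∪ {i ≥ n : i - n ≡ k_B + r (mod d)}` for some `k_B`. -/
theorem blocks_mixed_case
    (n m : ℕ) (hn : 1 ≤ n) (hm : 1 ≤ m)
    (G : Subgroup (Equiv.Perm (Fin (n + m))))
    (σ : Equiv.Perm (Fin (n + m))) (hσG : σ ∈ G)
    (hσ : ∀ i : Fin (n + m),
      ((σ i : ℕ) = if (i : ℕ) < n then ((i : ℕ) + 1) % n else n + (((i : ℕ) - n + 1) % m)))
    (htrans : ∀ i j : Fin (n + m), ∃ g ∈ G, g i = j)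
    (B₀ : Set (Fin (n + m)))
    (hblock : ∀ g ∈ G, ⇑g '' B₀ = B₀ ∨ Disjoint (⇑g '' B₀) B₀)
    (hB₀big : 1 < B₀.ncard) (hB₀ne : B₀ ≠ Set.univ)
    (hmeet : ∃ g ∈ G, (⇑g '' B₀ ∩ {i : Fin (n + m) | (i : ℕ) < n}).Nonempty ∧
      (⇑g '' B₀ ∩ {i : Fin (n + m) | n ≤ (i : ℕ)}).Nonempty) :
    (∀ g ∈ G, (⇑g '' B₀ ∩ {i : Fin (n + m) | (i : ℕ) < n}).Nonempty ∧
      (⇑g '' B₀ ∩ {i : Fin (n + m) | n ≤ (i : ℕ)}).Nonempty) ∧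
    ∃ d r : ℕ, d ∣ Nat.gcd n m ∧ r < d ∧
      ∀ g ∈ G, ∃ k : ℕ,
        ⇑g '' B₀ = {i : Fin (n + m) |
          ((i : ℕ) < n ∧ (i : ℕ) % d = k % d) ∨
          (n ≤ (i : ℕ) ∧ ((i : ℕ) - n) % d = (k + r) % d)} := by
  classical
  have hn' : 0 < n := hn
  have hm' : 0 < m := hm
  -- the iterates of σ
  have hpow : ∀ (j : ℕ) (i : Fin (n + m)),
      (((σ ^ j) i : ℕ) = if (i : ℕ) < n then ((i : ℕ) + j) % n
        else n + (((i : ℕ) - n + j) % m)) := by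
    intro j
    induction j with
    | zero =>
      intro i
      simp only [pow_zero, Equiv.Perm.coe_one, id_eq]
      split_ifs with h
      · exact (Nat.mod_eq_of_lt h).symm
      · have hi : (i : ℕ) - n < m := by omega
        have h0 : ((i : ℕ) - n + 0) % m = (i : ℕ) - n := by
          rw [Nat.add_zero]; exact Nat.mod_eq_of_lt hi
        omega
    | succ j ih =>
      intro i
      have hmul : (σ ^ (j + 1)) i = σ ((σ ^ j) i) := by
        rw [pow_succ' σ j, Equiv.Perm.mul_apply]
      rw [hmul, hσ ((σ ^ j) i)]
      by_cases h : (i : ℕ) < n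
      · have h1 : ((σ ^ j) i : ℕ) = ((i : ℕ) + j) % n := by rw [ih i, if_pos h]
        have h2 : ((σ ^ j) i : ℕ) < n := by rw [h1]; exact Nat.mod_lt _ hn'
        rw [if_pos h2, if_pos h, h1, Nat.mod_add_mod, ← Nat.add_assoc]
      · have h1 : ((σ ^ j) i : ℕ) = n + (((i : ℕ) - n + j) % m) := by rw [ih i, if_neg h]
        have h2 : ¬ ((σ ^ j) i : ℕ) < n := by rw [h1]; omega
        rw [if_neg h2, if_neg h, h1, Nat.add_sub_cancel_left, Nat.mod_add_mod, ← Nat.add_assoc]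
  obtain ⟨g₀, hg₀, ⟨x₁, hx₁⟩, ⟨x₂, hx₂⟩⟩ := hmeet
  have hx₁B : x₁ ∈ ⇑g₀ '' B₀ := hx₁.1
  have hx₁n : (x₁ : ℕ) < n := hx₁.2
  have hx₂B : x₂ ∈ ⇑g₀ '' B₀ := hx₂.1
  have hx₂n : n ≤ (x₂ : ℕ) := hx₂.2
  set B : Set (Fin (n + m)) := ⇑g₀ '' B₀ with hBdef
  have himg : ∀ (g h : Equiv.Perm (Fin (n + m))) (s : Set (Fin (n + m))),
      ⇑(g * h) '' s = ⇑g '' (⇑h '' s) := by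
    intro g h s
    rw [Equiv.Perm.coe_mul, Set.image_comp]
  have hinj : ∀ (g : Equiv.Perm (Fin (n + m))) (s t : Set (Fin (n + m))),
      ⇑g '' s = ⇑g '' t → s = t := by
    intro g s t h
    exact (Set.image_injective.mpr g.injective) h
  -- pairwise: two translates are equal or disjoint
  have hpair : ∀ g ∈ G, ∀ h ∈ G,
      ⇑g '' B₀ = ⇑h '' B₀ ∨ Disjoint (⇑g '' B₀) (⇑h '' B₀) := by
    intro g hg h hh
    rcases hblock (h⁻¹ * g) (mul_mem (inv_mem hh) hg) with heq | hdisj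
    · left
      have := congrArg (Set.image ⇑h) heq
      rwa [← himg, mul_inv_cancel_left] at this
    · right
      have h2 := Set.disjoint_image_of_injective h.injective hdisj
      rwa [← himg, mul_inv_cancel_left] at h2
  have hσk : ∀ k : ℕ, σ ^ k ∈ G := fun k => pow_mem hσG k
  -- block property for translates σ^j '' B
  have hblockB2 : ∀ j t : ℕ, ((⇑(σ ^ t) '' (⇑(σ ^ j) '' B)) ∩ (⇑(σ ^ j) '' B)).Nonempty →
      ⇑(σ ^ t) '' (⇑(σ ^ j) '' B) = ⇑(σ ^ j) '' B := by
    intro j t hne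
    have e1 : ⇑(σ ^ t * (σ ^ j * g₀)) '' B₀ = ⇑(σ ^ t) '' (⇑(σ ^ j) '' B) := by
      rw [himg, himg]
    have e2 : ⇑(σ ^ j * g₀) '' B₀ = ⇑(σ ^ j) '' B := by rw [himg]
    rcases hpair (σ ^ t * (σ ^ j * g₀)) (mul_mem (hσk t) (mul_mem (hσk j) hg₀))
        (σ ^ j * g₀) (mul_mem (hσk j) hg₀) with h | h
    · rw [← e1, ← e2]; exact h
    · rw [e1, e2] at h
      exact absurd (Set.disjoint_iff_inter_eq_empty.mp h) (by
        intro hc; rw [hc] at hne; exact Set.not_nonempty_empty hne)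
  have hstep : ∀ t : ℕ, ((⇑(σ ^ t) '' B) ∩ B).Nonempty → ⇑(σ ^ t) '' B = B := by
    intro t hne
    have e0 : ⇑(σ ^ (0 : ℕ)) '' B = B := by simp
    have := hblockB2 0 t (by rwa [e0])
    rwa [e0] at this
  -- σ^n and σ^m fix B
  have hBn : ⇑(σ ^ n) '' B = B := by
    apply hstep
    refine ⟨x₁, ⟨x₁, hx₁B, ?_⟩, hx₁B⟩
    apply Fin.ext
    rw [hpow n x₁, if_pos hx₁n, Nat.add_mod_right, Nat.mod_eq_of_lt hx₁n]
  have hBm : ⇑(σ ^ m) '' B = B := by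
    apply hstep
    refine ⟨x₂, ⟨x₂, hx₂B, ?_⟩, hx₂B⟩
    apply Fin.ext
    have h2 : (x₂ : ℕ) - n < m := by have := x₂.isLt; omega
    rw [hpow m x₂, if_neg (not_lt.mpr hx₂n), Nat.add_mod_right, Nat.mod_eq_of_lt h2]
    omega
  -- the minimal period d
  have hex : ∃ k, 0 < k ∧ ⇑(σ ^ k) '' B = B := ⟨n, hn', hBn⟩
  set d := Nat.find hex with hddef
  obtain ⟨hdpos, hdB⟩ := Nat.find_spec hex
  have hmin : ∀ k, 0 < k → k < d → ¬(⇑(σ ^ k) '' B = B) := by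
    intro k hk hlt h
    exact Nat.find_min hex hlt ⟨hk, h⟩
  have hmulB : ∀ q : ℕ, ⇑(σ ^ (d * q)) '' B = B := by
    intro q
    induction q with
    | zero => simp
    | succ q ih =>
      have : d * (q + 1) = d * q + d := by ring
      rw [this, pow_add, himg, hdB, ih]
  have hdvd : ∀ t : ℕ, ⇑(σ ^ t) '' B = B ↔ d ∣ t := by
    intro t
    constructor
    · intro h
      have e : d * (t / d) + t % d = t := Nat.div_add_mod t d
      have h3 : ⇑(σ ^ (d * (t / d))) '' (⇑(σ ^ (t % d)) '' B) = B := by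
        rw [← himg, ← pow_add, e, h]
      have h4 : ⇑(σ ^ (t % d)) '' B = B := by
        apply hinj (σ ^ (d * (t / d)))
        rw [h3, hmulB (t / d)]
      by_contra hnd
      have h0 : 0 < t % d :=
        Nat.pos_of_ne_zero (fun h0 => hnd (Nat.dvd_of_mod_eq_zero h0))
      exact hmin _ h0 (Nat.mod_lt _ hdpos) h4
    · rintro ⟨q, rfl⟩; exact hmulB q
  have hdn : d ∣ n := (hdvd n).mp hBn
  have hdm : d ∣ m := (hdvd m).mp hBm
  -- period d for each translate σ^j '' B
  have hdvd' : ∀ j t : ℕ, ⇑(σ ^ t) '' (⇑(σ ^ j) '' B) = ⇑(σ ^ j) '' B ↔ d ∣ t := by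
    intro j t
    have e : ⇑(σ ^ t) '' (⇑(σ ^ j) '' B) = ⇑(σ ^ j) '' (⇑(σ ^ t) '' B) := by
      rw [← himg (σ ^ t) (σ ^ j) B, ← himg (σ ^ j) (σ ^ t) B, ← pow_add, ← pow_add,
        Nat.add_comm t j]
    rw [e]
    constructor
    · intro h
      exact (hdvd t).mp (hinj (σ ^ j) _ _ h)
    · intro h
      rw [(hdvd t).mpr h]
  -- key characterization of σ^j '' B
  have key : ∀ (j : ℕ) (x : Fin (n + m)), x ∈ ⇑(σ ^ j) '' B ↔
      (((x : ℕ) < n ∧ (x : ℕ) % d = ((x₁ : ℕ) + j) % d) ∨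
        (n ≤ (x : ℕ) ∧ ((x : ℕ) - n) % d = ((x₂ : ℕ) - n + j) % d)) := by
    intro j x
    have hajlt : ((x₁ : ℕ) + j) % n < n := Nat.mod_lt _ hn'
    have hajmod : (((x₁ : ℕ) + j) % n) % d = ((x₁ : ℕ) + j) % d :=
      Nat.mod_mod_of_dvd _ hdn
    have hcjlt : ((x₂ : ℕ) - n + j) % m < m := Nat.mod_lt _ hm'
    have hcjmod : (((x₂ : ℕ) - n + j) % m) % d = ((x₂ : ℕ) - n + j) % d :=
      Nat.mod_mod_of_dvd _ hdm
    have hx₁mem : (σ ^ j) x₁ ∈ ⇑(σ ^ j) '' B := Set.mem_image_of_mem _ hx₁B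
    have hx₂mem : (σ ^ j) x₂ ∈ ⇑(σ ^ j) '' B := Set.mem_image_of_mem _ hx₂B
    have haj : ((σ ^ j) x₁ : ℕ) = ((x₁ : ℕ) + j) % n := by
      rw [hpow j x₁, if_pos hx₁n]
    have hcj : ((σ ^ j) x₂ : ℕ) = n + (((x₂ : ℕ) - n + j) % m) := by
      rw [hpow j x₂, if_neg (not_lt.mpr hx₂n)]
    constructor
    · intro hx
      by_cases hxn : (x : ℕ) < n
      · left
        refine ⟨hxn, ?_⟩
        set t : ℕ := (x : ℕ) + (n - ((x₁ : ℕ) + j) % n) with htdef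
        have happ : (σ ^ t) ((σ ^ j) x₁) = x := by
          apply Fin.ext
          rw [hpow t ((σ ^ j) x₁), haj, if_pos hajlt]
          have e : ((x₁ : ℕ) + j) % n + t = (x : ℕ) + n := by omega
          rw [e, Nat.add_mod_right, Nat.mod_eq_of_lt hxn]
        have hne : ((⇑(σ ^ t) '' (⇑(σ ^ j) '' B)) ∩ (⇑(σ ^ j) '' B)).Nonempty :=
          ⟨x, ⟨(σ ^ j) x₁, hx₁mem, happ⟩, hx⟩
        have hdt : d ∣ t := (hdvd' j t).mp (hblockB2 j t hne)
        have e2 : (x : ℕ) + n = ((x₁ : ℕ) + j) % n + t := by omega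
        have := helper_mod_eq hdn hdt e2
        rw [hajmod] at this
        exact this
      · right
        refine ⟨not_lt.mp hxn, ?_⟩
        set t : ℕ := ((x : ℕ) - n) + (m - ((x₂ : ℕ) - n + j) % m) with htdef
        have hxlt : (x : ℕ) - n < m := by have := x.isLt; omega
        have happ : (σ ^ t) ((σ ^ j) x₂) = x := by
          apply Fin.ext
          rw [hpow t ((σ ^ j) x₂), hcj]
          have h2 : ¬ (n + (((x₂ : ℕ) - n + j) % m) < n) := by omega
          rw [if_neg h2, Nat.add_sub_cancel_left]
          have e : ((x₂ : ℕ) - n + j) % m + t = ((x : ℕ) - n) + m := by omega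
          rw [e, Nat.add_mod_right, Nat.mod_eq_of_lt hxlt]
          omega
        have hne : ((⇑(σ ^ t) '' (⇑(σ ^ j) '' B)) ∩ (⇑(σ ^ j) '' B)).Nonempty :=
          ⟨x, ⟨(σ ^ j) x₂, hx₂mem, happ⟩, hx⟩
        have hdt : d ∣ t := (hdvd' j t).mp (hblockB2 j t hne)
        have e2 : ((x : ℕ) - n) + m = ((x₂ : ℕ) - n + j) % m + t := by omega
        have := helper_mod_eq hdm hdt e2
        rw [hcjmod] at this
        exact this
    · rintro (⟨hxn, hxmod⟩ | ⟨hxn, hxmod⟩)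
      · set t : ℕ := (x : ℕ) + (n - ((x₁ : ℕ) + j) % n) with htdef
        have happ : (σ ^ t) ((σ ^ j) x₁) = x := by
          apply Fin.ext
          rw [hpow t ((σ ^ j) x₁), haj, if_pos hajlt]
          have e : ((x₁ : ℕ) + j) % n + t = (x : ℕ) + n := by omega
          rw [e, Nat.add_mod_right, Nat.mod_eq_of_lt hxn]
        have hdt : d ∣ t := by
          apply helper_dvd hdn (x := (x : ℕ)) (a := ((x₁ : ℕ) + j) % n)
          · omega
          · rw [hajmod, ← hxmod]
        have heq : ⇑(σ ^ t) '' (⇑(σ ^ j) '' B) = ⇑(σ ^ j) '' B := (hdvd' j t).mpr hdt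
        rw [← heq]
        exact ⟨(σ ^ j) x₁, hx₁mem, happ⟩
      · set t : ℕ := ((x : ℕ) - n) + (m - ((x₂ : ℕ) - n + j) % m) with htdef
        have hxlt : (x : ℕ) - n < m := by have := x.isLt; omega
        have happ : (σ ^ t) ((σ ^ j) x₂) = x := by
          apply Fin.ext
          rw [hpow t ((σ ^ j) x₂), hcj]
          have h2 : ¬ (n + (((x₂ : ℕ) - n + j) % m) < n) := by omega
          rw [if_neg h2, Nat.add_sub_cancel_left]
          have e : ((x₂ : ℕ) - n + j) % m + t = ((x : ℕ) - n) + m := by omega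
          rw [e, Nat.add_mod_right, Nat.mod_eq_of_lt hxlt]
          omega
        have hdt : d ∣ t := by
          apply helper_dvd hdm (x := (x : ℕ) - n) (a := ((x₂ : ℕ) - n + j) % m)
          · omega
          · rw [hcjmod, ← hxmod]
        have heq : ⇑(σ ^ t) '' (⇑(σ ^ j) '' B) = ⇑(σ ^ j) '' B := (hdvd' j t).mpr hdt
        rw [← heq]
        exact ⟨(σ ^ j) x₂, hx₂mem, happ⟩
  -- coverage
  have hcov : ∀ x : Fin (n + m), ∃ j : ℕ, x ∈ ⇑(σ ^ j) '' B := by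
    intro x
    by_cases hxn : (x : ℕ) < n
    · refine ⟨(x : ℕ) + (n - (x₁ : ℕ)), (key _ x).mpr (Or.inl ⟨hxn, ?_⟩)⟩
      apply helper_mod_eq hdn (dvd_zero d)
      omega
    · refine ⟨((x : ℕ) - n) + (m - ((x₂ : ℕ) - n)), (key _ x).mpr
        (Or.inr ⟨not_lt.mp hxn, ?_⟩)⟩
      apply helper_mod_eq hdm (dvd_zero d)
      have := x.isLt
      have := x₂.isLt
      omega
  -- every translate of B₀ is some σ^j '' B
  have htrans_eq : ∀ g ∈ G, ∃ j : ℕ, ⇑g '' B₀ = ⇑(σ ^ j) '' B := by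
    intro g hg
    have hB₀ne' : B₀.Nonempty := by
      rcases Set.eq_empty_or_nonempty B₀ with h | h
      · rw [h] at hB₀big; simp at hB₀big
      · exact h
    obtain ⟨y, hy⟩ := hB₀ne'
    obtain ⟨j, hj⟩ := hcov (g y)
    refine ⟨j, ?_⟩
    have e2 : ⇑(σ ^ j * g₀) '' B₀ = ⇑(σ ^ j) '' B := by rw [himg]
    rcases hpair g hg (σ ^ j * g₀) (mul_mem (hσk j) hg₀) with h | h
    · rw [h, e2]
    · exfalso
      rw [e2] at h
      exact Set.disjoint_left.mp h (Set.mem_image_of_mem _ hy) hj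
  constructor
  · -- every block meets both parts
    intro g hg
    obtain ⟨j, hj⟩ := htrans_eq g hg
    rw [hj]
    constructor
    · refine ⟨(σ ^ j) x₁, Set.mem_image_of_mem _ hx₁B, ?_⟩
      show ((σ ^ j) x₁ : ℕ) < n
      rw [hpow j x₁, if_pos hx₁n]
      exact Nat.mod_lt _ hn'
    · refine ⟨(σ ^ j) x₂, Set.mem_image_of_mem _ hx₂B, ?_⟩
      show n ≤ ((σ ^ j) x₂ : ℕ)
      rw [hpow j x₂, if_neg (not_lt.mpr hx₂n)]
      exact Nat.le_add_right _ _
  · -- the congruence description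
    set r : ℕ := (((x₂ : ℕ) - n) + (d - (x₁ : ℕ) % d)) % d with hrdef
    refine ⟨d, r, Nat.dvd_gcd hdn hdm, Nat.mod_lt _ hdpos, ?_⟩
    intro g hg
    obtain ⟨j, hj⟩ := htrans_eq g hg
    refine ⟨(x₁ : ℕ) + j, ?_⟩
    have hr : ((x₁ : ℕ) + j + r) % d = ((x₂ : ℕ) - n + j) % d := by
      have hw : (x₁ : ℕ) % d < d := Nat.mod_lt _ hdpos
      have hx₁split : d * ((x₁ : ℕ) / d) + (x₁ : ℕ) % d = (x₁ : ℕ) := Nat.div_add_mod _ _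
      have e1 : ((x₁ : ℕ) + j + r) % d
          = ((x₁ : ℕ) + j + (((x₂ : ℕ) - n) + (d - (x₁ : ℕ) % d))) % d := by
        rw [hrdef, Nat.add_mod, Nat.mod_mod_of_dvd _ (dvd_refl d), ← Nat.add_mod]
      rw [e1]
      apply helper_mod_eq (dvd_zero d)
        (⟨(x₁ : ℕ) / d + 1, rfl⟩ : d ∣ d * ((x₁ : ℕ) / d + 1))
      have e3 : d * ((x₁ : ℕ) / d + 1) = d * ((x₁ : ℕ) / d) + d := by ring
      rw [e3]
      omega
    rw [hj]
    ext x
    rw [key j x, hr]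
    simp only [Set.mem_setOf_eq]
end

section
/- Let P, Q ∈ ℂ[z,z⁻¹] be Laurent polynomials and let M = max_{|z|=1} |P(z)|. Then the following are equivalent: (1) ∮_{|z|=1} P(z)^k Q'(z) dz = 0 for every integer k ≥ 0; (2) ∮_{|z|=1} Q(z) P'(z)/(P(z) − t) dz = 0 for every t ∈ ℂ with |t| > M. -/
open Complex Metric Set Finset MeasureTheory intervalIntegral Real

lemma circleMap_ne_zero' (θ : ℝ) : circleMap 0 1 θ ≠ 0 := by
  intro h
  have := norm_circleMap_zero 1 θ
  rw [h] at this; simp at this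

/-- Derivative of a Laurent polynomial away from 0. -/
lemma laurent_hasDerivAt (s : Finset ℤ) (c : ℤ → ℂ) {z : ℂ} (hz : z ≠ 0) :
    HasDerivAt (fun z : ℂ => ∑ k ∈ s, c k * z ^ k)
      (∑ k ∈ s, c k * ((k : ℂ) * z ^ (k - 1))) z := by
  apply HasDerivAt.fun_sum
  intro k _
  exact (hasDerivAt_zpow k z (Or.inl hz)).const_mul (c k)

lemma laurent_continuousOn (s : Finset ℤ) (c : ℤ → ℂ) :
    ContinuousOn (fun z : ℂ => ∑ k ∈ s, c k * z ^ k) {(0 : ℂ)}ᶜ := by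
  apply continuousOn_finset_sum
  intro k _
  exact continuousOn_const.mul ((continuousOn_zpow₀ k).mono (by simp [Set.subset_def]))

/-- The circle integral of the derivative of a function differentiable off `0` vanishes. -/
lemma circleIntegral_deriv_eq_zero {g g' : ℂ → ℂ}
    (hg : ∀ z : ℂ, z ≠ 0 → HasDerivAt g (g' z) z)
    (hcont : ContinuousOn g' {(0 : ℂ)}ᶜ) :
    (∮ z in C(0, 1), g' z) = 0 := by
  have key : ∀ θ ∈ Set.uIcc (0 : ℝ) (2 * π), HasDerivAt (fun θ => g (circleMap 0 1 θ))
      (deriv (circleMap 0 1) θ • g' (circleMap 0 1 θ)) θ := by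
    intro θ _
    rw [deriv_circleMap]
    have h1 := (hg _ (circleMap_ne_zero' θ)).comp θ (hasDerivAt_circleMap 0 1 θ)
    simpa [mul_comm, smul_eq_mul, Function.comp_def] using h1
  have hcont2 : Continuous fun θ : ℝ => deriv (circleMap 0 1) θ • g' (circleMap 0 1 θ) := by
    simp only [deriv_circleMap]
    exact (Continuous.mul (continuous_circleMap 0 1) continuous_const).smul
      (hcont.comp_continuous (continuous_circleMap 0 1) (fun θ => circleMap_ne_zero' θ))
  rw [circleIntegral,
    intervalIntegral.integral_eq_sub_of_hasDerivAt key (hcont2.intervalIntegrable 0 (2 * π))]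
  have : circleMap 0 1 (2 * π) = circleMap 0 1 0 := by
    simpa using (periodic_circleMap 0 1) 0
  rw [this, sub_self]

lemma laurent_deriv_continuousOn (s : Finset ℤ) (c : ℤ → ℂ) :
    ContinuousOn (fun z : ℂ => ∑ k ∈ s, c k * ((k : ℂ) * z ^ (k - 1))) {(0 : ℂ)}ᶜ := by
  apply continuousOn_finset_sum
  intro k _
  exact continuousOn_const.mul (continuousOn_const.mul
    ((continuousOn_zpow₀ (k - 1)).mono (by simp [Set.subset_def])))

set_option maxHeartbeats 2000000 in
/-- Proposition, equivalence (1) ⇔ (3).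
For Laurent polynomials `P, Q` (given by their coefficients `a, b` supported on `sP, sQ`)
and `M = max_{|z|=1} |P(z)|`, the vanishing of all moments
`∮_{|z|=1} P(z)^k Q'(z) dz = 0`, `k ≥ 0`, is equivalent to
`∮_{|z|=1} Q(z) P'(z)/(P(z) - t) dz = 0` for all `t` with `|t| > M`. -/
theorem moments_iff_abelian_integral
    (sP sQ : Finset ℤ) (a b : ℤ → ℂ)
    (P : ℂ → ℂ) (hP : P = fun z => ∑ k ∈ sP, a k * z ^ k)
    (Q : ℂ → ℂ) (hQ : Q = fun z => ∑ k ∈ sQ, b k * z ^ k)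
    (M : ℝ) (hM : M = sSup ((fun z => ‖P z‖) '' Metric.sphere (0 : ℂ) 1)) :
    (∀ k : ℕ, (∮ z in C(0, 1), P z ^ k * deriv Q z) = 0) ↔
    (∀ t : ℂ, M < ‖t‖ → (∮ z in C(0, 1), Q z * deriv P z / (P z - t)) = 0) := by
  -- basic notation
  set dP : ℂ → ℂ := fun z => ∑ k ∈ sP, a k * ((k : ℂ) * z ^ (k - 1)) with hdP_def
  set dQ : ℂ → ℂ := fun z => ∑ k ∈ sQ, b k * ((k : ℂ) * z ^ (k - 1)) with hdQ_def
  have hsub : Metric.sphere (0 : ℂ) 1 ⊆ {(0 : ℂ)}ᶜ := by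
    intro z hz h0
    rw [Set.mem_singleton_iff.mp h0] at hz
    simp at hz
  have hzne : ∀ z ∈ Metric.sphere (0 : ℂ) 1, z ≠ 0 := fun z hz => hsub hz
  have hdP : ∀ z : ℂ, z ≠ 0 → HasDerivAt P (dP z) z := by
    intro z hz; rw [hP]; exact laurent_hasDerivAt sP a hz
  have hdQ : ∀ z : ℂ, z ≠ 0 → HasDerivAt Q (dQ z) z := by
    intro z hz; rw [hQ]; exact laurent_hasDerivAt sQ b hz
  have hderivP : ∀ z : ℂ, z ≠ 0 → deriv P z = dP z := fun z hz => (hdP z hz).deriv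
  have hderivQ : ∀ z : ℂ, z ≠ 0 → deriv Q z = dQ z := fun z hz => (hdQ z hz).deriv
  have hPcont : ContinuousOn P {(0 : ℂ)}ᶜ := by rw [hP]; exact laurent_continuousOn sP a
  have hQcont : ContinuousOn Q {(0 : ℂ)}ᶜ := by rw [hQ]; exact laurent_continuousOn sQ b
  have hdPcont : ContinuousOn dP {(0 : ℂ)}ᶜ := laurent_deriv_continuousOn sP a
  have hdQcont : ContinuousOn dQ {(0 : ℂ)}ᶜ := laurent_deriv_continuousOn sQ b
  -- bound on |P| over the circle
  have hbdd : BddAbove ((fun z => ‖P z‖) '' Metric.sphere (0 : ℂ) 1) :=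
    ((isCompact_sphere (0 : ℂ) 1).image_of_continuousOn
      (continuous_norm.comp_continuousOn (hPcont.mono hsub))).bddAbove
  have hle : ∀ z ∈ Metric.sphere (0 : ℂ) 1, ‖P z‖ ≤ M := fun z hz =>
    hM ▸ le_csSup hbdd ⟨z, hz, rfl⟩
  have hM0 : (0 : ℝ) ≤ M :=
    le_trans (norm_nonneg _) (hle 1 (by simp))
  -- the moments of `Q dP P^k`
  set ck : ℕ → ℂ := fun k => ∮ z in C(0, 1), Q z * dP z * P z ^ k with hck_def
  have hcont_int : ∀ f : ℂ → ℂ, ContinuousOn f {(0 : ℂ)}ᶜ → CircleIntegrable f 0 1 :=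
    fun f hf => (hf.mono hsub).circleIntegrable zero_le_one
  have hQdPPk_cont : ∀ k : ℕ, ContinuousOn (fun z => Q z * dP z * P z ^ k) {(0 : ℂ)}ᶜ :=
    fun k => (hQcont.mul hdPcont).mul (hPcont.pow k)
  -- Step A : `∮ P^(k+1) Q' = -(k+1) ck k`
  have hA : ∀ k : ℕ, (∮ z in C(0, 1), P z ^ (k + 1) * deriv Q z)
      = -(((k : ℂ) + 1) * ck k) := by
    intro k
    set D : ℂ → ℂ := fun z => ((k : ℂ) + 1) * (Q z * dP z * P z ^ k) + P z ^ (k + 1) * dQ z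
      with hD_def
    have hDz : ∀ z : ℂ, z ≠ 0 → HasDerivAt (fun z => P z ^ (k + 1) * Q z) (D z) z := by
      intro z hz
      have h1 := ((hdP z hz).pow (k + 1)).mul (hdQ z hz)
      refine h1.congr_deriv ?_
      show _ = D z
      rw [hD_def]
      push_cast
      simp only [Pi.pow_apply]
      ring
    have hDcont : ContinuousOn D {(0 : ℂ)}ᶜ :=
      (continuousOn_const.mul (hQdPPk_cont k)).add ((hPcont.pow (k + 1)).mul hdQcont)
    have hD0 : (∮ z in C(0, 1), D z) = 0 := circleIntegral_deriv_eq_zero hDz hDcont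
    have hsplit : (∮ z in C(0, 1), P z ^ (k + 1) * dQ z)
        = (∮ z in C(0, 1), D z) - ∮ z in C(0, 1), ((k : ℂ) + 1) * (Q z * dP z * P z ^ k) := by
      rw [← circleIntegral.integral_sub (hcont_int D hDcont)
        (hcont_int (fun z => ((k : ℂ) + 1) * (Q z * dP z * P z ^ k))
          (continuousOn_const.mul (hQdPPk_cont k)))]
      refine circleIntegral.integral_congr zero_le_one fun z hz => ?_
      simp only [hD_def]
      ring
    have hcongr : (∮ z in C(0, 1), P z ^ (k + 1) * deriv Q z)
        = ∮ z in C(0, 1), P z ^ (k + 1) * dQ z :=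
      circleIntegral.integral_congr zero_le_one fun z hz => by
        rw [hderivQ z (hzne z hz)]
    rw [hcongr, hsplit, hD0, circleIntegral.integral_const_mul]
    ring
  -- Step B : `∮ Q' = 0`
  have hB : (∮ z in C(0, 1), P z ^ (0 : ℕ) * deriv Q z) = 0 := by
    have hcongr : (∮ z in C(0, 1), P z ^ (0 : ℕ) * deriv Q z) = ∮ z in C(0, 1), dQ z :=
      circleIntegral.integral_congr zero_le_one fun z hz => by
        rw [hderivQ z (hzne z hz)]; simp
    rw [hcongr]
    exact circleIntegral_deriv_eq_zero hdQ hdQcont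
  -- uniform bound on |Q dP| over the circle
  have hCbdd : BddAbove ((fun z => ‖Q z * dP z‖) '' Metric.sphere (0 : ℂ) 1) :=
    ((isCompact_sphere (0 : ℂ) 1).image_of_continuousOn
      (continuous_norm.comp_continuousOn ((hQcont.mul hdPcont).mono hsub))).bddAbove
  set Cb : ℝ := sSup ((fun z => ‖Q z * dP z‖) '' Metric.sphere (0 : ℂ) 1) with hCb
  have hCle : ∀ z ∈ Metric.sphere (0 : ℂ) 1, ‖Q z * dP z‖ ≤ Cb := fun z hz =>
    le_csSup hCbdd ⟨z, hz, rfl⟩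
  have hC0 : (0 : ℝ) ≤ Cb := le_trans (norm_nonneg _) (hCle 1 (by simp))
  have h2pi : (0 : ℝ) ≤ 2 * π := Real.two_pi_pos.le
  -- Step C : expansion of the abelian integral as a geometric series in `1/t`
  have hC : ∀ t : ℂ, M < ‖t‖ →
      HasSum (fun k : ℕ => ck k / t ^ (k + 1))
        (-(∮ z in C(0, 1), Q z * deriv P z / (P z - t))) := by
    intro t ht
    have htpos : 0 < ‖t‖ := lt_of_le_of_lt hM0 ht
    have ht0 : t ≠ 0 := by
      intro h; rw [h] at htpos; simp at htpos
    have hPt : ∀ z ∈ Metric.sphere (0 : ℂ) 1, P z - t ≠ 0 := by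
      intro z hz h
      rw [sub_eq_zero] at h
      have := hle z hz
      rw [h] at this
      exact absurd ht (not_lt.2 this)
    -- pointwise geometric series
    have hpt : ∀ θ : ℝ,
        HasSum (fun k : ℕ => Q (circleMap 0 1 θ) * dP (circleMap 0 1 θ) *
            P (circleMap 0 1 θ) ^ k / t ^ (k + 1))
          (-(Q (circleMap 0 1 θ) * dP (circleMap 0 1 θ) / (P (circleMap 0 1 θ) - t))) := by
      intro θ
      set z := circleMap 0 1 θ with hz_def
      have hzs : z ∈ Metric.sphere (0 : ℂ) 1 := circleMap_mem_sphere 0 zero_le_one θ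
      have hratio : ‖P z / t‖ < 1 := by
        rw [norm_div]
        rw [div_lt_one (by simpa using htpos)]
        exact lt_of_le_of_lt (hle z hzs) (by simpa using ht)
      have hgeom := hasSum_geometric_of_norm_lt_one hratio
      have h2 := hgeom.mul_left (Q z * dP z / t)
      have hfun : (fun k : ℕ => Q z * dP z / t * (P z / t) ^ k)
          = fun k : ℕ => Q z * dP z * P z ^ k / t ^ (k + 1) := by
        funext k
        rw [div_pow, div_mul_div_comm, ← pow_succ']
      have h1ne : (1 : ℂ) - P z / t ≠ 0 := by
        intro h
        rw [sub_eq_zero] at h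
        apply hPt z hzs
        rw [sub_eq_zero]
        field_simp at h
        rw [h]
      have hval : Q z * dP z / t * ((1 : ℂ) - P z / t)⁻¹
          = -(Q z * dP z / (P z - t)) := by
        rw [eq_comm, neg_eq_iff_eq_neg]
        field_simp
        rw [← div_neg, neg_sub]
      rw [hfun, hval] at h2
      exact h2
    -- the terms of the series, as functions on `[0, 2π]`
    set F : ℕ → ℝ → ℂ := fun k θ => deriv (circleMap 0 1) θ •
      (Q (circleMap 0 1 θ) * dP (circleMap 0 1 θ) * P (circleMap 0 1 θ) ^ k / t ^ (k + 1))
      with hF_def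
    set μ : MeasureTheory.Measure ℝ := MeasureTheory.volume.restrict (Set.Ioc (0 : ℝ) (2 * π))
      with hμ_def
    have hFcont : ∀ k, Continuous (F k) := by
      intro k
      simp only [hF_def, deriv_circleMap]
      exact ((continuous_circleMap 0 1).mul continuous_const).smul
        ((((hQdPPk_cont k).comp_continuous (continuous_circleMap 0 1)
          (fun θ => by simpa using circleMap_ne_zero' θ)).div_const _))
    have hFint : ∀ k, MeasureTheory.Integrable (F k) μ := fun k =>
      (hFcont k).integrableOn_Ioc
    have hFbound : ∀ k : ℕ, ∀ θ ∈ Set.Ioc (0 : ℝ) (2 * π),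
        ‖F k θ‖ ≤ Cb * M ^ k / ‖t‖ ^ (k + 1) := by
      intro k θ _
      have hzs : circleMap 0 1 θ ∈ Metric.sphere (0 : ℂ) 1 :=
        circleMap_mem_sphere 0 zero_le_one θ
      simp only [hF_def, norm_smul, deriv_circleMap]
      have h1 : ‖circleMap 0 1 θ * Complex.I‖ = 1 := by
        rw [norm_mul]
        simp
      rw [h1, one_mul, norm_div, norm_mul, norm_pow, norm_pow]
      gcongr <;>
        first
          | exact hCle _ hzs
          | exact norm_nonneg _
          | exact hle _ hzs
    have hnorm_int : ∀ k : ℕ, (∫ θ, ‖F k θ‖ ∂μ)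
        ≤ (2 * π * Cb / ‖t‖) * (M / ‖t‖) ^ k := by
      intro k
      have hconst : MeasureTheory.IntegrableOn
          (fun _ : ℝ => Cb * M ^ k / ‖t‖ ^ (k + 1))
          (Set.Ioc (0 : ℝ) (2 * π)) := by
        apply (MeasureTheory.integrableOn_const_iff (C := Cb * M ^ k / ‖t‖ ^ (k + 1))).2
        right
        rw [Real.volume_Ioc]
        exact ENNReal.ofReal_lt_top
      have hmono := MeasureTheory.setIntegral_mono_on (hFint k).norm hconst
        measurableSet_Ioc (hFbound k)
      have hconst_val : (∫ _ in Set.Ioc (0 : ℝ) (2 * π),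
          Cb * M ^ k / ‖t‖ ^ (k + 1)) =
          (2 * π) * (Cb * M ^ k / ‖t‖ ^ (k + 1)) := by
        rw [MeasureTheory.setIntegral_const, Real.volume_real_Ioc, sub_zero,
          max_eq_left h2pi, smul_eq_mul]
      refine le_trans (le_of_eq rfl) (le_trans hmono (le_of_eq ?_))
      rw [hconst_val, div_pow, pow_succ]
      field_simp
    have hsummable : Summable fun k : ℕ => ∫ θ, ‖F k θ‖ ∂μ := by
      refine Summable.of_nonneg_of_le
        (fun k => MeasureTheory.integral_nonneg fun θ => norm_nonneg _) hnorm_int ?_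
      exact (summable_geometric_of_lt_one (div_nonneg hM0 htpos.le)
        ((div_lt_one htpos).2 ht)).mul_left _
    have hswap := MeasureTheory.hasSum_integral_of_summable_integral_norm hFint hsummable
    have hlhs : ∀ k : ℕ, (∫ θ, F k θ ∂μ) = ck k / t ^ (k + 1) := by
      intro k
      have h1 : ck k = ∫ θ in Set.Ioc (0 : ℝ) (2 * π), deriv (circleMap 0 1) θ •
          (Q (circleMap 0 1 θ) * dP (circleMap 0 1 θ) * P (circleMap 0 1 θ) ^ k) := by
        show (∮ (z : ℂ) in C(0, 1), Q z * dP z * P z ^ k) = _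
        rw [circleIntegral]
        exact intervalIntegral.integral_of_le h2pi
      rw [h1]
      simp only [hF_def, smul_eq_mul, mul_div_assoc']
      rw [MeasureTheory.integral_div]
    have hrhs : (∫ θ, (∑' k, F k θ) ∂μ)
        = -(∮ z in C(0, 1), Q z * dP z / (P z - t)) := by
      have h1 : ∀ θ : ℝ, (∑' k, F k θ) = deriv (circleMap 0 1) θ •
          (-(Q (circleMap 0 1 θ) * dP (circleMap 0 1 θ) / (P (circleMap 0 1 θ) - t))) :=
        fun θ => ((hpt θ).const_smul _).tsum_eq
      rw [MeasureTheory.integral_congr_ae (MeasureTheory.ae_of_all μ h1)]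
      simp only [smul_neg]
      rw [MeasureTheory.integral_neg]
      congr 1
      rw [circleIntegral, intervalIntegral.integral_of_le h2pi]
    have hfun2 : (fun k : ℕ => ∫ θ, F k θ ∂μ) = fun k : ℕ => ck k / t ^ (k + 1) :=
      funext hlhs
    rw [hfun2, hrhs] at hswap
    have hcongr2 : (∮ z in C(0, 1), Q z * deriv P z / (P z - t))
        = ∮ z in C(0, 1), Q z * dP z / (P z - t) :=
      circleIntegral.integral_congr zero_le_one fun z hz => by
        rw [hderivP z (hzne z hz)]
    rw [hcongr2]
    exact hswap
  constructor
  · -- (1) → (3)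
    intro h t ht
    have hck0 : ∀ k : ℕ, ck k = 0 := by
      intro k
      have h1 := (hA k).symm.trans (h (k + 1))
      rw [neg_eq_zero, mul_eq_zero] at h1
      rcases h1 with h1 | h1
      · exact absurd h1 (Nat.cast_add_one_ne_zero k)
      · exact h1
    have h1 := hC t ht
    simp only [hck0, zero_div] at h1
    have h2 := h1.unique hasSum_zero
    rwa [neg_eq_zero] at h2
  · -- (3) → (1)
    intro h
    -- uniform bound on the moments
    have hbound : ∀ n : ℕ, ‖ck n‖ ≤ 2 * π * (Cb * M ^ n) := by
      intro n
      have h1 : ∀ z ∈ Metric.sphere (0 : ℂ) 1, ‖Q z * dP z * P z ^ n‖ ≤ Cb * M ^ n := by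
        intro z hz
        rw [norm_mul, norm_pow]
        gcongr <;>
          first
            | exact hCle _ hz
            | exact norm_nonneg _
            | exact hle _ hz
      have := circleIntegral.norm_integral_le_of_norm_le_const zero_le_one h1
      simpa using this
    -- the coefficients `ck` define a power series with positive radius
    set p : FormalMultilinearSeries ℂ ℂ ℂ := FormalMultilinearSeries.ofScalars ℂ ck with hp_def
    have hMpos : (0 : ℝ) < M + 1 := by linarith
    set r : NNReal := ⟨(M + 1)⁻¹, by positivity⟩ with hr_def
    have hr0 : 0 < r := by
      rw [← NNReal.coe_lt_coe]
      show (0 : ℝ) < (M + 1)⁻¹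
      positivity
    have hrle : (r : ENNReal) ≤ p.radius := by
      apply p.le_radius_of_bound (2 * π * Cb)
      intro n
      have h1 : ‖p n‖ = ‖ck n‖ := by
        rw [hp_def]; exact FormalMultilinearSeries.ofScalars_norm ℂ ck n
      rw [h1]
      have h2 : ((r : NNReal) : ℝ) ^ n = ((M + 1)⁻¹ : ℝ) ^ n := rfl
      rw [h2]
      calc ‖ck n‖ * ((M + 1)⁻¹ : ℝ) ^ n ≤ 2 * π * (Cb * M ^ n) * ((M + 1)⁻¹ : ℝ) ^ n :=
            mul_le_mul_of_nonneg_right (hbound n) (by positivity)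
        _ = 2 * π * Cb * (M / (M + 1)) ^ n := by
            rw [div_pow, div_eq_mul_inv, inv_pow]
            ring
        _ ≤ 2 * π * Cb * 1 :=
            mul_le_mul_of_nonneg_left
              (pow_le_one₀ (by positivity) (by rw [div_le_one hMpos]; linarith))
              (by positivity)
        _ = 2 * π * Cb := by ring
    have hradpos : (0 : ENNReal) < p.radius :=
      lt_of_lt_of_le (by exact_mod_cast hr0) hrle
    have hat : HasFPowerSeriesAt p.sum p 0 :=
      (p.hasFPowerSeriesOnBall hradpos).hasFPowerSeriesAt
    have hsum_eq : ∀ s : ℂ, p.sum s = ∑' n : ℕ, ck n * s ^ n := by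
      intro s
      rw [FormalMultilinearSeries.sum]
      exact tsum_congr fun n => by
        rw [hp_def, FormalMultilinearSeries.ofScalars_apply_eq, smul_eq_mul]
    have hzero : ∀ s : ℂ, s ≠ 0 → ‖s‖ < (M + 1)⁻¹ → p.sum s = 0 := by
      intro s hs0 hslt
      have hspos : 0 < ‖s‖ := norm_pos_iff.mpr hs0
      have htabs : M < ‖s⁻¹‖ := by
        rw [norm_inv]
        have h1 : M + 1 ≤ (‖s‖)⁻¹ := by
          rw [le_inv_comm₀ hMpos hspos]
          exact hslt.le
        linarith
      have hsum := hC s⁻¹ htabs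
      rw [h s⁻¹ htabs, neg_zero] at hsum
      have hfun : (fun k : ℕ => ck k / (s⁻¹) ^ (k + 1)) = fun k : ℕ => s * (ck k * s ^ k) := by
        funext k
        rw [div_eq_mul_inv, ← inv_pow, inv_inv, pow_succ']
        ring
      rw [hfun] at hsum
      have hsum2 := hsum.mul_left s⁻¹
      simp only [← mul_assoc, inv_mul_cancel₀ hs0, one_mul, mul_zero] at hsum2
      rw [hsum_eq s]
      exact hsum2.tsum_eq
    have hball : Metric.ball (0 : ℂ) (M + 1)⁻¹ ∈ nhds (0 : ℂ) :=
      Metric.ball_mem_nhds _ (by positivity)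
    have h00 : p.sum 0 = 0 := by
      have h1 : Filter.Tendsto p.sum (nhdsWithin (0 : ℂ) {(0 : ℂ)}ᶜ) (nhds (p.sum 0)) :=
        hat.continuousAt.tendsto.mono_left nhdsWithin_le_nhds
      have hev : ∀ᶠ s in nhdsWithin (0 : ℂ) {(0 : ℂ)}ᶜ, p.sum s = 0 := by
        filter_upwards [self_mem_nhdsWithin, nhdsWithin_le_nhds hball] with s hs1 hs2
        exact hzero s hs1 (by simpa [Complex.dist_eq] using hs2)
      have h2 : Filter.Tendsto p.sum (nhdsWithin (0 : ℂ) {(0 : ℂ)}ᶜ) (nhds 0) :=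
        Filter.Tendsto.congr' (Filter.EventuallyEq.symm hev) tendsto_const_nhds
      exact tendsto_nhds_unique h1 h2
    have hev2 : p.sum =ᶠ[nhds (0 : ℂ)] 0 := by
      filter_upwards [hball] with s hs
      by_cases hs0 : s = 0
      · rw [hs0]; exact h00
      · exact hzero s hs0 (by simpa [Complex.dist_eq] using hs)
    have hp0 : p = 0 := hat.eq_zero_of_eventually hev2
    have hck0 : ∀ n : ℕ, ck n = 0 := by
      intro n
      have h1 : p n = 0 := by rw [hp0]; rfl
      exact (FormalMultilinearSeries.ofScalars_eq_zero ℂ n).mp h1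
    intro k
    cases k with
    | zero => exact hB
    | succ n =>
      rw [hA n, hck0 n, mul_zero, neg_zero]
end

section
/- Let l ≥ 1 be an integer, let P̃, Q̃ ∈ ℂ[z,z⁻¹] be Laurent polynomials, and let R ∈ ℂ[z,z⁻¹] be a Laurent polynomial whose coefficient of z^{jl} is zero for every integer j. Set P(z) = P̃(z^l) and Q(z) = Q̃(z^l) + R(z). Then ∮_{|z|=1} P(z)^k Q'(z) dz = 0 for every integer k ≥ 0 if and only if ∮_{|z|=1} P̃(z)^k Q̃'(z) dz = 0 for every integer k ≥ 0. -/
open Complex Real Set Function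




lemma mrp_cont_integrand {f : ℂ → ℂ} (hf : ContinuousOn f (Metric.sphere (0:ℂ) 1)) :
    Continuous fun θ : ℝ => deriv (circleMap 0 1) θ • f (circleMap 0 1 θ) := by
  simp only [deriv_circleMap]
  exact ((continuous_circleMap 0 1).mul continuous_const).smul
    (hf.comp_continuous (continuous_circleMap 0 1)
      (fun θ => circleMap_mem_sphere 0 zero_le_one θ))

lemma mrp_circleMap_pow (θ : ℝ) (n : ℕ) :
    circleMap 0 1 θ ^ n = circleMap 0 1 (n * θ) := by
  simp only [circleMap_zero, one_mul]
  push_cast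
  rw [mul_assoc, Complex.exp_nat_mul]
  simp

lemma mrp_sphere_pow {z : ℂ} (hz : z ∈ Metric.sphere (0:ℂ) 1) (n : ℕ) :
    z ^ n ∈ Metric.sphere (0:ℂ) 1 := by
  rw [mem_sphere_zero_iff_norm] at hz ⊢
  simp [norm_pow, hz]


lemma mrp_contOn_sum {ι} (s : Finset ι) (f : ι → ℂ → ℂ) (t : Set ℂ)
    (h : ∀ i ∈ s, ContinuousOn (f i) t) :
    ContinuousOn (fun z => ∑ i ∈ s, f i z) t := by
  classical
  induction s using Finset.induction_on with
  | empty => simpa using continuousOn_const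
  | insert a s2 hx ih =>
      simp only [Finset.sum_insert hx]
      exact (h a (by simp)).add (ih (fun i hi => h i (by simp [hi])))

lemma mrp_contOn_lsum {ι} (s : Finset ι) (d : ι → ℂ) (e : ι → ℤ) :
    ContinuousOn (fun z : ℂ => ∑ i ∈ s, d i * z ^ (e i)) {(0:ℂ)}ᶜ := by
  refine mrp_contOn_sum s _ _ (fun i _ => continuousOn_const.mul ?_)
  exact (continuousOn_id.zpow₀ (e i) (fun z hz => Or.inl hz))

lemma mrp_diff_lsum {ι} (s : Finset ι) (d : ι → ℂ) (e : ι → ℤ) {z : ℂ} (hz : z ≠ 0) :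
    DifferentiableAt ℂ (fun z : ℂ => ∑ i ∈ s, d i * z ^ (e i)) z :=
  DifferentiableAt.fun_sum (fun i _ => (differentiableAt_zpow.mpr (Or.inl hz)).const_mul _)

lemma mrp_deriv_lsum {ι} (s : Finset ι) (d : ι → ℂ) (e : ι → ℤ) {z : ℂ} (hz : z ≠ 0) :
    deriv (fun z : ℂ => ∑ i ∈ s, d i * z ^ (e i)) z
      = ∑ i ∈ s, d i * (e i : ℂ) * z ^ (e i - 1) := by
  rw [deriv_fun_sum (fun i _ => (differentiableAt_zpow.mpr (Or.inl hz)).const_mul _)]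
  refine Finset.sum_congr rfl fun i _ => ?_
  rw [deriv_const_mul _ (differentiableAt_zpow.mpr (Or.inl hz)), deriv_zpow]
  ring

lemma mrp_cont_integrand' {f : ℂ → ℂ} (hf : ContinuousOn f (Metric.sphere (0:ℂ) 1)) :
    Continuous fun θ : ℝ => deriv (circleMap 0 1) θ • f (circleMap 0 1 θ) := by
  simp only [deriv_circleMap]
  exact ((continuous_circleMap 0 1).mul continuous_const).smul
    (hf.comp_continuous (continuous_circleMap 0 1)
      (fun θ => circleMap_mem_sphere 0 zero_le_one θ))

lemma mrp_integral_sum {ι} (s : Finset ι) (F : ι → ℂ → ℂ)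
    (hF : ∀ i ∈ s, ContinuousOn (F i) (Metric.sphere (0:ℂ) 1)) :
    (∮ z in C(0,1), ∑ i ∈ s, F i z) = ∑ i ∈ s, ∮ z in C(0,1), F i z := by
  simp only [circleIntegral, Finset.smul_sum]
  exact intervalIntegral.integral_finset_sum
    (fun i hi => ((mrp_cont_integrand' (hF i hi)).intervalIntegrable _ _))

lemma mrp_integral_const_mul (a : ℂ) (f : ℂ → ℂ) :
    (∮ z in C(0,1), a * f z) = a * ∮ z in C(0,1), f z := by
  simpa [smul_eq_mul] using circleIntegral.integral_smul a f 0 1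

lemma mrp_sphere_sub : Metric.sphere (0:ℂ) 1 ⊆ {(0:ℂ)}ᶜ := by
  intro z hz
  rw [mem_sphere_zero_iff_norm] at hz
  simp only [Set.mem_compl_iff, Set.mem_singleton_iff]
  intro h
  rw [h] at hz
  simp at hz

lemma mrp_contOn_comp_pow {h : ℂ → ℂ} (hh : ContinuousOn h {(0:ℂ)}ᶜ) (l : ℕ) :
    ContinuousOn (fun z : ℂ => h (z ^ l)) {(0:ℂ)}ᶜ := by
  refine hh.comp (continuous_pow l).continuousOn (fun z hz => ?_)
  simp only [Set.mem_compl_iff, Set.mem_singleton_iff] at hz ⊢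
  exact pow_ne_zero l hz


lemma mrp_windA {f : ℂ → ℂ} (hf : ContinuousOn f (Metric.sphere (0:ℂ) 1)) {l : ℕ} (hl : 1 ≤ l) :
    (∮ z in C(0, 1), (z ^ (l-1) * f (z ^ l))) = ∮ z in C(0, 1), f z := by
  have h0 : ((l:ℝ)) ≠ 0 := by positivity
  set g : ℝ → ℂ := fun θ => deriv (circleMap 0 1) θ • f (circleMap 0 1 θ) with hg
  have hgc : Continuous g := mrp_cont_integrand hf
  have hgp : Periodic g (2*π) := fun θ => by
    simp only [hg, deriv_circleMap, periodic_circleMap 0 1 θ]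
  have hcm : ∀ θ : ℝ, circleMap 0 1 θ ^ l = circleMap 0 1 (l * θ) := fun θ => mrp_circleMap_pow θ l
  have key : ∀ θ : ℝ, deriv (circleMap 0 1) θ •
      (circleMap 0 1 θ ^ (l-1) * f (circleMap 0 1 θ ^ l)) = g ((l:ℝ) * θ) := by
    intro θ
    have h1 : circleMap 0 1 θ * circleMap 0 1 θ ^ (l-1) = circleMap 0 1 ((l:ℝ)*θ) := by
      rw [← pow_succ', Nat.sub_add_cancel hl]
      exact_mod_cast hcm θ
    simp only [hg, deriv_circleMap, smul_eq_mul]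
    push_cast
    rw [hcm θ]
    push_cast
    rw [← h1]
    ring
  rw [circleIntegral, circleIntegral]
  calc (∫ θ in (0:ℝ)..2*π, deriv (circleMap 0 1) θ •
          (circleMap 0 1 θ ^ (l-1) * f (circleMap 0 1 θ ^ l)))
      = ∫ θ in (0:ℝ)..2*π, g ((l:ℝ)*θ) := by simp_rw [key]
    _ = (l:ℝ)⁻¹ • ((l:ℤ) • ∫ θ in (0:ℝ)..2*π, g θ) := by
        rw [intervalIntegral.integral_comp_mul_left g h0]
        congr 1
        rw [mul_zero]
        have := hgp.intervalIntegral_add_zsmul_eq (l:ℤ) 0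
          (fun t₁ t₂ => hgc.intervalIntegrable t₁ t₂)
        simpa using this
    _ = ∫ θ in (0:ℝ)..2*π, g θ := by
        rw [← Int.cast_smul_eq_zsmul ℝ, smul_smul]
        simp [h0]


lemma mrp_windB {f : ℂ → ℂ} (hf : ContinuousOn f (Metric.sphere (0:ℂ) 1)) {l : ℕ} (hl : 1 ≤ l)
    {j : ℤ} (hj : ¬ (l:ℤ) ∣ j) :
    (∮ z in C(0, 1), (z ^ (j-1) * f (z ^ l))) = 0 := by
  have h0 : ((l:ℝ)) ≠ 0 := by positivity
  have hlc : ((l:ℂ)) ≠ 0 := Nat.cast_ne_zero.mpr (by omega)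
  have hsp : ∀ {z : ℂ}, z ∈ Metric.sphere (0:ℂ) 1 → z ^ l ∈ Metric.sphere (0:ℂ) 1 := by
    intro z hz
    rw [mem_sphere_zero_iff_norm] at hz ⊢
    simp [norm_pow, hz]
  set g : ℝ → ℂ := fun θ => deriv (circleMap 0 1) θ •
    (circleMap 0 1 θ ^ (j-1) * f (circleMap 0 1 θ ^ l)) with hg
  have hzne : ∀ θ : ℝ, circleMap 0 1 θ ≠ 0 := fun θ => circleMap_ne_center one_ne_zero
  have hgc : Continuous g := by
    simp only [hg, deriv_circleMap]
    refine ((continuous_circleMap 0 1).mul continuous_const).smul (Continuous.mul ?_ ?_)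
    · exact (continuous_circleMap 0 1).zpow₀ _ (fun θ => Or.inl (hzne θ))
    · exact hf.comp_continuous ((continuous_circleMap 0 1).pow l)
        (fun θ => hsp (circleMap_mem_sphere 0 zero_le_one θ))
  have hgp : Periodic g (2*π) := fun θ => by
    simp only [hg, deriv_circleMap, periodic_circleMap 0 1 θ]
  set c : ℝ := 2*π/l with hc
  set w : ℂ := Complex.exp ((j : ℂ) * ((c:ℝ):ℂ) * I) with hw
  have hrot : ∀ θ : ℝ, g (θ + c) = w * g θ := by
    intro θ
    have hadd : circleMap 0 1 (θ + c) = circleMap 0 1 θ * Complex.exp (((c:ℝ):ℂ) * I) := by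
      simp only [circleMap_zero, Complex.ofReal_one, one_mul]
      rw [← Complex.exp_add]
      congr 1
      push_cast
      ring
    have hel : Complex.exp (((c:ℝ):ℂ) * I) ^ l = 1 := by
      rw [← Complex.exp_nat_mul]
      have h2 : (l : ℂ) * (((c:ℝ):ℂ) * I) = 2*π*I := by
        rw [hc]
        push_cast
        field_simp
      rw [h2, Complex.exp_two_pi_mul_I]
    have hej : Complex.exp (((c:ℝ):ℂ) * I) ^ (j : ℤ) = w := by
      rw [← Complex.exp_int_mul, hw, mul_assoc]
    have hene : Complex.exp (((c:ℝ):ℂ) * I) ≠ 0 := Complex.exp_ne_zero _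
    simp only [hg, deriv_circleMap, smul_eq_mul, hadd]
    rw [mul_pow, hel, mul_one, mul_zpow]
    rw [show (j - 1 : ℤ) = j + (-1) by ring, zpow_add₀ hene, zpow_add₀ (hzne θ), hej]
    field_simp
  have hper : (∫ θ in (0:ℝ)..2*π, g θ) = w * ∫ θ in (0:ℝ)..2*π, g θ := by
    have e1 : (∫ θ in (0:ℝ)..2*π, g θ) = ∫ θ in c..c+2*π, g θ := by
      simpa using hgp.intervalIntegral_add_eq 0 c
    have e2 : (∫ θ in c..c+2*π, g θ) = ∫ θ in (0:ℝ)..2*π, g (θ + c) := by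
      rw [intervalIntegral.integral_comp_add_right g c, zero_add, add_comm]
    conv_lhs => rw [e1, e2]
    simp_rw [hrot]
    exact intervalIntegral.integral_const_mul w g
  have hwne : w ≠ 1 := by
    intro h
    rw [hw, Complex.exp_eq_one_iff] at h
    obtain ⟨n, hn⟩ := h
    apply hj
    refine ⟨n, ?_⟩
    have h2π : (2*(π:ℂ)*I) ≠ 0 := by
      simp [Real.pi_ne_zero, I_ne_zero, Complex.ofReal_ne_zero]
    have hcc : ((c:ℝ):ℂ) = 2*(π:ℂ)/(l:ℂ) := by rw [hc]; push_cast; ring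
    rw [hcc] at hn
    have key : (j : ℂ) = (l:ℂ) * n := by
      apply mul_left_cancel₀ h2π
      field_simp at hn
      linear_combination (2*(π:ℂ)*I) * hn
    exact_mod_cast key
  have hdef : (∮ z in C(0, 1), (z ^ (j-1) * f (z ^ l))) = ∫ θ in (0:ℝ)..2*π, g θ := rfl
  rw [hdef]
  have h1w : (1 - w) * (∫ θ in (0:ℝ)..2*π, g θ) = 0 := by
    rw [sub_mul, one_mul, ← hper, sub_self]
  rcases mul_eq_zero.mp h1w with h | h
  · exact absurd (sub_eq_zero.mp h).symm hwne
  · exact h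


lemma mrp_integral_add {f g : ℂ → ℂ} (hf : CircleIntegrable f 0 1) (hg : CircleIntegrable g 0 1) :
    (∮ z in C(0,1), (f z + g z)) = (∮ z in C(0,1), f z) + ∮ z in C(0,1), g z := by
  simp only [circleIntegral, smul_add, intervalIntegral.integral_add hf.out hg.out]


/-- Proposition on reduction for `P(z) = P̃(z^l)`.
Let `P̃, Q̃` be Laurent polynomials, and `R` a Laurent polynomial all of whose coefficients
at exponents divisible by `l` vanish.  Set `P(z) = P̃(z^l)` and `Q(z) = Q̃(z^l) + R(z)`.
Then all moments `∮_{|z|=1} P^k dQ` vanish if and only if all moments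
`∮_{|z|=1} P̃^k dQ̃` vanish. -/
theorem moment_reduction_power
    (l : ℕ) (hl : 1 ≤ l)
    (sP sQ sR : Finset ℤ) (a b c : ℤ → ℂ)
    (hc : ∀ k : ℤ, (l : ℤ) ∣ k → c k = 0)
    (P Q : ℂ → ℂ)
    (hP : P = fun z => ∑ k ∈ sP, a k * z ^ ((l : ℤ) * k))
    (hQ : Q = fun z => (∑ k ∈ sQ, b k * z ^ ((l : ℤ) * k)) + ∑ k ∈ sR, c k * z ^ k)
    (Pt Qt : ℂ → ℂ)
    (hPt : Pt = fun z => ∑ k ∈ sP, a k * z ^ k)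
    (hQt : Qt = fun z => ∑ k ∈ sQ, b k * z ^ k) :
    (∀ k : ℕ, (∮ z in C(0, 1), P z ^ k * deriv Q z) = 0) ↔
    (∀ k : ℕ, (∮ z in C(0, 1), Pt z ^ k * deriv Qt z) = 0) := by
  have hlC : ((l:ℂ)) ≠ 0 := Nat.cast_ne_zero.mpr (by omega)
  set Qd : ℂ → ℂ := fun w => ∑ i ∈ sQ, b i * (i:ℂ) * w ^ ((i:ℤ) - 1) with hQd
  have hPtc : ContinuousOn Pt {(0:ℂ)}ᶜ := by
    rw [hPt]; exact mrp_contOn_lsum sP a (fun i => i)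
  have hQdc : ContinuousOn Qd {(0:ℂ)}ᶜ :=
    mrp_contOn_lsum sQ (fun i => b i * (i:ℂ)) (fun i => i - 1)
  have hQtd : ∀ z : ℂ, z ≠ 0 → deriv Qt z = Qd z := by
    intro z hz
    rw [hQt, hQd]
    exact mrp_deriv_lsum sQ b (fun i => i) hz
  have key : ∀ k : ℕ, (∮ z in C(0, 1), P z ^ k * deriv Q z)
      = (l:ℂ) * ∮ z in C(0, 1), Pt z ^ k * deriv Qt z := by
    intro k
    have hfc : ContinuousOn (fun w => Pt w ^ k * Qd w) {(0:ℂ)}ᶜ := (hPtc.pow k).mul hQdc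
    have e1 : (∮ z in C(0, 1), Pt z ^ k * deriv Qt z)
        = ∮ z in C(0, 1), Pt z ^ k * Qd z := by
      refine circleIntegral.integral_congr zero_le_one (fun z hz => ?_)
      have hz0 : z ≠ 0 := mrp_sphere_sub hz
      simp only [hQtd z hz0]
    have e2 : (∮ z in C(0, 1), P z ^ k * deriv Q z)
        = ∮ z in C(0, 1),
            ((l:ℂ) * (z ^ (l-1) * (Pt (z ^ l) ^ k * Qd (z ^ l)))
              + ∑ j ∈ sR, (c j * (j:ℂ)) * (z ^ ((j:ℤ) - 1) * Pt (z ^ l) ^ k)) := by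
      refine circleIntegral.integral_congr zero_le_one (fun z hz => ?_)
      have hz0 : z ≠ 0 := mrp_sphere_sub hz
      have hPz : P z = Pt (z ^ l) := by
        rw [hP, hPt]
        refine Finset.sum_congr rfl fun i _ => ?_
        congr 1
        rw [zpow_mul, zpow_natCast]
      have hQz : deriv Q z
          = (∑ i ∈ sQ, b i * (((l:ℤ) * i : ℤ):ℂ) * z ^ ((l:ℤ) * i - 1))
            + ∑ j ∈ sR, c j * ((j:ℤ):ℂ) * z ^ ((j:ℤ) - 1) := by
        rw [hQ]
        rw [deriv_fun_add (mrp_diff_lsum sQ b (fun i => (l:ℤ) * i) hz0)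
          (mrp_diff_lsum sR c (fun i => i) hz0)]
        rw [mrp_deriv_lsum sQ b (fun i => (l:ℤ) * i) hz0,
          mrp_deriv_lsum sR c (fun i => i) hz0]
      have hsum : (∑ i ∈ sQ, b i * (((l:ℤ) * i : ℤ):ℂ) * z ^ ((l:ℤ) * i - 1))
          = (l:ℂ) * (z ^ (l-1) * Qd (z ^ l)) := by
        have hQdz : Qd (z ^ l) = ∑ i ∈ sQ, b i * (i:ℂ) * (z ^ l) ^ ((i:ℤ) - 1) := rfl
        rw [hQdz, Finset.mul_sum, Finset.mul_sum]
        refine Finset.sum_congr rfl fun i _ => ?_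
        have hzp : z ^ ((l:ℤ) * i - 1) = z ^ (l-1) * (z ^ l) ^ ((i:ℤ) - 1) := by
          rw [← zpow_natCast z l, ← zpow_mul, ← zpow_natCast z (l-1), ← zpow_add₀ hz0]
          congr 1
          push_cast [Nat.cast_sub hl]
          ring
        rw [hzp]
        push_cast
        ring
      simp only [hPz, hQz, mul_add, hsum, Finset.mul_sum]
      congr 1
      · ring
      · exact Finset.sum_congr rfl fun j _ => by ring
    have hBjc : ∀ j ∈ sR, ContinuousOn
        (fun z : ℂ => (c j * (j:ℂ)) * (z ^ ((j:ℤ) - 1) * Pt (z ^ l) ^ k))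
        (Metric.sphere (0:ℂ) 1) := by
      intro j _
      refine (continuousOn_const.mul (ContinuousOn.mul ?_ ?_)).mono mrp_sphere_sub
      · exact continuousOn_id.zpow₀ _ (fun z hz => Or.inl hz)
      · exact mrp_contOn_comp_pow (hPtc.pow k) l
    have hAc : ContinuousOn
        (fun z : ℂ => (l:ℂ) * (z ^ (l-1) * (Pt (z ^ l) ^ k * Qd (z ^ l))))
        (Metric.sphere (0:ℂ) 1) := by
      refine (continuousOn_const.mul (ContinuousOn.mul ?_ ?_)).mono mrp_sphere_sub
      · exact (continuous_pow (l-1)).continuousOn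
      · exact mrp_contOn_comp_pow hfc l
    have hBc : ContinuousOn
        (fun z : ℂ => ∑ j ∈ sR, (c j * (j:ℂ)) * (z ^ ((j:ℤ) - 1) * Pt (z ^ l) ^ k))
        (Metric.sphere (0:ℂ) 1) := mrp_contOn_sum sR _ _ hBjc
    have e3 : (∮ z in C(0, 1),
            ((l:ℂ) * (z ^ (l-1) * (Pt (z ^ l) ^ k * Qd (z ^ l)))
              + ∑ j ∈ sR, (c j * (j:ℂ)) * (z ^ ((j:ℤ) - 1) * Pt (z ^ l) ^ k)))
        = (∮ z in C(0, 1), (l:ℂ) * (z ^ (l-1) * (Pt (z ^ l) ^ k * Qd (z ^ l))))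
          + ∮ z in C(0, 1), ∑ j ∈ sR, (c j * (j:ℂ)) * (z ^ ((j:ℤ) - 1) * Pt (z ^ l) ^ k) :=
      mrp_integral_add (ContinuousOn.circleIntegrable zero_le_one hAc)
        (ContinuousOn.circleIntegrable zero_le_one hBc)
    have e4 : (∮ z in C(0, 1), (l:ℂ) * (z ^ (l-1) * (Pt (z ^ l) ^ k * Qd (z ^ l))))
        = (l:ℂ) * ∮ z in C(0, 1), Pt z ^ k * Qd z := by
      rw [mrp_integral_const_mul]
      congr 1
      exact mrp_windA (hfc.mono mrp_sphere_sub) hl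
    have e5 : (∮ z in C(0, 1),
          ∑ j ∈ sR, (c j * (j:ℂ)) * (z ^ ((j:ℤ) - 1) * Pt (z ^ l) ^ k)) = 0 := by
      rw [mrp_integral_sum sR _ hBjc]
      refine Finset.sum_eq_zero fun j hj => ?_
      rw [mrp_integral_const_mul]
      by_cases hdvd : (l:ℤ) ∣ j
      · rw [hc j hdvd]
        simp
      · rw [mrp_windB (f := fun w => Pt w ^ k) ((hPtc.pow k).mono mrp_sphere_sub) hl hdvd, mul_zero]
    rw [e2, e3, e4, e5, add_zero, e1]
  constructor
  · intro h k
    have hk := key k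
    rw [h k] at hk
    exact ((mul_eq_zero.mp hk.symm).resolve_left hlC)
  · intro h k
    rw [key k, h k, mul_zero]
end

section
/- Let P ∈ ℂ[z,z⁻¹] be a Laurent polynomial, and suppose that for each k = 1,…,l there are a polynomial P_k ∈ ℂ[z] and a Laurent polynomial W_k ∈ ℂ[z,z⁻¹] with P(z) = P_k(W_k(z)) for all z ≠ 0. Then for every choice of polynomials Q_1,…,Q_l ∈ ℂ[z], the Laurent polynomial Q(z) = Q_1(W_1(z)) + … + Q_l(W_l(z)) satisfies ∮_{|z|=1} P(z)^k Q'(z) dz = 0 for every integer k ≥ 0. -/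
open Polynomial in
lemma poly_antideriv (S : Polynomial ℂ) : ∃ R : Polynomial ℂ, R.derivative = S := by
  refine ⟨∑ n ∈ S.support, C (S.coeff n / (n + 1)) * X ^ (n + 1), ?_⟩
  rw [map_sum]
  have : ∀ n ∈ S.support, derivative (C (S.coeff n / (n+1)) * X ^ (n+1) : Polynomial ℂ)
      = C (S.coeff n) * X ^ n := by
    intro n _
    rw [derivative_C_mul_X_pow]
    congr 1
    rw [Nat.cast_add, Nat.cast_one, div_mul_cancel₀]
    exact Nat.cast_add_one_ne_zero n
  rw [Finset.sum_congr rfl this]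
  simpa [C_mul_X_pow_eq_monomial] using S.as_sum_support.symm

/-- Sufficiency of the weak composition condition.
Suppose the Laurent polynomial `P` factors as `P = P_i ∘ W_i` for `i = 1,…,l`, with each
`P_i` a polynomial and each `W_i` a Laurent polynomial.  Then for every choice of
polynomials `Q_1,…,Q_l`, the Laurent polynomial `Q = Q_1 ∘ W_1 + … + Q_l ∘ W_l`
satisfies `∮_{|z|=1} P(z)^k Q'(z) dz = 0` for all `k ≥ 0`. -/
theorem weak_composition_sufficient
    (l : ℕ) (sP : Finset ℤ) (a : ℤ → ℂ)
    (P : ℂ → ℂ) (hP : P = fun z => ∑ k ∈ sP, a k * z ^ k)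
    (Pk Qk : Fin l → Polynomial ℂ)
    (sW : Fin l → Finset ℤ) (w : Fin l → ℤ → ℂ)
    (W : Fin l → ℂ → ℂ) (hW : ∀ i, W i = fun z => ∑ k ∈ sW i, w i k * z ^ k)
    (hcomp : ∀ i : Fin l, ∀ z : ℂ, z ≠ 0 → P z = (Pk i).eval (W i z))
    (Q : ℂ → ℂ) (hQ : Q = fun z => ∑ i : Fin l, (Qk i).eval (W i z)) :
    ∀ k : ℕ, (∮ z in C(0, 1), P z ^ k * deriv Q z) = 0 := by
  intro k
  -- derivative of the Laurent polynomials W i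
  set dW : Fin l → ℂ → ℂ := fun i z => ∑ m ∈ sW i, w i m * ((m : ℂ) * z ^ (m - 1)) with hdWdef
  have hdW : ∀ (i : Fin l) (z : ℂ), z ≠ 0 → HasDerivAt (W i) (dW i z) z := by
    intro i z hz
    rw [hW i]
    exact HasDerivAt.fun_sum fun m _ => (hasDerivAt_zpow m z (Or.inl hz)).const_mul (w i m)
  -- antiderivatives of Pk i ^ k * (Qk i)'
  choose R hR using fun i : Fin l => poly_antideriv ((Pk i) ^ k * (Qk i).derivative)
  refine circleIntegral.integral_eq_zero_of_hasDerivWithinAt (f := fun z =>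
      ∑ i : Fin l, (R i).eval (W i z)) zero_le_one ?_
  intro z hz
  have hz0 : z ≠ 0 := by
    intro h
    simp [h] at hz
  have hQd : ∀ i : Fin l, HasDerivAt (fun z => (Qk i).eval (W i z))
      ((Qk i).derivative.eval (W i z) * dW i z) z :=
    fun i => (Polynomial.hasDerivAt (Qk i) (W i z)).comp z (hdW i z hz0)
  have hQderiv : deriv Q z = ∑ i : Fin l, (Qk i).derivative.eval (W i z) * dW i z := by
    rw [hQ]
    exact (HasDerivAt.fun_sum fun i _ => hQd i).deriv
  have hRd : HasDerivAt (fun z => ∑ i : Fin l, (R i).eval (W i z))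
      (∑ i : Fin l, (R i).derivative.eval (W i z) * dW i z) z :=
    HasDerivAt.fun_sum fun i _ => (Polynomial.hasDerivAt (R i) (W i z)).comp z (hdW i z hz0)
  have key : P z ^ k * deriv Q z = ∑ i : Fin l, (R i).derivative.eval (W i z) * dW i z := by
    rw [hQderiv, Finset.mul_sum]
    refine Finset.sum_congr rfl fun i _ => ?_
    rw [hR i, Polynomial.eval_mul, Polynomial.eval_pow, ← hcomp i z hz0, mul_assoc]
  rw [key]
  exact hRd.hasDerivWithinAt
end

section
/- Let n ≥ 1 and let G be a 2-transitive subgroup of the symmetric group on {1,…,2n}. Let G act on ℚ^{2n} by permuting coordinates, and let v ∈ ℚ^{2n} be the vector whose first n coordinates equal 1 and whose last n coordinates equal −1. Then the standard basis vector e₁ belongs to V + ℚ·(1,1,…,1), where V is the ℚ-linear span of the orbit {g·v : g ∈ G}. -/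
/-- Let `G` be a 2-transitive subgroup of the symmetric group on `{0,…,2n-1}` (0-indexed
version of `{1,…,2n}`), acting on `ℚ^{2n}` by permuting coordinates `(g·x)_{g(i)} = x_i`.
Let `v` be the vector with first `n` coordinates `1` and last `n` coordinates `-1`.
Then `e₁ ∈ V + ℚ·(1,…,1)`, where `V` is the span of the orbit `{g·v : g ∈ G}`. -/
theorem two_transitive_first_basis_vector
    (n : ℕ) (hn : 1 ≤ n)
    (G : Subgroup (Equiv.Perm (Fin (2 * n))))
    (h2trans : ∀ i j k l : Fin (2 * n), i ≠ j → k ≠ l → ∃ g ∈ G, g i = k ∧ g j = l)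
    (v : Fin (2 * n) → ℚ) (hv : v = fun i : Fin (2 * n) => if (i : ℕ) < n then (1 : ℚ) else -1)
    (e₁ : Fin (2 * n) → ℚ) (he₁ : e₁ = fun i : Fin (2 * n) => if (i : ℕ) = 0 then (1 : ℚ) else 0) :
    e₁ ∈ Submodule.span ℚ {x : Fin (2 * n) → ℚ | ∃ g ∈ G, x = fun j => v (g⁻¹ j)} ⊔
      Submodule.span ℚ {fun _ : Fin (2 * n) => (1 : ℚ)} := by
  classical
  have h2n : 0 < 2 * n := by omega
  have h1lt : 1 < 2 * n := by omega
  set z : Fin (2 * n) := ⟨0, h2n⟩ with hzdef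
  set k₁ : Fin (2 * n) := ⟨1, h1lt⟩ with hk₁def
  have hk₁z : k₁ ≠ z := by
    simp [hk₁def, hzdef, Fin.ext_iff]
  set T : Finset (Equiv.Perm (Fin (2 * n))) :=
    Finset.univ.filter (fun g => g ∈ G ∧ g z = z) with hT
  set u : Fin (2 * n) → ℚ := ∑ g ∈ T, (fun j => v (g⁻¹ j)) with hu
  -- u belongs to the span of the orbit
  have huV : u ∈ Submodule.span ℚ
      {x : Fin (2 * n) → ℚ | ∃ g ∈ G, x = fun j => v (g⁻¹ j)} := by
    refine Submodule.sum_mem _ (fun g hg => Submodule.subset_span ?_)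
    rcases Finset.mem_filter.mp hg with ⟨-, hgG, -⟩
    exact ⟨g, hgG, rfl⟩
  have huapp : ∀ k, u k = ∑ g ∈ T, v (g⁻¹ k) := by
    intro k; rw [hu, Finset.sum_apply]
  -- value at z
  have hvz : v z = 1 := by
    rw [hv]; simp [hzdef]; omega
  have hu0 : u z = (T.card : ℚ) := by
    rw [huapp]
    rw [Finset.sum_congr rfl (fun g hg => ?_), Finset.sum_const, nsmul_eq_mul, mul_one]
    rcases Finset.mem_filter.mp hg with ⟨-, -, hgz⟩
    have : g⁻¹ z = z := by
      conv_lhs => rw [← hgz]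
      exact Equiv.symm_apply_apply g z
    rw [this, hvz]
  -- u is constant away from z
  have hconst : ∀ k k' : Fin (2 * n), k ≠ z → k' ≠ z → u k = u k' := by
    intro k k' hk hk'
    obtain ⟨h, hhG, hhz, hhk⟩ := h2trans z k z k' (Ne.symm hk) (Ne.symm hk')
    rw [huapp, huapp]
    refine Finset.sum_nbij' (fun g => h * g) (fun g => h⁻¹ * g) ?_ ?_ ?_ ?_ ?_
    · intro g hg
      rcases Finset.mem_filter.mp hg with ⟨-, hgG, hgz⟩
      refine Finset.mem_filter.mpr ⟨Finset.mem_univ _, G.mul_mem hhG hgG, ?_⟩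
      simp [Equiv.Perm.mul_apply, hgz, hhz]
    · intro g hg
      rcases Finset.mem_filter.mp hg with ⟨-, hgG, hgz⟩
      refine Finset.mem_filter.mpr ⟨Finset.mem_univ _, G.mul_mem (G.inv_mem hhG) hgG, ?_⟩
      have : h⁻¹ z = z := by
        conv_lhs => rw [← hhz]
        exact Equiv.symm_apply_apply h z
      simp [Equiv.Perm.mul_apply, hgz, this]
    · intro g _; group
    · intro g _; group
    · intro g hg
      have hinv : h⁻¹ k' = k := by
        conv_lhs => rw [← hhk]
        exact Equiv.symm_apply_apply h k
      have : (h * g)⁻¹ k' = g⁻¹ k := by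
        simp [mul_inv_rev, Equiv.Perm.mul_apply, hinv]
      rw [this]
  -- total sum of v is zero
  have hvsum : ∑ j : Fin (2 * n), v j = 0 := by
    rw [hv, Fin.sum_univ_eq_sum_range (fun i => if i < n then (1 : ℚ) else -1)]
    rw [Finset.sum_ite]
    have hfilt : (Finset.range (2 * n)).filter (fun i => i < n) = Finset.range n := by
      ext i; simp; omega
    have hfilt2 : (Finset.range (2 * n)).filter (fun i => ¬ i < n) = Finset.Ico n (2 * n) := by
      ext i; simp; omega
    rw [hfilt, hfilt2]
    have h2nn : 2 * n - n = n := by omega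
    simp [Nat.card_Ico, h2nn]
  -- total sum of u is zero
  have husum : ∑ k : Fin (2 * n), u k = 0 := by
    have : ∑ k : Fin (2 * n), u k = ∑ g ∈ T, ∑ k : Fin (2 * n), v (g⁻¹ k) := by
      rw [Finset.sum_congr rfl (fun k _ => huapp k)]
      exact Finset.sum_comm
    rw [this]
    refine Finset.sum_eq_zero (fun g _ => ?_)
    rw [Equiv.sum_comp g⁻¹ v]
    exact hvsum
  -- T is nonempty
  have hM1 : 1 ≤ T.card := by
    refine Finset.card_pos.mpr ⟨1, Finset.mem_filter.mpr ⟨Finset.mem_univ _, G.one_mem, rfl⟩⟩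
  set M : ℚ := (T.card : ℚ) with hMdef
  have hMpos : 0 < M := by
    rw [hMdef]; exact_mod_cast hM1
  set c : ℚ := u k₁ with hc
  -- relation M + (2n-1) c = 0
  have hrel : M + ((2 * n : ℕ) - 1 : ℚ) * c = 0 := by
    have hsplit : ∑ k : Fin (2 * n), u k = u z + ∑ k ∈ Finset.univ.erase z, u k :=
      (Finset.add_sum_erase _ _ (Finset.mem_univ z)).symm
    have hrest : ∑ k ∈ Finset.univ.erase z, u k = ((2 * n : ℕ) - 1 : ℚ) * c := by
      rw [Finset.sum_congr rfl (fun k hk => hconst k k₁ (Finset.mem_erase.mp hk).1 hk₁z)]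
      rw [Finset.sum_const, nsmul_eq_mul]
      congr 1
      rw [Finset.card_erase_of_mem (Finset.mem_univ z), Finset.card_univ, Fintype.card_fin]
      push_cast [Nat.cast_sub (by omega : 1 ≤ 2 * n)]
      ring
    rw [hsplit, hu0, hrest] at husum
    rw [hMdef]
    linarith [husum]
  have h2n1 : (0 : ℚ) < ((2 * n : ℕ) - 1 : ℚ) := by
    have : (2 : ℚ) ≤ (2 * n : ℕ) := by exact_mod_cast (by omega : 2 ≤ 2 * n)
    linarith
  have hcneg : c < 0 := by nlinarith
  have hMc : M - c ≠ 0 := ne_of_gt (by linarith)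
  -- express e₁
  have hek : e₁ = (M - c)⁻¹ • u + (-(c) * (M - c)⁻¹) • (fun _ : Fin (2 * n) => (1 : ℚ)) := by
    funext k
    by_cases hk : k = z
    · subst hk
      rw [he₁]
      simp only [Pi.add_apply, Pi.smul_apply, smul_eq_mul]
      rw [hu0]
      norm_num [hzdef]
      field_simp
      ring
    · have hkval : (k : ℕ) ≠ 0 := by
        intro h0
        exact hk (Fin.ext h0)
      rw [he₁]
      simp only [Pi.add_apply, Pi.smul_apply, smul_eq_mul]
      rw [hconst k k₁ hk hk₁z, ← hc]
      simp only [hkval, if_false]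
      field_simp
      ring
  rw [hek]
  refine Submodule.add_mem _ ?_ ?_
  · exact Submodule.smul_mem _ _ (Submodule.mem_sup_left huV)
  · exact Submodule.smul_mem _ _ (Submodule.mem_sup_right (Submodule.subset_span rfl))
end

section
/- Let n ≥ 1 and let G be a transitive subgroup of the symmetric group on {1,…,2n}. Suppose G admits two distinct imprimitivity systems ℬ₁ ≠ ℬ₂, each of whose blocks has exactly two elements, one in {1,…,n} and one in {n+1,…,2n}. Then G has a block B with 1 ∈ B, |B| ≥ 2, and B ⊆ {1,…,n}. -/
namespace TwoPairingAux

variable {n : ℕ}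

lemma image_mul (g h : Equiv.Perm (Fin (2 * n))) (B : Set (Fin (2 * n))) :
    ⇑(g * h) '' B = ⇑g '' (⇑h '' B) := by
  rw [Set.image_image]; rfl

lemma translate_unique (G : Subgroup (Equiv.Perm (Fin (2 * n)))) (B : Set (Fin (2 * n)))
    (hblock : ∀ g ∈ G, ⇑g '' B = B ∨ Disjoint (⇑g '' B) B)
    {g h : Equiv.Perm (Fin (2 * n))} (hg : g ∈ G) (hh : h ∈ G)
    (hne : (⇑g '' B ∩ ⇑h '' B).Nonempty) : ⇑g '' B = ⇑h '' B := by
  have hk : h⁻¹ * g ∈ G := mul_mem (inv_mem hh) hg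
  rcases hblock _ hk with heq | hdisj
  · have : ⇑g '' B = ⇑h '' (⇑(h⁻¹ * g) '' B) := by
      rw [← image_mul]; group
    rw [this, heq]
  · exfalso
    obtain ⟨x, hx1, hx2⟩ := hne
    have h1 : h⁻¹ x ∈ ⇑(h⁻¹ * g) '' B := by
      have : ⇑(h⁻¹ * g) '' B = ⇑h⁻¹ '' (⇑g '' B) := image_mul _ _ _
      rw [this]; exact ⟨x, hx1, rfl⟩
    have h2 : h⁻¹ x ∈ B := by
      obtain ⟨b, hb, rfl⟩ := hx2
      simpa using hb
    exact Set.disjoint_left.mp hdisj h1 h2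

/-- The pairing function attached to an imprimitivity system whose blocks have one element
in each half. -/
lemma pairing (G : Subgroup (Equiv.Perm (Fin (2 * n)))) (B : Set (Fin (2 * n)))
    (htrans : ∀ i j : Fin (2 * n), ∃ g ∈ G, g i = j)
    (hblock : ∀ g ∈ G, ⇑g '' B = B ∨ Disjoint (⇑g '' B) B)
    (hshape : ∀ g ∈ G, ∃ x y : Fin (2 * n), (x : ℕ) < n ∧ n ≤ (y : ℕ) ∧ ⇑g '' B = {x, y}) :
    ∃ p : Fin (2 * n) → Fin (2 * n),
      (∀ x, ∃ g ∈ G, ⇑g '' B = {x, p x}) ∧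
      (∀ x, x ≠ p x) ∧
      (∀ x : Fin (2 * n), ((x : ℕ) < n ↔ ¬ ((p x : ℕ) < n))) ∧
      (∀ x, p (p x) = x) ∧
      (∀ g ∈ G, ∀ x, p (g x) = g (p x)) ∧
      (∀ x y, (∃ g ∈ G, ⇑g '' B = {x, y}) → y = p x) := by
  -- every point is covered by some translate
  have cover : ∀ x : Fin (2 * n), ∃ g ∈ G, x ∈ ⇑g '' B := by
    obtain ⟨a, b, ha, hb, hab⟩ := hshape 1 (one_mem G)
    have hBa : a ∈ B := by
      have : B = {a, b} := by simpa using hab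
      rw [this]; exact Set.mem_insert _ _
    intro x
    obtain ⟨g, hg, hgx⟩ := htrans a x
    exact ⟨g, hg, ⟨a, hBa, hgx⟩⟩
  -- uniqueness of partners
  have uniq : ∀ x y y' : Fin (2 * n), (∃ g ∈ G, ⇑g '' B = {x, y}) →
      (∃ g ∈ G, ⇑g '' B = {x, y'}) → y = y' := by
    rintro x y y' ⟨g, hg, hgB⟩ ⟨h, hh, hhB⟩
    have heq : ({x, y} : Set (Fin (2 * n))) = {x, y'} := by
      rw [← hgB, ← hhB]
      exact translate_unique G B hblock hg hh
        ⟨x, by rw [hgB]; exact Set.mem_insert _ _, by rw [hhB]; exact Set.mem_insert _ _⟩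
    have hy : y = x ∨ y = y' := by
      have : y ∈ ({x, y'} : Set (Fin (2 * n))) := heq ▸ (by simp : y ∈ ({x, y} : Set _))
      simpa using this
    have hy' : y' = x ∨ y' = y := by
      have : y' ∈ ({x, y} : Set (Fin (2 * n))) := heq.symm ▸ (by simp : y' ∈ ({x, y'} : Set _))
      simpa using this
    rcases hy with h1 | h1
    · rcases hy' with h2 | h2 <;> simp_all
    · exact h1
  -- existence of partners
  have exP : ∀ x : Fin (2 * n), ∃ y, x ≠ y ∧ ((x : ℕ) < n ↔ ¬ ((y : ℕ) < n)) ∧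
      ∃ g ∈ G, ⇑g '' B = {x, y} := by
    intro x
    obtain ⟨g, hg, hx⟩ := cover x
    obtain ⟨a, b, ha, hb, hab⟩ := hshape g hg
    rw [hab] at hx
    rcases hx with hx | hx
    · refine ⟨b, ?_, ?_, g, hg, by rw [hab, hx]⟩
      · subst hx; exact Fin.ne_of_val_ne (by omega)
      · subst hx; omega
    · simp only [Set.mem_singleton_iff] at hx
      refine ⟨a, ?_, ?_, g, hg, by rw [hab, hx, Set.pair_comm]⟩
      · subst hx; exact Fin.ne_of_val_ne (by omega)
      · subst hx; omega
  classical
  refine ⟨fun x => (exP x).choose, fun x => (exP x).choose_spec.2.2,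
    fun x => (exP x).choose_spec.1, fun x => (exP x).choose_spec.2.1, ?_, ?_, ?_⟩
  · -- involutive
    intro x
    have h1 : ∃ g ∈ G, ⇑g '' B = {(exP x).choose, x} := by
      obtain ⟨g, hg, hgB⟩ := (exP x).choose_spec.2.2
      exact ⟨g, hg, by rw [hgB, Set.pair_comm]⟩
    exact (uniq _ _ _ h1 ((exP _).choose_spec.2.2)).symm
  · -- commutes with G
    intro g hg x
    have h1 : ∃ h ∈ G, ⇑h '' B = {g x, g ((exP x).choose)} := by
      obtain ⟨h, hh, hhB⟩ := (exP x).choose_spec.2.2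
      refine ⟨g * h, mul_mem hg hh, ?_⟩
      rw [image_mul, hhB, Set.image_pair]
    exact (uniq _ _ _ h1 ((exP _).choose_spec.2.2)).symm
  · -- uniqueness of partner
    intro x y hy
    exact uniq _ _ _ hy ((exP x).choose_spec.2.2)

end TwoPairingAux

/-- Let `G` be a transitive subgroup of the symmetric group on `{0,…,2n-1}` (0-indexed version
of `{1,…,2n}`).  Suppose `G` admits two distinct imprimitivity systems, each of whose blocks
has exactly two elements, one in `{0,…,n-1}` and one in `{n,…,2n-1}`.
Then `G` has a block `B` with `0 ∈ B`, `|B| ≥ 2` and `B ⊆ {0,…,n-1}`. -/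
theorem two_pairing_systems_give_half_block
    (n : ℕ) (hn : 1 ≤ n)
    (G : Subgroup (Equiv.Perm (Fin (2 * n))))
    (htrans : ∀ i j : Fin (2 * n), ∃ g ∈ G, g i = j)
    (B₁ B₂ : Set (Fin (2 * n)))
    (hblock₁ : ∀ g ∈ G, ⇑g '' B₁ = B₁ ∨ Disjoint (⇑g '' B₁) B₁)
    (hblock₂ : ∀ g ∈ G, ⇑g '' B₂ = B₂ ∨ Disjoint (⇑g '' B₂) B₂)
    (hshape₁ : ∀ g ∈ G, ∃ x y : Fin (2 * n), (x : ℕ) < n ∧ n ≤ (y : ℕ) ∧ ⇑g '' B₁ = {x, y})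
    (hshape₂ : ∀ g ∈ G, ∃ x y : Fin (2 * n), (x : ℕ) < n ∧ n ≤ (y : ℕ) ∧ ⇑g '' B₂ = {x, y})
    (hdistinct : {B : Set (Fin (2 * n)) | ∃ g ∈ G, B = ⇑g '' B₁} ≠
      {B : Set (Fin (2 * n)) | ∃ g ∈ G, B = ⇑g '' B₂}) :
    ∃ B : Set (Fin (2 * n)),
      (∀ g ∈ G, ⇑g '' B = B ∨ Disjoint (⇑g '' B) B) ∧
      (∃ i : Fin (2 * n), (i : ℕ) = 0 ∧ i ∈ B) ∧
      2 ≤ B.ncard ∧ B ⊆ {i : Fin (2 * n) | (i : ℕ) < n} := by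
  obtain ⟨p, hp1, hpne, hphalf, hpinv, hpcomm, hpuniq⟩ :=
    TwoPairingAux.pairing G B₁ htrans hblock₁ hshape₁
  obtain ⟨q, hq1, hqne, hqhalf, hqinv, hqcomm, hquniq⟩ :=
    TwoPairingAux.pairing G B₂ htrans hblock₂ hshape₂
  set P : Equiv.Perm (Fin (2 * n)) := Function.Involutive.toPerm p hpinv with hP
  set Q : Equiv.Perm (Fin (2 * n)) := Function.Involutive.toPerm q hqinv with hQ
  set π : Equiv.Perm (Fin (2 * n)) := Q * P with hπ
  have hπapp : ∀ x, π x = q (p x) := fun x => rfl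
  -- π commutes with every element of G
  have hcomm : ∀ g ∈ G, Commute g π := by
    intro g hg
    have h1 : Commute g P := by
      apply Equiv.ext; intro x
      simp only [Equiv.Perm.mul_apply]
      exact (hpcomm g hg x).symm
    have h2 : Commute g Q := by
      apply Equiv.ext; intro x
      simp only [Equiv.Perm.mul_apply]
      exact (hqcomm g hg x).symm
    exact h2.mul_right h1
  have hzcomm : ∀ g ∈ G, ∀ (k : ℤ) (x : Fin (2 * n)), g ((π ^ k) x) = (π ^ k) (g x) := by
    intro g hg k x
    have := (hcomm g hg).zpow_right k
    calc g ((π ^ k) x) = (g * π ^ k) x := rfl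
      _ = (π ^ k * g) x := by rw [this]
      _ = (π ^ k) (g x) := rfl
  have hzadd : ∀ (a b : ℤ) (x : Fin (2 * n)), (π ^ a) ((π ^ b) x) = (π ^ (a + b)) x := by
    intro a b x
    rw [← Equiv.Perm.mul_apply, ← zpow_add]
  -- π preserves halves
  have hhalf : ∀ x : Fin (2 * n), ((x : ℕ) < n ↔ ((π x : Fin (2 * n)) : ℕ) < n) := by
    intro x
    rw [hπapp]
    have h1 := hphalf x
    have h2 := hqhalf (p x)
    tauto
  have hz2n : 0 < 2 * n := by omega
  set z : Fin (2 * n) := ⟨0, hz2n⟩ with hzdef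
  set B : Set (Fin (2 * n)) := {x | ∃ k : ℤ, (π ^ k) z = x} with hBdef
  have hzB : z ∈ B := ⟨0, by simp⟩
  have hπzB : π z ∈ B := ⟨1, by simp⟩
  -- all of B lies in the lower half
  have hlow : ∀ k : ℤ, (((π ^ k) z : Fin (2 * n)) : ℕ) < n := by
    intro k
    induction k using Int.induction_on with
    | zero => simp only [zpow_zero, Equiv.Perm.coe_one, id_eq, hzdef]; exact hn
    | succ k ih =>
      have h1 := hzadd 1 (k : ℤ) z
      rw [zpow_one] at h1
      rw [show (k : ℤ) + 1 = 1 + k by ring, ← h1]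
      exact (hhalf _).mp ih
    | pred k ih =>
      have h1 := hzadd 1 (-(k : ℤ) - 1) z
      rw [zpow_one, show (1 : ℤ) + (-(k : ℤ) - 1) = -(k : ℤ) by ring] at h1
      exact (hhalf _).mpr (by rw [h1]; exact ih)
  have hsub : B ⊆ {i : Fin (2 * n) | (i : ℕ) < n} := by
    rintro x ⟨k, rfl⟩
    exact hlow k
  -- π z ≠ z, else the two systems coincide
  have hπzne : π z ≠ z := by
    intro hfix
    have hpz : p z = q z := by
      have : q (q (p z)) = q z := by rw [hπapp] at hfix; rw [hfix]
      rwa [hqinv] at this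
    have hpq : ∀ x, p x = q x := by
      intro x
      obtain ⟨g, hg, hgz⟩ := htrans z x
      rw [← hgz, hpcomm g hg, hqcomm g hg, hpz]
    apply hdistinct
    ext S
    simp only [Set.mem_setOf_eq]
    constructor
    · rintro ⟨g, hg, rfl⟩
      obtain ⟨a, b, ha, hb, hab⟩ := hshape₁ g hg
      have hbpa : b = p a := hpuniq a b ⟨g, hg, hab⟩
      obtain ⟨h, hh, hhB⟩ := hq1 a
      exact ⟨h, hh, by rw [hab, hbpa, hpq, hhB]⟩
    · rintro ⟨g, hg, rfl⟩
      obtain ⟨a, b, ha, hb, hab⟩ := hshape₂ g hg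
      have hbqa : b = q a := hquniq a b ⟨g, hg, hab⟩
      obtain ⟨h, hh, hhB⟩ := hp1 a
      exact ⟨h, hh, by rw [hab, hbqa, ← hpq, hhB]⟩
  -- B is a block
  have hblock : ∀ g ∈ G, ⇑g '' B = B ∨ Disjoint (⇑g '' B) B := by
    intro g hg
    by_cases hdisj : Disjoint (⇑g '' B) B
    · exact Or.inr hdisj
    left
    obtain ⟨y, hy1, hy2⟩ := Set.not_disjoint_iff.mp hdisj
    obtain ⟨x, ⟨k, hk⟩, rfl⟩ := hy1
    obtain ⟨m, hm⟩ := hy2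
    -- g z = π ^ (m - k) z
    have hgz : g z = (π ^ (m - k)) z := by
      have h1 : (π ^ k) (g z) = (π ^ m) z := by
        rw [← hzcomm g hg, hk, hm]
      have h2 := congrArg (⇑(π ^ (-k))) h1
      rw [hzadd, hzadd] at h2
      simp only [neg_add_cancel, zpow_zero, Equiv.Perm.coe_one, id_eq] at h2
      rw [show -k + m = m - k by ring] at h2
      exact h2
    ext y
    constructor
    · rintro ⟨x, ⟨j, rfl⟩, rfl⟩
      exact ⟨j + (m - k), by rw [← hzadd, ← hgz, hzcomm g hg]⟩
    · rintro ⟨j, rfl⟩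
      refine ⟨(π ^ (j - (m - k))) z, ⟨j - (m - k), rfl⟩, ?_⟩
      rw [hzcomm g hg, hgz, hzadd]
      congr 1
      ring
  refine ⟨B, hblock, ⟨z, rfl, hzB⟩, ?_, hsub⟩
  have hpair : ({z, π z} : Set (Fin (2 * n))).ncard = 2 := Set.ncard_pair (Ne.symm hπzne)
  calc 2 = ({z, π z} : Set (Fin (2 * n))).ncard := hpair.symm
    _ ≤ B.ncard := Set.ncard_le_ncard (by
        rintro x (rfl | rfl)
        · exact hzB
        · exact hπzB) (Set.toFinite B)
end
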